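/- arXiv:1105.5763 — 5 statements merged into one kernel-verified Lean document; each statement's English description precedes it below -/
import Mathlib

section
/- Let γ = ((i₁ j₁),…,(i_k j_k)) ∈ Σ_n(k) and let l ∈ {1,…,k}. If i_l + 1 ∉ {i₁,…,i_{l−1}}, then C_{γ_{l−1}}(i_l + 1) = {i_l + 1}, i.e. i_l + 1 is a fixed point of γ_{l−1}. -/
open Equiv Equiv.Perm Finset

namespace Stmt6

variable {n : ℕ}

/-- minimum of the `r`-class of `x` -/
noncomputable def minFun (r : Fin n → Fin n → Prop) (hr : Equivalence r) (x : Fin n) : Fin n :=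
  letI := Classical.decPred (r x)
  (Finset.univ.filter (r x)).min' ⟨x, by simp [hr.refl x]⟩

noncomputable def mset (r : Fin n → Fin n → Prop) : Finset (Fin n) :=
  letI := Classical.decPred fun x => ∀ y, r x y → x ≤ y
  Finset.univ.filter fun x => ∀ y, r x y → x ≤ y

noncomputable def rcount (r : Fin n → Fin n → Prop) : ℕ := (mset r).card

variable {r r₁ r₂ : Fin n → Fin n → Prop}

lemma mem_mset {x : Fin n} : x ∈ mset r ↔ ∀ y, r x y → x ≤ y := by
  unfold mset
  simp only [Finset.mem_filter, Finset.mem_univ, true_and]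
lemma minFun_rel (hr : Equivalence r) (x : Fin n) : r x (minFun r hr x) := by
  classical
  have := Finset.min'_mem (Finset.univ.filter (r x)) (⟨x, by simp [hr.refl x]⟩)
  simpa [minFun] using (Finset.mem_filter.1 this).2

lemma minFun_le (hr : Equivalence r) {x y : Fin n} (h : r x y) : minFun r hr x ≤ y := by
  classical
  exact Finset.min'_le _ _ (by simp [h])

lemma minFun_congr (hr : Equivalence r) {x y : Fin n} (h : r x y) :
    minFun r hr x = minFun r hr y := by
  classical
  have : (Finset.univ.filter (r x)) = (Finset.univ.filter (r y)) := by
    ext z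
    simp only [Finset.mem_filter, Finset.mem_univ, true_and]
    exact ⟨fun hz => hr.trans (hr.symm h) hz, fun hz => hr.trans h hz⟩
  simp [minFun, this]

lemma mset_eq_image (hr : Equivalence r) : mset r = Finset.univ.image (minFun r hr) := by
  ext x
  simp only [mem_mset, Finset.mem_image, Finset.mem_univ, true_and]
  constructor
  · intro h
    refine ⟨x, le_antisymm (minFun_le hr (hr.refl x)) (h _ (minFun_rel hr x))⟩
  · rintro ⟨z, rfl⟩
    intro y hy
    exact minFun_le hr (hr.trans (minFun_rel hr z) hy)

lemma rcount_le (hr₁ : Equivalence r₁) (hr₂ : Equivalence r₂)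
    (h : ∀ x y, r₁ x y → r₂ x y) : rcount r₂ ≤ rcount r₁ := by
  have hcomp : ∀ x, minFun r₂ hr₂ (minFun r₁ hr₁ x) = minFun r₂ hr₂ x :=
    fun x => (minFun_congr hr₂ (h _ _ (minFun_rel hr₁ x))).symm
  have hfun : (minFun r₂ hr₂) ∘ (minFun r₁ hr₁) = minFun r₂ hr₂ := funext hcomp
  have himg : (mset r₁).image (minFun r₂ hr₂) = mset r₂ := by
    rw [mset_eq_image hr₁, Finset.image_image, hfun, ← mset_eq_image hr₂]
  have : rcount r₂ = ((mset r₁).image (minFun r₂ hr₂)).card := by rw [himg]; rfl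
  rw [this]; exact Finset.card_image_le

lemma rel_eq_of_rcount_eq (hr₁ : Equivalence r₁) (hr₂ : Equivalence r₂)
    (h : ∀ x y, r₁ x y → r₂ x y) (hc : rcount r₁ = rcount r₂) :
    ∀ x y, r₂ x y → r₁ x y := by
  classical
  have hcomp : ∀ x, minFun r₂ hr₂ (minFun r₁ hr₁ x) = minFun r₂ hr₂ x :=
    fun x => (minFun_congr hr₂ (h _ _ (minFun_rel hr₁ x))).symm
  have hfun : (minFun r₂ hr₂) ∘ (minFun r₁ hr₁) = minFun r₂ hr₂ := funext hcomp
  have himg : (mset r₁).image (minFun r₂ hr₂) = mset r₂ := by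
    rw [mset_eq_image hr₁, Finset.image_image, hfun, ← mset_eq_image hr₂]
  have hinj : Set.InjOn (minFun r₂ hr₂) (mset r₁) := by
    apply Finset.injOn_of_card_image_eq
    rw [himg]; exact (congrArg Finset.card (rfl)).trans hc.symm
  intro x y hxy
  have h1 : minFun r₁ hr₁ x ∈ mset r₁ := by
    rw [mset_eq_image hr₁]; exact Finset.mem_image_of_mem _ (Finset.mem_univ x)
  have h2 : minFun r₁ hr₁ y ∈ mset r₁ := by
    rw [mset_eq_image hr₁]; exact Finset.mem_image_of_mem _ (Finset.mem_univ y)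
  have heq : minFun r₂ hr₂ (minFun r₁ hr₁ x) = minFun r₂ hr₂ (minFun r₁ hr₁ y) := by
    rw [hcomp, hcomp]; exact minFun_congr hr₂ hxy
  have := hinj h1 h2 heq
  exact hr₁.trans (minFun_rel hr₁ x) (hr₁.trans (this ▸ hr₁.refl _)
    (hr₁.symm (minFun_rel hr₁ y)))

lemma rcount_lt (hr₁ : Equivalence r₁) (hr₂ : Equivalence r₂)
    (h : ∀ x y, r₁ x y → r₂ x y) {u v : Fin n} (huv : ¬ r₁ u v) (h2 : r₂ u v) :
    rcount r₂ < rcount r₁ := by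
  classical
  have hcomp : ∀ x, minFun r₂ hr₂ (minFun r₁ hr₁ x) = minFun r₂ hr₂ x :=
    fun x => (minFun_congr hr₂ (h _ _ (minFun_rel hr₁ x))).symm
  have hfun : (minFun r₂ hr₂) ∘ (minFun r₁ hr₁) = minFun r₂ hr₂ := funext hcomp
  have himg : (mset r₁).image (minFun r₂ hr₂) = mset r₂ := by
    rw [mset_eq_image hr₁, Finset.image_image, hfun, ← mset_eq_image hr₂]
  have hu : minFun r₁ hr₁ u ∈ mset r₁ := by
    rw [mset_eq_image hr₁]; exact Finset.mem_image_of_mem _ (Finset.mem_univ u)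
  have hne : minFun r₁ hr₁ u ≠ minFun r₁ hr₁ v := by
    intro hEq
    exact huv (hr₁.trans (minFun_rel hr₁ u) (hr₁.trans (hEq ▸ hr₁.refl _)
      (hr₁.symm (minFun_rel hr₁ v))))
  have hveq : minFun r₂ hr₂ (minFun r₁ hr₁ u) = minFun r₂ hr₂ (minFun r₁ hr₁ v) := by
    rw [hcomp, hcomp]; exact minFun_congr hr₂ h2
  -- image over erase still everything
  have hsub : (mset r₁).image (minFun r₂ hr₂) ⊆ ((mset r₁).erase (minFun r₁ hr₁ u)).image (minFun r₂ hr₂) := by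
    intro z hz
    rcases Finset.mem_image.1 hz with ⟨w, hw, rfl⟩
    by_cases hwu : w = minFun r₁ hr₁ u
    · subst hwu
      refine Finset.mem_image.2 ⟨minFun r₁ hr₁ v, ?_, hveq.symm⟩
      refine Finset.mem_erase.2 ⟨hne.symm, ?_⟩
      rw [mset_eq_image hr₁]; exact Finset.mem_image_of_mem _ (Finset.mem_univ v)
    · exact Finset.mem_image.2 ⟨w, Finset.mem_erase.2 ⟨hwu, hw⟩, rfl⟩
  have : rcount r₂ ≤ ((mset r₁).erase (minFun r₁ hr₁ u)).card := by
    calc rcount r₂ = ((mset r₁).image (minFun r₂ hr₂)).card := by rw [himg]; rfl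
    _ ≤ (((mset r₁).erase (minFun r₁ hr₁ u)).image (minFun r₂ hr₂)).card :=
        Finset.card_le_card hsub
    _ ≤ _ := Finset.card_image_le
  have hcard := Finset.card_erase_of_mem hu
  have hpos : 0 < (mset r₁).card := Finset.card_pos.2 ⟨_, hu⟩
  have e1 : rcount r₁ = (mset r₁).card := rfl
  omega

/-! ### SameCycle relation counting -/

lemma sc_equiv (σ : Perm (Fin n)) : Equivalence σ.SameCycle :=
  ⟨fun x => SameCycle.refl σ x, fun h => h.symm, fun h h' => h.trans h'⟩

lemma cycleCount_eq_rcount (σ : Perm (Fin n)) : Set.ncard {x : Fin n | ∀ y, σ.SameCycle x y → x ≤ y} = rcount σ.SameCycle := by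
  have : {x : Fin n | ∀ y, σ.SameCycle x y → x ≤ y} = ↑(mset σ.SameCycle) := by
    ext x; simp only [Set.mem_setOf_eq, Finset.coe_sort_coe, Finset.mem_coe, mem_mset]
  rw [this, Set.ncard_coe_finset]; rfl

lemma rcount_le_card (r : Fin n → Fin n → Prop) : rcount r ≤ n := by
  calc rcount r ≤ Finset.univ.card := Finset.card_le_card (Finset.subset_univ _)
  _ = n := by simp

lemma rcount_one : rcount ((1 : Perm (Fin n)).SameCycle) = n := by
  have : mset ((1 : Perm (Fin n)).SameCycle) = Finset.univ := by
    ext x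
    simp only [mem_mset, Finset.mem_univ, iff_true, sameCycle_one]
    rintro y rfl; exact le_refl _
  rw [rcount, this]; simp

lemma rcount_congr {r₁ r₂ : Fin n → Fin n → Prop} (h : ∀ x y, r₁ x y ↔ r₂ x y) :
    rcount r₁ = rcount r₂ := by
  have : r₁ = r₂ := by funext x y; exact propext (h x y)
  rw [this]

lemma sc_inv (σ : Perm (Fin n)) : σ⁻¹.SameCycle = σ.SameCycle := by
  funext x y; exact propext sameCycle_inv

/-- the merged relation -/
def mrel (σ : Perm (Fin n)) (a b : Fin n) (x y : Fin n) : Prop :=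
  σ.SameCycle x y ∨ ((σ.SameCycle x a ∨ σ.SameCycle x b) ∧ (σ.SameCycle y a ∨ σ.SameCycle y b))

lemma mrel_equiv (σ : Perm (Fin n)) (a b : Fin n) : Equivalence (mrel σ a b) := by
  constructor
  · exact fun x => Or.inl (SameCycle.refl σ x)
  · rintro x y (h | ⟨h1, h2⟩)
    · exact Or.inl h.symm
    · exact Or.inr ⟨h2, h1⟩
  · rintro x y z (h | ⟨h1, h2⟩) (h' | ⟨h1', h2'⟩)
    · exact Or.inl (h.trans h')
    · exact Or.inr ⟨h1'.imp h.trans h.trans, h2'⟩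
    · exact Or.inr ⟨h1, h2.imp h'.symm.trans h'.symm.trans⟩
    · exact Or.inr ⟨h1, h2'⟩

lemma mrel_of_sameCycle {σ : Perm (Fin n)} {a b x y : Fin n} (h : σ.SameCycle x y) :
    mrel σ a b x y := Or.inl h

lemma mrel_eq_of_sameCycle {σ : Perm (Fin n)} {a b : Fin n} (hab : σ.SameCycle a b) :
    ∀ x y, mrel σ a b x y ↔ σ.SameCycle x y := by
  intro x y
  constructor
  · rintro (h | ⟨h1, h2⟩)
    · exact h
    · have hx' : σ.SameCycle x a := by
        rcases h1 with h | h
        · exact h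
        · exact h.trans hab.symm
      have hy' : σ.SameCycle y a := by
        rcases h2 with h | h
        · exact h
        · exact h.trans hab.symm
      exact hx'.trans hy'.symm
  · exact Or.inl

/-- T1: invariant-block bound for right multiplication by a swap. -/
lemma sameCycle_mul_swap_le (σ : Perm (Fin n)) (a b : Fin n) :
    ∀ x y, (σ * Equiv.swap a b).SameCycle x y → mrel σ a b x y := by
  intro x y h
  have hstep : ∀ z, mrel σ a b x z → mrel σ a b x ((σ * Equiv.swap a b) z) := by
    intro z hz
    by_cases hza : z = a
    · have h1 : (σ * Equiv.swap a b) z = σ b := by rw [hza]; simp [Equiv.Perm.mul_apply]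
      rw [h1]
      have hb : σ.SameCycle (σ b) b := (sameCycle_apply_left.2 (SameCycle.refl σ b))
      have hxa : σ.SameCycle x a ∨ σ.SameCycle x b := by
        rcases hz with h | ⟨h1', _⟩
        · exact Or.inl (hza ▸ h)
        · exact h1'
      exact Or.inr ⟨hxa, Or.inr hb⟩
    · by_cases hzb : z = b
      · have h1 : (σ * Equiv.swap a b) z = σ a := by rw [hzb]; simp [Equiv.Perm.mul_apply]
        rw [h1]
        have ha : σ.SameCycle (σ a) a := (sameCycle_apply_left.2 (SameCycle.refl σ a))
        have hxa : σ.SameCycle x a ∨ σ.SameCycle x b := by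
          rcases hz with h | ⟨h1', _⟩
          · exact Or.inr (hzb ▸ h)
          · exact h1'
        exact Or.inr ⟨hxa, Or.inl ha⟩
      · have h1 : (σ * Equiv.swap a b) z = σ z := by
          simp [Equiv.Perm.mul_apply, Equiv.swap_apply_of_ne_of_ne hza hzb]
        rw [h1]
        have hz' : σ.SameCycle (σ z) z := (sameCycle_apply_left.2 (SameCycle.refl σ z))
        rcases hz with h | ⟨h1', h2'⟩
        · exact Or.inl (h.trans hz'.symm)
        · exact Or.inr ⟨h1', h2'.imp hz'.trans hz'.trans⟩
  have key : ∀ i : ℕ, mrel σ a b x (((σ * Equiv.swap a b) ^ i) x) := by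
    intro i
    induction i with
    | zero => simpa using mrel_of_sameCycle (SameCycle.refl σ x)
    | succ i ih =>
      have hpow : ((σ * Equiv.swap a b) ^ (i + 1)) x
          = (σ * Equiv.swap a b) (((σ * Equiv.swap a b) ^ i) x) := by
        rw [pow_succ']; rfl
      rw [hpow]
      exact hstep _ ih
  rcases h.exists_pow_eq' with ⟨i, _, hi⟩
  exact hi ▸ key i

lemma minFun_mem_mset {r : Fin n → Fin n → Prop} (hr : Equivalence r) (x : Fin n) :
    minFun r hr x ∈ mset r := by
  rw [mset_eq_image hr]; exact Finset.mem_image_of_mem _ (Finset.mem_univ x)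

lemma eq_minFun_of_mem_mset {r : Fin n → Fin n → Prop} (hr : Equivalence r) {x y : Fin n}
    (hx : x ∈ mset r) (hxy : r x y) : x = minFun r hr y := by
  rw [← minFun_congr hr hxy]
  exact le_antisymm (mem_mset.1 hx _ (minFun_rel hr x)) (minFun_le hr (hr.refl x))

lemma rcount_mrel_of_not {σ : Perm (Fin n)} {a b : Fin n}
    (hnab : ¬ σ.SameCycle a b) : rcount (mrel σ a b) + 1 = rcount σ.SameCycle := by
  classical
  set hsc := sc_equiv σ
  set ga := minFun σ.SameCycle hsc a with hga
  set gb := minFun σ.SameCycle hsc b with hgb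
  have hgaa : σ.SameCycle ga a := (minFun_rel hsc a).symm
  have hgbb : σ.SameCycle gb b := (minFun_rel hsc b).symm
  have hne : ga ≠ gb := by
    intro h
    exact hnab (hgaa.symm.trans (h ▸ hgbb))
  set c0 := max ga gb with hc0
  have hc0mem : c0 ∈ mset σ.SameCycle := by
    rcases max_choice ga gb with h | h <;> rw [hc0, h]
    · exact minFun_mem_mset hsc a
    · exact minFun_mem_mset hsc b
  have hkey : mset (mrel σ a b) = (mset σ.SameCycle).erase c0 := by
    ext x
    rw [mem_mset, Finset.mem_erase, mem_mset]
    constructor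
    · intro hx
      constructor
      · intro hxc0
        have hxAB : σ.SameCycle x a ∨ σ.SameCycle x b := by
          rcases max_choice ga gb with h | h
          · exact Or.inl (by rw [hxc0, hc0, h]; exact hgaa)
          · exact Or.inr (by rw [hxc0, hc0, h]; exact hgbb)
        have hminAB : σ.SameCycle (min ga gb) a ∨ σ.SameCycle (min ga gb) b := by
          rcases min_choice ga gb with h | h <;> rw [h]
          · exact Or.inl hgaa
          · exact Or.inr hgbb
        have hle := hx (min ga gb) (Or.inr ⟨hxAB, hminAB⟩)
        have hlt : min ga gb < max ga gb := min_lt_max.2 hne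
        rw [← hc0] at hlt
        rw [hxc0] at hle
        exact absurd hle (not_le.2 hlt)
      · exact fun y hy => hx y (Or.inl hy)
    · rintro ⟨hxc0, hx⟩ y hy
      rcases hy with hy | ⟨hxAB, hyAB⟩
      · exact hx y hy
      · have hxm : x = min ga gb := by
          rcases hxAB with h | h
          · have hxga : x = ga := eq_minFun_of_mem_mset hsc (mem_mset.2 hx) h
            rcases le_total ga gb with hle | hle
            · rw [min_eq_left hle]; exact hxga
            · exact absurd (by rw [hxga, hc0, max_eq_left hle] : x = c0) hxc0
          · have hxgb : x = gb := eq_minFun_of_mem_mset hsc (mem_mset.2 hx) h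
            rcases le_total gb ga with hle | hle
            · rw [min_eq_right hle]; exact hxgb
            · exact absurd (by rw [hxgb, hc0, max_eq_right hle] : x = c0) hxc0
        rcases hyAB with h | h
        · have hgay : ga ≤ y := minFun_le hsc h.symm
          calc x = min ga gb := hxm
          _ ≤ ga := min_le_left _ _
          _ ≤ y := hgay
        · have hgby : gb ≤ y := minFun_le hsc h.symm
          calc x = min ga gb := hxm
          _ ≤ gb := min_le_right _ _
          _ ≤ y := hgby
  have hcard := Finset.card_erase_of_mem hc0mem
  have hpos : 0 < (mset σ.SameCycle).card := Finset.card_pos.2 ⟨_, hc0mem⟩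
  rw [rcount, rcount, hkey]
  omega

/-! ### Step lemmas -/

lemma rcount_mrel_lower (σ : Perm (Fin n)) (a b : Fin n) :
    rcount σ.SameCycle ≤ rcount (mrel σ a b) + 1 := by
  by_cases h : σ.SameCycle a b
  · rw [rcount_congr (mrel_eq_of_sameCycle h)]
    omega
  · rw [← rcount_mrel_of_not h]

lemma step_lower (σ : Perm (Fin n)) (a b : Fin n) :
    rcount σ.SameCycle ≤ rcount ((σ * Equiv.swap a b).SameCycle) + 1 := by
  have h1 : rcount (mrel σ a b) ≤ rcount ((σ * Equiv.swap a b).SameCycle) :=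
    rcount_le (sc_equiv _) (mrel_equiv σ a b) (sameCycle_mul_swap_le σ a b)
  have := rcount_mrel_lower σ a b
  omega

lemma step_merge (σ : Perm (Fin n)) (a b : Fin n)
    (hdrop : rcount ((σ * Equiv.swap a b).SameCycle) + 1 = rcount σ.SameCycle) :
    ¬ σ.SameCycle a b ∧ ∀ x y, ((σ * Equiv.swap a b).SameCycle x y ↔ mrel σ a b x y) := by
  have h1 : rcount (mrel σ a b) ≤ rcount ((σ * Equiv.swap a b).SameCycle) :=
    rcount_le (sc_equiv _) (mrel_equiv σ a b) (sameCycle_mul_swap_le σ a b)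
  have hnab : ¬ σ.SameCycle a b := by
    intro h
    have := rcount_congr (mrel_eq_of_sameCycle h)
    omega
  have h2 := rcount_mrel_of_not hnab
  have heq : rcount ((σ * Equiv.swap a b).SameCycle) = rcount (mrel σ a b) := by omega
  refine ⟨hnab, fun x y => ⟨sameCycle_mul_swap_le σ a b x y, ?_⟩⟩
  exact fun h => rel_eq_of_rcount_eq (sc_equiv _) (mrel_equiv σ a b)
    (sameCycle_mul_swap_le σ a b) heq x y h

lemma step_lower_left (σ : Perm (Fin n)) (a b : Fin n) :
    rcount σ.SameCycle ≤ rcount ((Equiv.swap a b * σ).SameCycle) + 1 := by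
  have h := step_lower σ⁻¹ a b
  rw [sc_inv] at h
  have : (σ⁻¹ * Equiv.swap a b).SameCycle = (Equiv.swap a b * σ).SameCycle := by
    have : (Equiv.swap a b * σ)⁻¹ = σ⁻¹ * Equiv.swap a b := by
      rw [mul_inv_rev, Equiv.swap_inv]
    rw [← this, sc_inv]
  rwa [this] at h

lemma fixed_class {σ : Perm (Fin n)} {x y : Fin n} (h : σ.SameCycle x y) (hx : σ x = x) :
    y = x := (h.eq_of_left hx).symm

lemma rcount_lt_card {σ : Perm (Fin n)} {x : Fin n} (hx : σ x ≠ x) :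
    rcount σ.SameCycle < n := by
  have hmax : max x (σ x) ∉ mset σ.SameCycle := by
    intro hmem
    have hxx : σ.SameCycle x (σ x) := sameCycle_apply_right.2 (SameCycle.refl σ x)
    rcases max_choice x (σ x) with h | h
    · have h1 : σ x ≤ x := (le_max_right x (σ x)).trans (le_of_eq h)
      have h2 := mem_mset.1 hmem (σ x) (by rw [h]; exact hxx)
      rw [h] at h2
      exact hx (le_antisymm h1 h2)
    · have h1 : x ≤ σ x := (le_max_left x (σ x)).trans (le_of_eq h)
      have h2 := mem_mset.1 hmem x (by rw [h]; exact hxx.symm)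
      rw [h] at h2
      exact hx (le_antisymm h2 h1)
  have hsub : mset σ.SameCycle ⊆ Finset.univ.erase (max x (σ x)) := by
    intro z hz
    exact Finset.mem_erase.2 ⟨fun h => hmax (h ▸ hz), Finset.mem_univ z⟩
  calc rcount σ.SameCycle ≤ (Finset.univ.erase (max x (σ x))).card := Finset.card_le_card hsub
  _ = n - 1 := by rw [Finset.card_erase_of_mem (Finset.mem_univ _)]; simp
  _ < n := by
      have : (0:ℕ) < n := Fin.pos x
      omega

lemma eq_one_of_rcount {σ : Perm (Fin n)} (h : rcount σ.SameCycle = n) : σ = 1 := by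
  by_contra hne
  have : ∃ x, σ x ≠ x := by
    by_contra hall
    push_neg at hall
    exact hne (Equiv.ext hall)
  rcases this with ⟨x, hx⟩
  exact absurd h (Nat.ne_of_lt (rcount_lt_card hx))

/-- every permutation of `Fin n` is a product of `n - rcount` transpositions -/
lemma exists_swap_factorization : ∀ (d : ℕ) (σ : Perm (Fin n)), n = rcount σ.SameCycle + d →
    ∃ L : List (Perm (Fin n)), (∀ τ ∈ L, τ.IsSwap) ∧ L.length = d ∧ L.prod = σ := by
  intro d
  induction d with
  | zero =>
    intro σ hσ
    refine ⟨[], by simp, by simp, ?_⟩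
    rw [List.prod_nil]
    exact (eq_one_of_rcount (by omega)).symm
  | succ d ih =>
    intro σ hσ
    have hne : σ ≠ 1 := by
      intro h
      rw [h, rcount_one] at hσ
      omega
    have : ∃ x, σ x ≠ x := by
      by_contra hall
      push_neg at hall
      exact hne (Equiv.ext hall)
    rcases this with ⟨x, hx⟩
    set σ' := Equiv.swap x (σ x) * σ with hσ'
    have hfix : σ' x = x := by
      rw [hσ']
      simp [Equiv.Perm.mul_apply]
    have hσeq : σ = Equiv.swap x (σ x) * σ' := by
      rw [hσ', ← mul_assoc, Equiv.swap_mul_self, one_mul]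
    -- σ'.SameCycle ≤ σ.SameCycle
    have hsub : ∀ u v, σ'.SameCycle u v → σ.SameCycle u v := by
      intro u v huv
      have h1 : (σ'⁻¹).SameCycle u v := sameCycle_inv.2 huv
      have h2 : σ'⁻¹ = σ⁻¹ * Equiv.swap x (σ x) := by
        rw [hσ', mul_inv_rev, Equiv.swap_inv]
      rw [h2] at h1
      have h3 := sameCycle_mul_swap_le σ⁻¹ x (σ x) u v h1
      have hxsx : σ⁻¹.SameCycle x (σ x) := sameCycle_inv.2 (sameCycle_apply_right.2 (SameCycle.refl σ x))
      have h4 := (mrel_eq_of_sameCycle hxsx u v).1 h3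
      exact sameCycle_inv.1 h4
    -- strict: x is fixed by σ' but x ~σ (σ x)
    have hnotsc : ¬ σ'.SameCycle x (σ x) := by
      intro h
      exact hx (fixed_class h hfix)
    have hsc : σ.SameCycle x (σ x) := sameCycle_apply_right.2 (SameCycle.refl σ x)
    have hlt : rcount σ.SameCycle < rcount σ'.SameCycle :=
      rcount_lt (sc_equiv σ') (sc_equiv σ) hsub hnotsc hsc
    -- also σ' count ≤ σ count + 1
    have hle : rcount σ'.SameCycle ≤ rcount σ.SameCycle + 1 := by
      have h := step_lower_left σ' x (σ x)
      rwa [← hσeq] at h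
    have hcnt : rcount σ'.SameCycle = rcount σ.SameCycle + 1 := le_antisymm hle hlt
    rcases ih σ' (by omega) with ⟨L, hL1, hL2, hL3⟩
    refine ⟨Equiv.swap x (σ x) :: L, ?_, by simp [hL2], by rw [List.prod_cons, hL3, ← hσeq]⟩
    intro τ hτ
    rcases List.mem_cons.1 hτ with h | h
    · exact ⟨x, σ x, Ne.symm hx, h⟩
    · exact hL1 τ h

/-! ### Chains of swaps -/

lemma chain_step (L : List (Perm (Fin n))) (hL : ∀ τ ∈ L, τ.IsSwap) (m : ℕ) :
    rcount ((L.take m).prod).SameCycle ≤ rcount ((L.take (m+1)).prod).SameCycle + 1 := by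
  by_cases hm : m < L.length
  · rcases hL (L.get ⟨m, hm⟩) (List.get_mem L ⟨m, hm⟩) with ⟨a, b, hab, hτ⟩
    have hget : L[m] = Equiv.swap a b := hτ
    have h1 : (L.take (m+1)).prod = (L.take m).prod * Equiv.swap a b := by
      rw [List.prod_take_succ L m hm, hget]
    rw [h1]
    exact step_lower _ a b
  · push_neg at hm
    rw [List.take_of_length_le hm, List.take_of_length_le (by omega)]
    omega

lemma chain_lower (L : List (Perm (Fin n))) (hL : ∀ τ ∈ L, τ.IsSwap) (m : ℕ) :
    n ≤ rcount ((L.take m).prod).SameCycle + m := by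
  induction m with
  | zero => simp [rcount_one]
  | succ m ih =>
    have := chain_step L hL m
    omega

lemma chain_upper (L : List (Perm (Fin n))) (hL : ∀ τ ∈ L, τ.IsSwap) :
    ∀ j m, rcount ((L.take m).prod).SameCycle ≤ rcount ((L.take (m+j)).prod).SameCycle + j := by
  intro j
  induction j with
  | zero => intro m; simp
  | succ j ih =>
    intro m
    have h1 := chain_step L hL m
    have h2 := ih (m+1)
    have h3 : m + 1 + j = m + (j+1) := by omega
    rw [h3] at h2
    omega

lemma chain_exact (L : List (Perm (Fin n))) (hL : ∀ τ ∈ L, τ.IsSwap)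
    (hcc : rcount L.prod.SameCycle + L.length = n) :
    ∀ m, m ≤ L.length → rcount ((L.take m).prod).SameCycle + m = n := by
  intro m hm
  have h1 := chain_lower L hL m
  have h2 := chain_upper L hL (L.length - m) m
  rw [(by omega : m + (L.length - m) = L.length), List.take_of_length_le (le_refl _)] at h2
  omega

lemma chain_merge (L : List (Perm (Fin n))) (hL : ∀ τ ∈ L, τ.IsSwap)
    (hcc : rcount L.prod.SameCycle + L.length = n)
    (m : ℕ) (hm : m < L.length) {a b : Fin n} (hτ : L.get ⟨m, hm⟩ = Equiv.swap a b) :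
    ¬ ((L.take m).prod).SameCycle a b ∧
      ∀ x y, (((L.take (m+1)).prod).SameCycle x y ↔ mrel ((L.take m).prod) a b x y) := by
  have hget : L[m] = Equiv.swap a b := hτ
  have h1 : (L.take (m+1)).prod = (L.take m).prod * Equiv.swap a b := by
    rw [List.prod_take_succ L m hm, hget]
  have e1 := chain_exact L hL hcc m (by omega)
  have e2 := chain_exact L hL hcc (m+1) (by omega)
  have hdrop : rcount ((L.take (m+1)).prod).SameCycle + 1 = rcount ((L.take m).prod).SameCycle := by omega
  rw [h1] at hdrop ⊢
  exact step_merge _ a b hdrop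

/-! ### Fin distance arithmetic -/

lemma dv_val (y z : Fin n) : (z - y).val = (n - y.val + z.val) % n := by
  rw [Fin.sub_def]

lemma dv_eq_of_le {y z : Fin n} (h : y.val ≤ z.val) : (z - y).val = z.val - y.val := by
  have hz := z.isLt
  have hy := y.isLt
  rw [dv_val]
  have h1 : n - y.val + z.val = (z.val - y.val) + n := by omega
  rw [h1, Nat.add_mod_right, Nat.mod_eq_of_lt (by omega)]

lemma dv_eq_of_gt {y z : Fin n} (h : z.val < y.val) : (z - y).val = z.val + n - y.val := by
  have hz := z.isLt
  have hy := y.isLt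
  rw [dv_val]
  have h1 : n - y.val + z.val = z.val + n - y.val := by omega
  rw [h1, Nat.mod_eq_of_lt (by omega)]

lemma dv_zero_iff {y z : Fin n} : (z - y).val = 0 ↔ z = y := by
  constructor
  · intro h
    rcases le_or_gt y.val z.val with h' | h'
    · rw [dv_eq_of_le h'] at h
      exact Fin.ext (by omega)
    · rw [dv_eq_of_gt h'] at h
      have hz := z.isLt
      have hy := y.isLt
      omega
  · rintro rfl
    rw [dv_val]
    have := z.isLt
    have h1 : n - z.val + z.val = n := by omega
    rw [h1, Nat.mod_self]

lemma dv_pos {y z : Fin n} (h : z ≠ y) : 0 < (z - y).val :=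
  Nat.pos_of_ne_zero (fun h0 => h (dv_zero_iff.1 h0))

lemma dv_inj {y z1 z2 : Fin n} (h : (z1 - y).val = (z2 - y).val) : z1 = z2 := by
  have h1 := z1.isLt
  have h2 := z2.isLt
  have hy := y.isLt
  apply Fin.ext
  rcases le_or_gt y.val z1.val with ha | ha <;> rcases le_or_gt y.val z2.val with hb | hb
  · rw [dv_eq_of_le ha, dv_eq_of_le hb] at h; omega
  · rw [dv_eq_of_le ha, dv_eq_of_gt hb] at h; omega
  · rw [dv_eq_of_gt ha, dv_eq_of_le hb] at h; omega
  · rw [dv_eq_of_gt ha, dv_eq_of_gt hb] at h; omega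

lemma dv_sub {a u z : Fin n} (h : (u - a).val ≤ (z - a).val) :
    (z - u).val = (z - a).val - (u - a).val := by
  have hz : z - u = (z - a) - (u - a) := by
    have hnz : 0 < n := Fin.pos a
    haveI : NeZero n := ⟨by omega⟩
    abel
  rw [hz, dv_eq_of_le h]

lemma dv_interval {u q w : Fin n} (huq : u.val < q.val)
    (hw : (w - u).val ≤ (q - u).val) (hwu : w ≠ u) :
    u.val < w.val ∧ w.val ≤ q.val := by
  have h1 := w.isLt
  have h2 := q.isLt
  have h3 := u.isLt
  rw [dv_eq_of_le (le_of_lt huq)] at hw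
  rcases lt_trichotomy u.val w.val with h | h | h
  · rw [dv_eq_of_le (le_of_lt h)] at hw
    omega
  · exact absurd (Fin.ext h.symm) hwu
  · rw [dv_eq_of_gt h] at hw
    omega

/-! ### Monotone and noncrossing -/

def Mono (σ : Perm (Fin n)) : Prop :=
  ∀ y z, σ.SameCycle y z → z ≠ y → σ y ≠ y → (σ y - y).val ≤ (z - y).val

def NC (σ : Perm (Fin n)) : Prop :=
  ∀ p q r s : Fin n, p.val < q.val → q.val < r.val → r.val < s.val →
    σ.SameCycle p r → σ.SameCycle q s → σ.SameCycle p q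

open Fin.NatCast in
lemma finRotate_pow (m : ℕ) (t : ℕ) (x : Fin (m+1)) :
    ((finRotate (m+1)) ^ t) x = x + (t : Fin (m+1)) := by
  induction t with
  | zero => simp
  | succ t ih =>
    have : ((finRotate (m+1)) ^ (t+1)) x = finRotate (m+1) (((finRotate (m+1)) ^ t) x) := by
      rw [pow_succ']; rfl
    rw [this, ih, finRotate_succ_apply]
    push_cast
    abel

open Fin.NatCast in
lemma sameCycle_finRotate {m : ℕ} (x y : Fin (m+1)) : (finRotate (m+1)).SameCycle x y := by
  refine ⟨((y - x).val : ℤ), ?_⟩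
  rw [zpow_natCast, finRotate_pow, Fin.cast_val_eq_self]
  abel

lemma mono_finRotate : Mono (finRotate n) := by
  intro y z hsc hzy hfix
  rcases n with - | m
  · exact z.elim0
  rcases m with - | m
  · have h1 := z.isLt
    have h2 := y.isLt
    exact absurd (Fin.ext (by omega)) hzy
  have h1 : finRotate (m+2) y = y + 1 := finRotate_succ_apply y
  rw [h1]
  have h2 : (y + 1 - y) = (1 : Fin (m+2)) := by abel
  rw [h2]
  have h3 : ((1 : Fin (m+2))).val = 1 := rfl
  rw [h3]
  exact dv_pos hzy

lemma nc_finRotate : NC (finRotate n) := by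
  intro p q r s _ _ _ _ _
  rcases n with - | m
  · exact p.elim0
  · exact sameCycle_finRotate p q

/-! ### Descent of Mono/NC along merges -/

lemma swap_prod_apply_left (σ : Perm (Fin n)) (a b : Fin n) :
    (σ * Equiv.swap a b) a = σ b := by simp [Equiv.Perm.mul_apply]

lemma swap_prod_apply_right (σ : Perm (Fin n)) (a b : Fin n) :
    (σ * Equiv.swap a b) b = σ a := by simp [Equiv.Perm.mul_apply]

lemma swap_prod_apply_other (σ : Perm (Fin n)) {a b z : Fin n} (hza : z ≠ a) (hzb : z ≠ b) :
    (σ * Equiv.swap a b) z = σ z := by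
  simp [Equiv.Perm.mul_apply, Equiv.swap_apply_of_ne_of_ne hza hzb]

lemma mrel_comm {σ : Perm (Fin n)} {a b x y : Fin n} :
    mrel σ a b x y ↔ mrel σ b a x y := by
  unfold mrel; tauto

lemma hiff_comm {σ : Perm (Fin n)} {a b : Fin n}
    (h : ∀ x y, (σ * Equiv.swap a b).SameCycle x y ↔ mrel σ a b x y) :
    ∀ x y, (σ * Equiv.swap b a).SameCycle x y ↔ mrel σ b a x y := by
  intro x y
  rw [Equiv.swap_comm b a, h]
  exact mrel_comm

section Descent

variable {σ : Perm (Fin n)} {a b : Fin n}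

lemma mono_at_a (hnab : ¬ σ.SameCycle a b)
    (hiff : ∀ x y, (σ * Equiv.swap a b).SameCycle x y ↔ mrel σ a b x y)
    (hm' : Mono (σ * Equiv.swap a b)) :
    ∀ z, σ.SameCycle a z → z ≠ a → σ a ≠ a → (σ a - a).val ≤ (z - a).val := by
  classical
  intro z hz hza hfix
  set σ' := σ * Equiv.swap a b with hσ'
  -- pick the closest element of the class of a
  obtain ⟨z0, hz0mem, hz0min⟩ := Finset.exists_min_image
    (Finset.univ.filter (fun w => σ.SameCycle a w ∧ w ≠ a)) (fun w => (w - a).val)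
    ⟨z, by simp [hz, hza]⟩
  rw [Finset.mem_filter] at hz0mem
  obtain ⟨-, hz0sc, hz0a⟩ := hz0mem
  have hz0min' : ∀ w, σ.SameCycle a w → w ≠ a → (z0 - a).val ≤ (w - a).val := by
    intro w h1 h2
    exact hz0min w (by simp [h1, h2])
  have hzmin := hz0min' z hz hza
  -- suffices (σ a - a).val ≤ (z0 - a).val
  rcases le_or_gt ((σ a - a).val) ((z0 - a).val) with hok | hgt
  · omega
  exfalso
  set pz := (z0 - a).val with hpz
  have hpzpos : 0 < pz := dv_pos hz0a
  have hz0b : ¬ σ.SameCycle z0 b := fun h => hnab ((hz0sc).trans h)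
  set I := Finset.univ.filter
    (fun v => (σ.SameCycle v a ∨ σ.SameCycle v b) ∧ 0 < (v - a).val ∧ (v - a).val < pz) with hI
  rcases Finset.eq_empty_or_nonempty I with hIe | hIne
  · -- I empty : σ' a must jump directly to z0, but it lies in the class of b
    have hw : σ.SameCycle (σ' a) b := by
      rw [hσ', swap_prod_apply_left]
      exact sameCycle_apply_left.2 (SameCycle.refl σ b)
    have hsc' : σ'.SameCycle a z0 := (hiff a z0).2 (Or.inl hz0sc)
    have hfix' : σ' a ≠ a := fun h => hz0a (fixed_class hsc' h)
    have hmono := hm' a z0 hsc' hz0a hfix'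
    have hwa : σ' a ≠ a := hfix'
    have hwpos : 0 < (σ' a - a).val := dv_pos hwa
    rcases lt_or_eq_of_le hmono with hlt | heq
    · have : σ' a ∈ I := by
        rw [hI, Finset.mem_filter]
        exact ⟨Finset.mem_univ _, Or.inr hw, hwpos, hlt⟩
      rw [hIe] at this
      exact absurd this (Finset.notMem_empty _)
    · have heq2 : σ' a = z0 := dv_inj heq
      rw [heq2] at hw
      exact hz0b hw
  · -- I nonempty : take the farthest element u of I
    obtain ⟨u, humem, humax⟩ := Finset.exists_max_image I (fun v => (v - a).val) hIne
    rw [hI, Finset.mem_filter] at humem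
    obtain ⟨-, huAB, hupos, hult⟩ := humem
    have hua : u ≠ a := by
      intro h
      rw [h, dv_zero_iff.2 rfl] at hupos
      exact Nat.lt_irrefl 0 hupos
    have hub' : ¬ σ.SameCycle u a := by
      intro h
      have := hz0min' u h.symm hua
      omega
    have hub : σ.SameCycle u b := huAB.resolve_left hub'
    have hz0u : z0 ≠ u := by
      intro h
      apply hnab
      apply hz0sc.trans
      rw [h]
      exact hub
    have hsc' : σ'.SameCycle u z0 := by
      apply (hiff u z0).2
      exact Or.inr ⟨Or.inr hub, Or.inl hz0sc.symm⟩
    have hfix' : σ' u ≠ u := by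
      intro h
      exact hz0u (fixed_class hsc' h)
    have hmono := hm' u z0 hsc' hz0u hfix'
    set w := σ' u with hwdef
    have hwu : w ≠ u := hfix'
    have hdsub : (z0 - u).val = pz - (u - a).val := by
      rw [hpz]; exact dv_sub (le_of_lt hult)
    have hwAB : σ.SameCycle w a ∨ σ.SameCycle w b := by
      have h1 : σ'.SameCycle u w := sameCycle_apply_right.2 (SameCycle.refl σ' u)
      rcases (hiff u w).1 h1 with h | ⟨-, h2⟩
      · exact Or.inr (h.symm.trans hub)
      · exact h2
    -- value computation
    have hsum : (w - a).val = (w - u).val + (u - a).val := by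
      have hz := Fin.pos a
      haveI : NeZero n := ⟨by omega⟩
      have hident : w - a = (w - u) + (u - a) := by abel
      rw [hident, Fin.add_def]
      have h1 : (w - u).val + (u - a).val ≤ pz := by omega
      have h2 : pz < n := (z0 - a).isLt
      exact Nat.mod_eq_of_lt (by omega)
    have hwpos : 0 < (w - u).val := dv_pos hwu
    have hwle : (w - a).val ≤ pz := by omega
    rcases lt_or_eq_of_le hwle with hlt | heq
    · have : w ∈ I := by
        rw [hI, Finset.mem_filter]
        exact ⟨Finset.mem_univ _, hwAB, by omega, hlt⟩
      have := humax w this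
      omega
    · have hwz0 : w = z0 := dv_inj heq
      by_cases hubb : u = b
      · -- then w = σ' b = σ a = z0, contradicting hgt
        have heq3 : σ a = z0 := by
          rw [← hwz0, hwdef, hubb, hσ', swap_prod_apply_right]
        rw [heq3] at hgt
        omega
      · have : σ' u = σ u := swap_prod_apply_other σ hua hubb
        have hwu' : σ.SameCycle w u := by
          rw [hwdef, this]
          exact sameCycle_apply_left.2 (SameCycle.refl σ u)
        have : σ.SameCycle z0 b := (hwz0 ▸ hwu').trans hub
        exact hz0b this

lemma mono_step (hab : a ≠ b) (hnab : ¬ σ.SameCycle a b)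
    (hiff : ∀ x y, (σ * Equiv.swap a b).SameCycle x y ↔ mrel σ a b x y)
    (hm' : Mono (σ * Equiv.swap a b)) : Mono σ := by
  intro y z hyz hzy hfix
  by_cases hya : y = a
  · subst hya
    exact mono_at_a hnab hiff hm' z hyz hzy hfix
  by_cases hyb : y = b
  · subst hyb
    exact mono_at_a (fun h => hnab h.symm) (hiff_comm hiff)
      (by rw [← Equiv.swap_comm a y]; exact hm') z hyz hzy hfix
  · have h1 : (σ * Equiv.swap a b) y = σ y := swap_prod_apply_other σ hya hyb
    have h2 := hm' y z ((hiff y z).2 (Or.inl hyz)) hzy (by rw [h1]; exact hfix)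
    rwa [h1] at h2

lemma nc_core (hnab : ¬ σ.SameCycle a b)
    (hiff : ∀ x y, (σ * Equiv.swap a b).SameCycle x y ↔ mrel σ a b x y)
    (hm' : Mono (σ * Equiv.swap a b)) :
    ∀ p q : Fin n, p.val < q.val → σ.SameCycle p a → σ.SameCycle q b →
      p.val ≤ a.val ∧ a.val < q.val := by
  classical
  intro p q hpq hpa hqb
  set σ' := σ * Equiv.swap a b with hσ'
  obtain ⟨u, humem, humax⟩ := Finset.exists_max_image
    (Finset.univ.filter (fun v => σ.SameCycle v a ∧ p.val ≤ v.val ∧ v.val < q.val))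
    (fun v => v.val)
    ⟨p, by simp only [Finset.mem_filter, Finset.mem_univ, true_and]; exact ⟨hpa, le_refl _, hpq⟩⟩
  rw [Finset.mem_filter] at humem
  obtain ⟨-, hua, hpu, huq⟩ := humem
  have humax' : ∀ v, σ.SameCycle v a → p.val ≤ v.val → v.val < q.val → v.val ≤ u.val := by
    intro v h1 h2 h3
    exact humax v (by simp only [Finset.mem_filter, Finset.mem_univ, true_and]; exact ⟨h1, h2, h3⟩)
  have hqu : q ≠ u := fun h => by rw [h] at huq; omega
  have hsc' : σ'.SameCycle u q := (hiff u q).2 (Or.inr ⟨Or.inl hua, Or.inr hqb⟩)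
  have hfix' : σ' u ≠ u := fun h => hqu (fixed_class hsc' h)
  have hmono := hm' u q hsc' hqu hfix'
  set w := σ' u with hwdef
  have hwu : w ≠ u := hfix'
  have hint := dv_interval huq hmono hwu
  have hwAB : σ.SameCycle w a ∨ σ.SameCycle w b := by
    have h1 : σ'.SameCycle u w := sameCycle_apply_right.2 (SameCycle.refl σ' u)
    rcases (hiff u w).1 h1 with h | ⟨-, h2⟩
    · exact Or.inl (h.symm.trans hua)
    · exact h2
  have hwb : σ.SameCycle w b := by
    rcases hwAB with h | h
    · exfalso
      rcases lt_or_eq_of_le hint.2 with hlt | heq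
      · have := humax' w h (by omega) hlt
        omega
      · have : w = q := Fin.ext heq
        exact hnab (h.symm.trans (this ▸ hqb))
    · exact h
  have hu_eq_a : u = a := by
    by_cases huaeq : u = a
    · exact huaeq
    · exfalso
      by_cases hubeq : u = b
      · exact hnab (by rw [← hubeq]; exact hua.symm)
      · have h1 : σ' u = σ u := swap_prod_apply_other σ huaeq hubeq
        have h2 : σ.SameCycle u w := by
          rw [hwdef, h1]
          exact sameCycle_apply_right.2 (SameCycle.refl σ u)
        exact hnab (hua.symm.trans (h2.trans hwb))
  constructor
  · rw [← hu_eq_a]; exact hpu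
  · rw [← hu_eq_a]; exact huq

lemma nc_AB (hnab : ¬ σ.SameCycle a b)
    (hiff : ∀ x y, (σ * Equiv.swap a b).SameCycle x y ↔ mrel σ a b x y)
    (hm' : Mono (σ * Equiv.swap a b)) :
    ∀ p q r s : Fin n, p.val < q.val → q.val ≤ r.val → r.val < s.val →
      σ.SameCycle p a → σ.SameCycle r a → σ.SameCycle q b → σ.SameCycle s b → False := by
  intro p q r s h1 h2 h3 hpa hra hqb hsb
  have c1 := nc_core hnab hiff hm' p q h1 hpa hqb
  have c2 := nc_core hnab hiff hm' r s h3 hra hsb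
  omega

lemma nc_step (hab : a ≠ b) (hnab : ¬ σ.SameCycle a b)
    (hiff : ∀ x y, (σ * Equiv.swap a b).SameCycle x y ↔ mrel σ a b x y)
    (hm' : Mono (σ * Equiv.swap a b)) (hn' : NC (σ * Equiv.swap a b)) : NC σ := by
  intro p q r s h1 h2 h3 hpr hqs
  by_contra hnpq
  have hpq' : (σ * Equiv.swap a b).SameCycle p q :=
    hn' p q r s h1 h2 h3 ((hiff p r).2 (Or.inl hpr)) ((hiff q s).2 (Or.inl hqs))
  rcases (hiff p q).1 hpq' with h | ⟨hpAB, hqAB⟩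
  · exact hnpq h
  rcases hpAB with hpa | hpb <;> rcases hqAB with hqa | hqb
  · exact hnpq (hpa.trans hqa.symm)
  · exact nc_AB hnab hiff hm' p q r s h1 (by omega) h3 hpa (hpr.symm.trans hpa)
      hqb (hqs.symm.trans hqb)
  · exact nc_AB (fun h => hnab h.symm) (hiff_comm hiff)
      (by rw [← Equiv.swap_comm a b]; exact hm') p q r s h1 (by omega) h3 hpb
      (hpr.symm.trans hpb) hqa (hqs.symm.trans hqa)
  · exact hnpq (hpb.trans hqb.symm)

end Descent

/-! ### Goodness along a merge chain -/

lemma chain_good (L : List (Perm (Fin n))) (hL : ∀ τ ∈ L, τ.IsSwap)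
    (hcc : rcount L.prod.SameCycle + L.length = n)
    (hgood : Mono L.prod ∧ NC L.prod) :
    ∀ m, m ≤ L.length → Mono ((L.take m).prod) ∧ NC ((L.take m).prod) := by
  suffices H : ∀ j m, m + j = L.length → Mono ((L.take m).prod) ∧ NC ((L.take m).prod) by
    intro m hm
    exact H (L.length - m) m (by omega)
  intro j
  induction j with
  | zero =>
    intro m hm
    rw [(by omega : m = L.length), List.take_of_length_le (le_refl _)]
    exact hgood
  | succ j ih =>
    intro m hm
    have hmlt : m < L.length := by omega
    rcases hL (L.get ⟨m, hmlt⟩) (List.get_mem L ⟨m, hmlt⟩) with ⟨a, b, hab, hτ⟩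
    obtain ⟨hnab, hiff⟩ := chain_merge L hL hcc m hmlt hτ
    have hnext := ih (m+1) (by omega)
    have hget : L[m] = Equiv.swap a b := hτ
    have hprod : (L.take (m+1)).prod = (L.take m).prod * Equiv.swap a b := by
      rw [List.prod_take_succ L m hmlt, hget]
    rw [hprod] at hnext
    have hiff' : ∀ x y, (((L.take m).prod) * Equiv.swap a b).SameCycle x y ↔
        mrel ((L.take m).prod) a b x y := by
      intro x y
      rw [← hprod]
      exact hiff x y
    exact ⟨mono_step hab hnab hiff' hnext.1,
      nc_step hab hnab hiff' hnext.1 hnext.2⟩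

/-! ### Tracking minima of nontrivial classes -/

lemma minFun_unique {r : Fin n → Fin n → Prop} (hr : Equivalence r) {x w : Fin n}
    (h1 : r x w) (h2 : ∀ y, r x y → w ≤ y) : minFun r hr x = w := by
  refine le_antisymm (minFun_le hr h1) (h2 _ (minFun_rel hr x))

lemma min_track (L : List (Perm (Fin n))) (hL : ∀ τ ∈ L, τ.IsSwap)
    (hcc : rcount L.prod.SameCycle + L.length = n)
    (k0 : ℕ) (hk0 : k0 ≤ L.length) (i j : ℕ → Fin n)
    (hij : ∀ m, m < k0 → (i m).val < (j m).val)
    (hswap : ∀ (m : ℕ) (hm : m < k0), L.get ⟨m, by omega⟩ = Equiv.swap (i m) (j m)) :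
    ∀ m, m ≤ k0 → ∀ x : Fin n, ((L.take m).prod) x ≠ x →
      ∃ t, t < m ∧ minFun _ (sc_equiv ((L.take m).prod)) x = i t := by
  intro m
  induction m with
  | zero =>
    intro _ x hx
    simp at hx
  | succ m ih =>
    intro hm x hx
    have hmk : m < k0 := by omega
    have hmlt : m < L.length := by omega
    set σ := (L.take m).prod with hσdef
    obtain ⟨hnab, hiff⟩ := chain_merge L hL hcc m hmlt (hswap m hmk)
    have hget : L[m] = Equiv.swap (i m) (j m) := hswap m hmk
    have hprod : (L.take (m+1)).prod = σ * Equiv.swap (i m) (j m) := by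
      rw [List.prod_take_succ L m hmlt, hget, hσdef]
    set a := i m with hadef
    set b := j m with hbdef
    set hsc := sc_equiv σ
    set hsc' := sc_equiv ((L.take (m+1)).prod)
    by_cases hxAB : σ.SameCycle x a ∨ σ.SameCycle x b
    · -- x lies in the merged class
      set ga := minFun σ.SameCycle hsc a with hgadef
      set gb := minFun σ.SameCycle hsc b with hgbdef
      have hgaa : σ.SameCycle a ga := minFun_rel hsc a
      have hgbb : σ.SameCycle b gb := minFun_rel hsc b
      have hgale : ga ≤ a := minFun_le hsc (hsc.refl a)
      have hgble : gb ≤ b := minFun_le hsc (hsc.refl b)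
      set μ := min ga gb with hμdef
      have hμAB : σ.SameCycle μ a ∨ σ.SameCycle μ b := by
        rcases min_choice ga gb with h | h <;> rw [hμdef, h]
        · exact Or.inl hgaa.symm
        · exact Or.inr hgbb.symm
      have hmin : minFun _ hsc' x = μ := by
        apply minFun_unique
        · exact (hiff x μ).2 (Or.inr ⟨hxAB, hμAB⟩)
        · intro y hy
          rcases (hiff x y).1 hy with h | ⟨-, hyAB⟩
          · -- y is in the same σ-class as x, hence in class of a or of b
            rcases hxAB with hxa | hxb
            · have : σ.SameCycle a y := hxa.symm.trans h
              calc μ ≤ ga := min_le_left _ _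
              _ ≤ y := minFun_le hsc this
            · have : σ.SameCycle b y := hxb.symm.trans h
              calc μ ≤ gb := min_le_right _ _
              _ ≤ y := minFun_le hsc this
          · rcases hyAB with hya | hyb
            · calc μ ≤ ga := min_le_left _ _
              _ ≤ y := minFun_le hsc hya.symm
            · calc μ ≤ gb := min_le_right _ _
              _ ≤ y := minFun_le hsc hyb.symm
      -- identify μ as some i t
      have hga_i : ∃ t, t < m + 1 ∧ ga = i t := by
        by_cases htriv : σ a = a
        · refine ⟨m, by omega, ?_⟩
          rw [hgadef]
          apply minFun_unique
          · exact hsc.refl a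
          · intro y hy
            rw [fixed_class hy htriv]
        · rcases ih (by omega) a htriv with ⟨t, ht, hteq⟩
          exact ⟨t, by omega, hteq ▸ rfl⟩
      by_cases hbtriv : σ b = b
      · -- class of b is trivial: gb = b > a ≥ ga so μ = ga
        have hgb_b : gb = b := by
          rw [hgbdef]
          apply minFun_unique
          · exact hsc.refl b
          · intro y hy
            rw [fixed_class hy hbtriv]
        have hμga : μ = ga := by
          rw [hμdef]
          apply min_eq_left
          rw [hgb_b]
          have := hij m hmk
          have h1 : (ga : ℕ) ≤ (a : ℕ) := hgale
          exact le_of_lt (lt_of_le_of_lt (by exact_mod_cast h1) (by exact_mod_cast this))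
        rcases hga_i with ⟨t, ht, hteq⟩
        exact ⟨t, ht, by rw [hmin, hμga, hteq]⟩
      · rcases ih (by omega) b hbtriv with ⟨t', ht', hteq'⟩
        rcases min_choice ga gb with h | h
        · rcases hga_i with ⟨t, ht, hteq⟩
          exact ⟨t, ht, by rw [hmin, hμdef, h, hteq]⟩
        · exact ⟨t', by omega, by rw [hmin, hμdef, h, ← hteq']⟩
    · -- untouched class
      push_neg at hxAB
      obtain ⟨hxa, hxb⟩ := hxAB
      have hxa' : x ≠ a := fun h => hxa (h ▸ hsc.refl x)
      have hxb' : x ≠ b := fun h => hxb (h ▸ hsc.refl x)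
      have happ : (L.take (m+1)).prod x = σ x := by
        rw [hprod]
        exact swap_prod_apply_other σ hxa' hxb'
      have hσx : σ x ≠ x := by
        rw [happ] at hx
        exact hx
      rcases ih (by omega) x hσx with ⟨t, ht, hteq⟩
      refine ⟨t, by omega, ?_⟩
      rw [← hteq]
      apply minFun_unique
      · exact (hiff x _).2 (Or.inl (minFun_rel hsc x))
      · intro y hy
        rcases (hiff x y).1 hy with h | ⟨h1 | h1, -⟩
        · exact minFun_le hsc h
        · exact absurd h1 hxa
        · exact absurd h1 hxb
        
lemma rcount_finRotate (m : ℕ) : rcount (finRotate (m+1)).SameCycle = 1 := by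
  have hms : mset ((finRotate (m+1)).SameCycle) = {0} := by
    ext z
    rw [mem_mset, Finset.mem_singleton]
    constructor
    · intro h
      exact Fin.le_zero_iff.1 (h 0 (sameCycle_finRotate z 0))
    · rintro rfl
      intro y _
      exact Fin.zero_le y
  rw [rcount, hms, Finset.card_singleton]

end Stmt6

/-- ℓ(σ): the number of cycles (orbits) of σ, including fixed points, counted via the
minimal representative of each orbit. -/
noncomputable def cycleCount {n : ℕ} (σ : Equiv.Perm (Fin n)) : ℕ :=
  Set.ncard {x : Fin n | ∀ y, σ.SameCycle x y → x ≤ y}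

/-- |σ| := n − ℓ(σ). -/
noncomputable def normPerm {n : ℕ} (σ : Equiv.Perm (Fin n)) : ℕ := n - cycleCount σ

/-- σ₁ ≼ σ₂ iff |σ₂| = |σ₁| + |σ₁⁻¹σ₂|. -/
def precLe {n : ℕ} (σ₁ σ₂ : Equiv.Perm (Fin n)) : Prop :=
  normPerm σ₂ = normPerm σ₁ + normPerm (σ₁⁻¹ * σ₂)

/-- Σ_n(k): tuples of k transpositions with |τ₁⋯τ_k| = k and τ₁⋯τ_k ≼ (1 … n). -/
def SigmaSet (n k : ℕ) : Set (Fin k → Equiv.Perm (Fin n)) :=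
  {τ | (∀ l, (τ l).IsSwap) ∧ normPerm (List.ofFn τ).prod = k ∧
      precLe (List.ofFn τ).prod (finRotate n)}

/-- γ_m := τ₁∘⋯∘τ_m, the product of the first m entries of the chain. -/
def gammaP {n k : ℕ} (τ : Fin k → Equiv.Perm (Fin n)) (m : ℕ) : Equiv.Perm (Fin n) :=
  ((List.ofFn τ).take m).prod

open Equiv Equiv.Perm Stmt6

/-- If γ = ((i₁ j₁),…,(i_k j_k)) ∈ Σ_n(k), l ∈ {1,…,k} and i_l + 1 ∉ {i₁,…,i_{l−1}}, then
i_l + 1 is a fixed point of γ_{l−1}. -/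
theorem stmt6 (n k : ℕ) (i j : Fin k → Fin n) (hij : ∀ l, i l < j l)
    (hγ : (fun l => Equiv.swap (i l) (j l)) ∈ SigmaSet n k) (l : Fin k)
    (hnot : ∀ m : Fin k, m < l → (i m : ℕ) ≠ (i l : ℕ) + 1)
    (x : Fin n) (hx : (x : ℕ) = (i l : ℕ) + 1) :
    gammaP (fun m => Equiv.swap (i m) (j m)) (l : ℕ) x = x := by
  classical
  obtain ⟨hswaps, hnorm, hprec⟩ := hγ
  have hn1 : 1 ≤ n := Fin.pos x
  obtain ⟨n', rfl⟩ : ∃ n', n = n' + 1 := ⟨n - 1, by omega⟩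
  set τf : Fin k → Equiv.Perm (Fin (n'+1)) := fun m => Equiv.swap (i m) (j m) with hτfdef
  have hccdef : ∀ σ : Perm (Fin (n'+1)), normPerm σ = (n'+1) - rcount σ.SameCycle := by
    intro σ
    unfold normPerm cycleCount
    rw [cycleCount_eq_rcount]
  set γk := (List.ofFn τf).prod with hγkdef
  have hLswap : ∀ τ ∈ List.ofFn τf, τ.IsSwap := by
    intro τ hτ
    rw [List.mem_ofFn] at hτ
    rcases hτ with ⟨l', rfl⟩
    exact ⟨i l', j l', Fin.ne_of_lt (hij l'), rfl⟩
  have hlen : (List.ofFn τf).length = k := List.length_ofFn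
  have hγkle : rcount γk.SameCycle ≤ n' + 1 := rcount_le_card _
  have hγkcc : rcount γk.SameCycle + k = n' + 1 := by
    have h2 : (n'+1) - rcount γk.SameCycle = k := by
      rw [← hccdef]; exact hnorm
    have h3 : n' + 1 ≤ rcount γk.SameCycle + k := by
      have h4 := chain_lower (List.ofFn τf) hLswap k
      rwa [List.take_of_length_le (by rw [hlen])] at h4
    omega
  -- data from ≼ c
  have hrotcc : rcount (finRotate (n'+1)).SameCycle = 1 := rcount_finRotate n'
  unfold precLe at hprec
  rw [hccdef, hccdef, hccdef, hrotcc] at hprec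
  have hVle : rcount (γk⁻¹ * finRotate (n'+1)).SameCycle ≤ n' + 1 := rcount_le_card _
  have hkn : k ≤ n' := by omega
  have hVcc : n' + 1 = rcount (γk⁻¹ * finRotate (n'+1)).SameCycle + (n' - k) := by omega
  obtain ⟨L2, hL2swap, hL2len, hL2prod⟩ :=
    exists_swap_factorization (n' - k) (γk⁻¹ * finRotate (n'+1)) hVcc
  set Lf := List.ofFn τf ++ L2 with hLfdef
  have hLfswap : ∀ τ ∈ Lf, τ.IsSwap := by
    intro τ hτ
    rcases List.mem_append.1 hτ with h | h
    · exact hLswap τ h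
    · exact hL2swap τ h
  have hLflen : Lf.length = n' := by
    rw [hLfdef, List.length_append, hlen, hL2len]; omega
  have hLfprod : Lf.prod = finRotate (n'+1) := by
    rw [hLfdef, List.prod_append, hL2prod, ← hγkdef, mul_inv_cancel_left]
  have hLfcc : rcount Lf.prod.SameCycle + Lf.length = n' + 1 := by
    rw [hLfprod, hrotcc, hLflen]
    omega
  -- prefixes agree
  have htake : ∀ m, m ≤ k → Lf.take m = (List.ofFn τf).take m := by
    intro m hm
    rw [hLfdef]
    exact List.take_append_of_le_length (by rw [hlen]; exact hm)
  -- entries of the chain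
  have hgetm : ∀ (m : ℕ) (hm : m < k),
      Lf.get ⟨m, by omega⟩ = Equiv.swap (i ⟨m, hm⟩) (j ⟨m, hm⟩) := by
    intro m hm
    have hmo : m < (List.ofFn τf).length := by rw [hlen]; exact hm
    calc Lf.get ⟨m, by omega⟩ = Lf[m]'(by omega) := rfl
    _ = (List.ofFn τf)[m]'hmo := List.getElem_append_left hmo
    _ = τf ⟨m, by simpa using hmo⟩ := List.getElem_ofFn hmo
    _ = Equiv.swap (i ⟨m, hm⟩) (j ⟨m, hm⟩) := rfl
  -- goodness of all prefixes
  have hgood := chain_good Lf hLfswap hLfcc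
    (by rw [hLfprod]; exact ⟨mono_finRotate, nc_finRotate⟩)
  have hlk : (l : ℕ) < k := l.isLt
  have hlenlt : (l : ℕ) < Lf.length := by omega
  have hgetl : Lf.get ⟨(l : ℕ), hlenlt⟩ = Equiv.swap (i l) (j l) := hgetm (l : ℕ) hlk
  obtain ⟨hnab, hiff⟩ := chain_merge Lf hLfswap hLfcc (l : ℕ) hlenlt hgetl
  set σ := (Lf.take (l : ℕ)).prod with hσdef
  set σp := (Lf.take ((l : ℕ) + 1)).prod with hσpdef
  have hσgamma : gammaP τf (l : ℕ) = σ := by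
    rw [gammaP, hσdef, htake (l : ℕ) (le_of_lt hlk)]
  have hσp : σp = σ * Equiv.swap (i l) (j l) := by
    have h := List.prod_take_succ Lf (l : ℕ) hlenlt
    have h2 : Lf[(l : ℕ)] = Equiv.swap (i l) (j l) := hgetl
    rw [h2] at h
    exact h
  have hgoodp := hgood ((l : ℕ) + 1) (by omega)
  have hmonop : Mono σp := hgoodp.1
  have hncp : NC σp := hgoodp.2
  have hmonoσ : Mono σ := (hgood (l : ℕ) (by omega)).1
  set hsc := sc_equiv σ with hscdef
  -- min tracking
  set I' : ℕ → Fin (n'+1) := fun m => if h : m < k then i ⟨m, h⟩ else x with hI'def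
  set J' : ℕ → Fin (n'+1) := fun m => if h : m < k then j ⟨m, h⟩ else x with hJ'def
  have hIJ : ∀ m, m < k → (I' m).val < (J' m).val := by
    intro m hm
    rw [hI'def, hJ'def]
    simp only [dif_pos hm]
    exact hij ⟨m, hm⟩
  have hswapsIJ : ∀ (m : ℕ) (hm : m < k), Lf.get ⟨m, by omega⟩ = Equiv.swap (I' m) (J' m) := by
    intro m hm
    rw [hI'def, hJ'def]
    simp only [dif_pos hm]
    exact hgetm m hm
  -- begin the main argument
  rw [hσgamma]
  by_contra hσx
  obtain ⟨t, ht, hteq⟩ := min_track Lf hLfswap hLfcc k (by omega) I' J' hIJ hswapsIJ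
    (l : ℕ) (le_of_lt hlk) x hσx
  set am := I' t with hamdef
  have hteq2 : minFun σ.SameCycle hsc x = am := hteq
  have htk : t < k := by omega
  have hamval : am = i ⟨t, htk⟩ := by rw [hamdef, hI'def]; simp only [dif_pos htk]
  have ham_sc : σ.SameCycle x am := by
    have h := minFun_rel hsc x
    rwa [hteq2] at h
  have ham_le : (am : ℕ) ≤ (x : ℕ) := by
    have h := minFun_le hsc (hsc.refl x)
    rw [hteq2] at h
    exact h
  have hamne : (am : ℕ) ≠ (x : ℕ) := by
    rw [hamval, hx]
    exact hnot ⟨t, htk⟩ (by rw [Fin.lt_def]; exact ht)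
  have hamlt : (am : ℕ) < (x : ℕ) := lt_of_le_of_ne ham_le hamne
  have habv : ((i l : Fin (n'+1)) : ℕ) < ((j l : Fin (n'+1)) : ℕ) := hij l
  have hxnea : x ≠ i l := by
    intro h
    rw [h] at hx
    omega
  by_cases hxa : σ.SameCycle x (i l)
  · -- x in the class of i l : then σp (i l) = x = σ (j l), so i l ~ j l, contradiction
    have h1 : σp.SameCycle (i l) x := (hiff (i l) x).2 (Or.inr ⟨Or.inl (hsc.refl _), Or.inl hxa⟩)
    have hfixp : σp (i l) ≠ i l := fun h => hxnea (fixed_class h1 h)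
    have hmono_ax := hmonop (i l) x h1 hxnea hfixp
    have hdxa : (x - i l).val = 1 := by
      rw [dv_eq_of_le (by omega)]; omega
    have hppos : 0 < (σp (i l) - i l).val := dv_pos hfixp
    have hpa_eq : σp (i l) = x := dv_inj (by omega : (σp (i l) - i l).val = (x - i l).val)
    have hσb : σ (j l) = x := by
      rw [← hpa_eq, hσp, swap_prod_apply_left]
    have hbx : σ.SameCycle (j l) x := by
      rw [← hσb]
      exact sameCycle_apply_right.2 (hsc.refl (j l))
    exact hnab (hxa.symm.trans hbx.symm)
  by_cases hxb : σ.SameCycle x (j l)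
  · -- x in the class of j l
    have h1 : σp.SameCycle (i l) x := (hiff (i l) x).2 (Or.inr ⟨Or.inl (hsc.refl _), Or.inr hxb⟩)
    have hfixp : σp (i l) ≠ i l := fun h => hxnea (fixed_class h1 h)
    have hmono_ax := hmonop (i l) x h1 hxnea hfixp
    have hdxa : (x - i l).val = 1 := by
      rw [dv_eq_of_le (by omega)]; omega
    have hppos : 0 < (σp (i l) - i l).val := dv_pos hfixp
    have hpa_eq : σp (i l) = x := dv_inj (by omega : (σp (i l) - i l).val = (x - i l).val)
    have hσb : σ (j l) = x := by
      rw [← hpa_eq, hσp, swap_prod_apply_left]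
    by_cases hbxeq : j l = x
    · rw [hbxeq] at hσb
      exact hσx hσb
    · have hbgt : (x : ℕ) < ((j l : Fin (n'+1)) : ℕ) := by
        have hne : ((j l : Fin (n'+1)) : ℕ) ≠ (x : ℕ) := fun h => hbxeq (Fin.ext h)
        omega
      have hscbam : σ.SameCycle (j l) am := hxb.symm.trans ham_sc
      have hamneb : am ≠ j l := by
        intro h
        rw [h] at hamlt
        omega
      have hfixb : σ (j l) ≠ j l := by
        rw [hσb]
        exact fun h => hbxeq h.symm
      have hmm := hmonoσ (j l) am hscbam hamneb hfixb
      rw [hσb, dv_eq_of_gt hbgt, dv_eq_of_gt (by omega : (am : ℕ) < ((j l : Fin (n'+1)) : ℕ))] at hmm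
      have hxlt := x.isLt
      omega
  · -- untouched class : noncrossing contradiction
    have hpx : σp.SameCycle am x := (hiff am x).2 (Or.inl ham_sc.symm)
    have hab' : σp.SameCycle (i l) (j l) :=
      (hiff (i l) (j l)).2 (Or.inr ⟨Or.inl (hsc.refl _), Or.inr (hsc.refl _)⟩)
    have hamnea : am ≠ i l := by
      intro h
      exact hxa (ham_sc.trans (h ▸ hsc.refl am))
    have hamlta : (am : ℕ) < ((i l : Fin (n'+1)) : ℕ) := by
      have hne : (am : ℕ) ≠ ((i l : Fin (n'+1)) : ℕ) := fun h => hamnea (Fin.ext h)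
      omega
    have hxltb : (x : ℕ) < ((j l : Fin (n'+1)) : ℕ) := by
      have hne : (x : ℕ) ≠ ((j l : Fin (n'+1)) : ℕ) := by
        intro h
        exact hxb ((Fin.ext h : x = j l) ▸ hsc.refl x)
      omega
    have hcross := hncp am (i l) x (j l) hamlta (by omega) hxltb hpx hab'
    rcases (hiff am (i l)).1 hcross with h | ⟨h1 | h1, -⟩
    · exact hxa (ham_sc.trans h)
    · exact hxa (ham_sc.trans h1)
    · exact hxb (ham_sc.trans h1)
end

section
/- Let n ≥ 2 and let γ = ((i₁ j₁),…,(i_{n−1} j_{n−1})) ∈ Σ_n(n−1), i.e. a minimal factorisation of the n-cycle c into n−1 transpositions. Let l ∈ {1,…,n−1} be such that i_l = max{i₁,…,i_{n−1}} and l = max{s ∈ {1,…,n−1} : i_s = i_l}. Then j_l = i_l + 1. -/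
namespace Stmt7Aux

set_option linter.unusedSectionVars false
set_option linter.unusedVariables false

open Equiv Equiv.Perm

section Generic
variable {α : Type*} [Fintype α] [DecidableEq α] {σ : Perm α} {a b x y : α}

lemma sc_nat (h : σ.SameCycle x y) : ∃ k : ℕ, (σ ^ k) x = y := by
  obtain ⟨k, _, hk⟩ := h.exists_pow_eq'
  exact ⟨k, hk⟩

lemma mem_of_mapsTo {S : Set α} (hS : ∀ z ∈ S, σ z ∈ S)
    (hx : x ∈ S) (h : σ.SameCycle x y) : y ∈ S := by
  obtain ⟨k, rfl⟩ := sc_nat h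
  clear h
  induction k with
  | zero => simpa
  | succ k ih =>
      rw [pow_succ', Equiv.Perm.mul_apply]
      exact hS _ ih

lemma sc_mul_swap_untouched (hxa : ¬ σ.SameCycle x a) (hxb : ¬ σ.SameCycle x b) :
    ∀ k : ℕ, ((σ * Equiv.swap a b) ^ k) x = (σ ^ k) x := by
  intro k
  induction k with
  | zero => simp
  | succ k ih =>
      rw [pow_succ', pow_succ', Equiv.Perm.mul_apply, Equiv.Perm.mul_apply, ih]
      have h1 : (σ ^ k) x ≠ a := fun e => hxa ⟨k, by rw [zpow_natCast, e]⟩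
      have h2 : (σ ^ k) x ≠ b := fun e => hxb ⟨k, by rw [zpow_natCast, e]⟩
      rw [Equiv.Perm.mul_apply, Equiv.swap_apply_of_ne_of_ne h1 h2]

/-- after merging two distinct cycles with a transposition, `a` and `b` are in the
same cycle of the product. -/
lemma sameCycle_mul_swap_self (hab : a ≠ b) (h : ¬ σ.SameCycle a b) :
    (σ * Equiv.swap a b).SameCycle a b := by
  classical
  have hex : ∃ k : ℕ, 0 < k ∧ (σ ^ k) b = b :=
    ⟨orderOf σ, orderOf_pos σ, by rw [pow_orderOf_eq_one]; rfl⟩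
  set q := Nat.find hex with hqdef
  obtain ⟨hq0, hqb⟩ : 0 < q ∧ (σ ^ q) b = b := Nat.find_spec hex
  have key : ∀ k, 1 ≤ k → k ≤ q → ((σ * Equiv.swap a b) ^ k) a = (σ ^ k) b := by
    intro k
    induction k with
    | zero => omega
    | succ k ih =>
        intro _ hk1
        rcases Nat.eq_zero_or_pos k with rfl | hk
        · simp [Equiv.Perm.mul_apply]
        · have ihk := ih hk (by omega)
          have hne_b : (σ ^ k) b ≠ b := by
            intro e
            have := Nat.find_min hex (m := k) (by omega)
            exact this ⟨hk, e⟩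
          have hne_a : (σ ^ k) b ≠ a := by
            intro e
            exact h (Equiv.Perm.SameCycle.symm ⟨k, by rw [zpow_natCast, e]⟩)
          rw [pow_succ', Equiv.Perm.mul_apply, ihk, pow_succ', Equiv.Perm.mul_apply,
            Equiv.Perm.mul_apply, Equiv.swap_apply_of_ne_of_ne hne_a hne_b]
  exact ⟨q, by rw [zpow_natCast, key q hq0 le_rfl, hqb]⟩

/-- cutting a cycle with a transposition inside it separates `a` from `b`. -/
lemma not_sameCycle_mul_swap_self (hab : a ≠ b) (h : σ.SameCycle a b) :
    ¬ (σ * Equiv.swap a b).SameCycle a b := by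
  classical
  have hexp : ∃ k : ℕ, 0 < k ∧ (σ ^ k) b = a := by
    obtain ⟨k, hk⟩ := sc_nat h.symm
    refine ⟨k, ?_, hk⟩
    rcases Nat.eq_zero_or_pos k with rfl | hk0
    · simp at hk; exact absurd hk.symm hab
    · exact hk0
  have hexq : ∃ k : ℕ, 0 < k ∧ (σ ^ k) b = b :=
    ⟨orderOf σ, orderOf_pos σ, by rw [pow_orderOf_eq_one]; rfl⟩
  set p := Nat.find hexp with hpdef
  set q := Nat.find hexq with hqdef
  obtain ⟨hp0, hpa⟩ : 0 < p ∧ (σ ^ p) b = a := Nat.find_spec hexp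
  obtain ⟨hq0, hqb⟩ : 0 < q ∧ (σ ^ q) b = b := Nat.find_spec hexq
  have hpq : p < q := by
    by_contra hge
    push_neg at hge
    rcases Nat.eq_or_lt_of_le hge with heq | hlt
    · rw [heq] at hqb; rw [hqb] at hpa; exact hab hpa.symm
    · have : (σ ^ (p - q)) b = a := by
        have : (σ ^ ((p - q) + q)) b = a := by rw [show p - q + q = p by omega, hpa]
        rwa [pow_add, Equiv.Perm.mul_apply, hqb] at this
      have hpos : 0 < p - q := by omega
      have := Nat.find_min hexp (m := p - q) (by omega)
      exact this ⟨hpos, ‹(σ ^ (p - q)) b = a›⟩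
  have key : ∀ k, 1 ≤ k → k ≤ p → ((σ * Equiv.swap a b) ^ k) a = (σ ^ k) b := by
    intro k
    induction k with
    | zero => omega
    | succ k ih =>
        intro _ hk1
        rcases Nat.eq_zero_or_pos k with rfl | hk
        · simp [Equiv.Perm.mul_apply]
        · have ihk := ih hk (by omega)
          have hne_b : (σ ^ k) b ≠ b := by
            intro e
            have := Nat.find_min hexq (m := k) (by omega)
            exact this ⟨hk, e⟩
          have hne_a : (σ ^ k) b ≠ a := by
            intro e
            have := Nat.find_min hexp (m := k) (by omega)
            exact this ⟨hk, e⟩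
          rw [pow_succ', Equiv.Perm.mul_apply, ihk, pow_succ', Equiv.Perm.mul_apply,
            Equiv.Perm.mul_apply, Equiv.swap_apply_of_ne_of_ne hne_a hne_b]
  have hper : ((σ * Equiv.swap a b) ^ p) a = a := by
    rw [key p hp0 le_rfl, hpa]
  intro hcon
  obtain ⟨k, hk⟩ := sc_nat hcon
  have hmod : ((σ * Equiv.swap a b) ^ (k % p)) a = b := by
    have h2 : ((σ * Equiv.swap a b) ^ (k % p + p * (k / p))) a = b := by
      rw [Nat.mod_add_div, hk]
    rw [pow_add, Equiv.Perm.mul_apply, pow_mul,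
      Equiv.Perm.pow_apply_eq_self_of_apply_eq_self hper] at h2
    exact h2
  rcases Nat.eq_zero_or_pos (k % p) with he | hpos
  · rw [he] at hmod; simp at hmod; exact hab hmod
  · have hlt : k % p < p := Nat.mod_lt _ hp0
    have : (σ ^ (k % p)) b = b := by rw [← key _ hpos (le_of_lt hlt), hmod]
    have := Nat.find_min hexq (m := k % p) (by omega)
    exact this ⟨hpos, ‹_›⟩


lemma sc_orbit_a (hab : a ≠ b) (h : ¬ σ.SameCycle a b) :
    ∀ k : ℕ, (σ * Equiv.swap a b).SameCycle a ((σ ^ k) a) := by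
  intro k
  induction k with
  | zero => simpa using Equiv.Perm.SameCycle.refl _ a
  | succ k ih =>
      have hz : σ.SameCycle a ((σ ^ k) a) := ⟨k, by rw [zpow_natCast]⟩
      have hzb : (σ ^ k) a ≠ b := fun e => h (e ▸ hz)
      rw [pow_succ', Equiv.Perm.mul_apply]
      by_cases hza : (σ ^ k) a = a
      · rw [hza]
        have : σ a = (σ * Equiv.swap a b) b := by
          rw [Equiv.Perm.mul_apply, Equiv.swap_apply_right]
        rw [this]
        exact (sameCycle_mul_swap_self hab h).trans
          (Equiv.Perm.sameCycle_apply_right.mpr (Equiv.Perm.SameCycle.refl _ b))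
      · have : σ ((σ ^ k) a) = (σ * Equiv.swap a b) ((σ ^ k) a) := by
          rw [Equiv.Perm.mul_apply, Equiv.swap_apply_of_ne_of_ne hza hzb]
        rw [this]
        exact ih.trans (Equiv.Perm.sameCycle_apply_right.mpr (Equiv.Perm.SameCycle.refl _ _))

lemma sc_orbit_b (hab : a ≠ b) (h : ¬ σ.SameCycle a b) :
    ∀ k : ℕ, (σ * Equiv.swap a b).SameCycle b ((σ ^ k) b) := by
  intro k
  induction k with
  | zero => simpa using Equiv.Perm.SameCycle.refl _ b
  | succ k ih =>
      have hz : σ.SameCycle b ((σ ^ k) b) := ⟨k, by rw [zpow_natCast]⟩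
      have hza : (σ ^ k) b ≠ a := fun e => h (Equiv.Perm.SameCycle.symm (e ▸ hz))
      rw [pow_succ', Equiv.Perm.mul_apply]
      by_cases hzb : (σ ^ k) b = b
      · rw [hzb]
        have : σ b = (σ * Equiv.swap a b) a := by
          rw [Equiv.Perm.mul_apply, Equiv.swap_apply_left]
        rw [this]
        exact (sameCycle_mul_swap_self hab h).symm.trans
          (Equiv.Perm.sameCycle_apply_right.mpr (Equiv.Perm.SameCycle.refl _ a))
      · have : σ ((σ ^ k) b) = (σ * Equiv.swap a b) ((σ ^ k) b) := by
          rw [Equiv.Perm.mul_apply, Equiv.swap_apply_of_ne_of_ne hza hzb]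
        rw [this]
        exact ih.trans (Equiv.Perm.sameCycle_apply_right.mpr (Equiv.Perm.SameCycle.refl _ _))

lemma sc_mono (hab : a ≠ b) (h : ¬ σ.SameCycle a b)
    (hxy : σ.SameCycle x y) : (σ * Equiv.swap a b).SameCycle x y := by
  by_cases hxa : σ.SameCycle a x
  · have hay : σ.SameCycle a y := hxa.trans hxy
    obtain ⟨k, hk⟩ := sc_nat hxa
    obtain ⟨k', hk'⟩ := sc_nat hay
    have h1 := sc_orbit_a hab h k
    have h2 := sc_orbit_a hab h k'
    rw [hk] at h1; rw [hk'] at h2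
    exact h1.symm.trans h2
  · by_cases hxb : σ.SameCycle b x
    · have hby : σ.SameCycle b y := hxb.trans hxy
      obtain ⟨k, hk⟩ := sc_nat hxb
      obtain ⟨k', hk'⟩ := sc_nat hby
      have h1 := sc_orbit_b hab h k
      have h2 := sc_orbit_b hab h k'
      rw [hk] at h1; rw [hk'] at h2
      exact h1.symm.trans h2
    · obtain ⟨k, hk⟩ := sc_nat hxy
      refine ⟨k, ?_⟩
      rw [zpow_natCast, sc_mul_swap_untouched (fun e => hxa e.symm) (fun e => hxb e.symm), hk]

lemma sameCycle_mul_swap_iff (hab : a ≠ b) (h : ¬ σ.SameCycle a b) :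
    (σ * Equiv.swap a b).SameCycle x y ↔
      σ.SameCycle x y ∨ (σ.SameCycle x a ∧ σ.SameCycle b y) ∨
        (σ.SameCycle x b ∧ σ.SameCycle a y) := by
  constructor
  · intro hxy
    have hmaps : ∀ z ∈ {z | σ.SameCycle a z ∨ σ.SameCycle b z},
        (σ * Equiv.swap a b) z ∈ {z | σ.SameCycle a z ∨ σ.SameCycle b z} := by
      rintro z (hz | hz)
      · by_cases hza : z = a
        · subst hza
          right
          rw [Equiv.Perm.mul_apply, Equiv.swap_apply_left]
          exact Equiv.Perm.sameCycle_apply_right.mpr (Equiv.Perm.SameCycle.refl _ b)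
        · have hzb : z ≠ b := fun e => h (e ▸ hz)
          left
          rw [Equiv.Perm.mul_apply, Equiv.swap_apply_of_ne_of_ne hza hzb]
          exact Equiv.Perm.sameCycle_apply_right.mpr hz
      · by_cases hzb : z = b
        · subst hzb
          left
          rw [Equiv.Perm.mul_apply, Equiv.swap_apply_right]
          exact Equiv.Perm.sameCycle_apply_right.mpr (Equiv.Perm.SameCycle.refl _ a)
        · have hza : z ≠ a := fun e => h (Equiv.Perm.SameCycle.symm (e ▸ hz))
          right
          rw [Equiv.Perm.mul_apply, Equiv.swap_apply_of_ne_of_ne hza hzb]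
          exact Equiv.Perm.sameCycle_apply_right.mpr hz
    by_cases hxa : σ.SameCycle a x
    · have hyS := mem_of_mapsTo hmaps (Or.inl hxa) hxy
      rcases hyS with hy | hy
      · exact Or.inl (hxa.symm.trans hy)
      · exact Or.inr (Or.inl ⟨hxa.symm, hy⟩)
    · by_cases hxb : σ.SameCycle b x
      · have hyS := mem_of_mapsTo hmaps (Or.inr hxb) hxy
        rcases hyS with hy | hy
        · exact Or.inr (Or.inr ⟨hxb.symm, hy⟩)
        · exact Or.inl (hxb.symm.trans hy)
      · obtain ⟨k, hk⟩ := sc_nat hxy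
        rw [sc_mul_swap_untouched (fun e => hxa e.symm) (fun e => hxb e.symm)] at hk
        exact Or.inl ⟨k, by rw [zpow_natCast, hk]⟩
  · rintro (h1 | ⟨h1, h2⟩ | ⟨h1, h2⟩)
    · exact sc_mono hab h h1
    · exact ((sc_mono hab h h1).trans (sameCycle_mul_swap_self hab h)).trans (sc_mono hab h h2)
    · exact ((sc_mono hab h h1).trans (sameCycle_mul_swap_self hab h).symm).trans (sc_mono hab h h2)


end Generic

/-- every cycle is increasing: within a cycle, σ maps each point to the smallest
larger point of its cycle, and the largest point to the smallest. -/
def Inc {n : ℕ} (σ : Perm (Fin n)) : Prop :=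
  ∀ x y, σ.SameCycle x y → ((x < y → x < σ x ∧ σ x ≤ y) ∧ (σ x ≤ x → σ x ≤ y))

/-- cycles are noncrossing. -/
def NC {n : ℕ} (σ : Perm (Fin n)) : Prop :=
  ∀ a x b y, σ.SameCycle a b → σ.SameCycle x y → a < x → x < b → b < y →
    σ.SameCycle a x



section FinN
variable {n : ℕ} {σ : Equiv.Perm (Fin n)} {a b : Fin n}

lemma Mset_eq (hab : a ≠ b) (h : ¬ σ.SameCycle a b) {u w : Fin n}
    (hua : σ.SameCycle a u) (hwb : σ.SameCycle b w)
    (hu : ∀ z, σ.SameCycle a z → u ≤ z) (hw : ∀ z, σ.SameCycle b z → w ≤ z)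
    (huw : u ≤ w) :
    {x : Fin n | ∀ y, σ.SameCycle x y → x ≤ y} =
      insert w {x : Fin n | ∀ y, (σ * Equiv.swap a b).SameCycle x y → x ≤ y} := by
  ext x
  simp only [Set.mem_setOf_eq, Set.mem_insert_iff]
  constructor
  · intro hx
    by_cases hxa : σ.SameCycle a x
    · -- x is the minimal representative of the cycle of a, so x = u
      have hxu : x = u := le_antisymm (hx u (hxa.symm.trans hua)) (hu x hxa)
      subst hxu
      right
      intro y hy
      rcases (sameCycle_mul_swap_iff hab h).mp hy with h1 | ⟨h1, h2⟩ | ⟨h1, h2⟩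
      · exact hx y h1
      · exact le_trans huw (hw y h2)
      · exact absurd (hxa.trans h1) h
    · by_cases hxb : σ.SameCycle b x
      · have hxw : x = w := le_antisymm (hx w (hxb.symm.trans hwb)) (hw x hxb)
        exact Or.inl hxw
      · right
        intro y hy
        rcases (sameCycle_mul_swap_iff hab h).mp hy with h1 | ⟨h1, h2⟩ | ⟨h1, h2⟩
        · exact hx y h1
        · exact absurd h1.symm hxa
        · exact absurd h1.symm hxb
  · rintro (rfl | hx)
    · intro y hy
      exact hw y (hwb.trans hy)
    · intro y hy
      exact hx y (sc_mono hab h hy)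

lemma w_not_mem (hab : a ≠ b) (h : ¬ σ.SameCycle a b) {u w : Fin n}
    (hua : σ.SameCycle a u) (hwb : σ.SameCycle b w)
    (hu : ∀ z, σ.SameCycle a z → u ≤ z) (huw : u ≤ w) :
    w ∉ {x : Fin n | ∀ y, (σ * Equiv.swap a b).SameCycle x y → x ≤ y} := by
  intro hmem
  have hne : u ≠ w := fun e => h (hua.trans (e ▸ hwb).symm)
  have hwu : (σ * Equiv.swap a b).SameCycle w u :=
    ((sc_mono hab h hwb).symm.trans (sameCycle_mul_swap_self hab h).symm).trans
      (sc_mono hab h hua)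
  exact absurd (hmem u hwu) (not_le.mpr (lt_of_le_of_ne huw hne))

lemma cycleCount_mul_swap (hab : a ≠ b) (h : ¬ σ.SameCycle a b) :
    cycleCount (σ * Equiv.swap a b) + 1 = cycleCount σ := by
  obtain ⟨u, hua, hu⟩ := Set.exists_min_image {z | σ.SameCycle a z} id (Set.toFinite _)
    ⟨a, Equiv.Perm.SameCycle.refl _ a⟩
  obtain ⟨w, hwb, hw⟩ := Set.exists_min_image {z | σ.SameCycle b z} id (Set.toFinite _)
    ⟨b, Equiv.Perm.SameCycle.refl _ b⟩
  simp only [Set.mem_setOf_eq, id] at hua hwb hu hw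
  rcases le_total u w with hle | hle
  · rw [cycleCount, cycleCount, Mset_eq hab h hua hwb hu hw hle,
      Set.ncard_insert_of_notMem (w_not_mem hab h hua hwb hu hle) (Set.toFinite _)]
  · have h' : ¬ σ.SameCycle b a := fun e => h e.symm
    have hsw : Equiv.swap a b = Equiv.swap b a := Equiv.swap_comm a b
    rw [cycleCount, cycleCount, hsw, Mset_eq hab.symm h' hwb hua hw hu hle,
      Set.ncard_insert_of_notMem (w_not_mem hab.symm h' hwb hua hw hle) (Set.toFinite _)]

lemma cycleCount_mul_swap_of_sameCycle (hab : a ≠ b) (h : σ.SameCycle a b) :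
    cycleCount (σ * Equiv.swap a b) = cycleCount σ + 1 := by
  have h2 := not_sameCycle_mul_swap_self hab h
  have h3 := cycleCount_mul_swap (σ := σ * Equiv.swap a b) hab h2
  rw [mul_assoc, Equiv.swap_mul_self, mul_one] at h3
  omega

lemma cycleCount_one : cycleCount (1 : Perm (Fin n)) = n := by
  have hs : {x : Fin n | ∀ y, (1 : Perm (Fin n)).SameCycle x y → x ≤ y} = Set.univ := by
    ext x
    simp only [Set.mem_setOf_eq, Set.mem_univ, iff_true]
    intro y hy
    rw [Equiv.Perm.sameCycle_one] at hy
    exact hy ▸ le_refl x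
  rw [cycleCount, hs, Set.ncard_univ, Nat.card_eq_fintype_card, Fintype.card_fin]

lemma cycleCount_le_card : cycleCount σ ≤ n := by
  have := Set.ncard_le_ncard (Set.subset_univ
    {x : Fin n | ∀ y, σ.SameCycle x y → x ≤ y}) (Set.toFinite _)
  rwa [Set.ncard_univ, Nat.card_eq_fintype_card, Fintype.card_fin] at this

lemma eq_one_of_cycleCount (h : cycleCount σ = n) : σ = 1 := by
  have huniv : {x : Fin n | ∀ y, σ.SameCycle x y → x ≤ y} = Set.univ := by
    apply Set.eq_of_subset_of_ncard_le (Set.subset_univ _)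
    · rw [Set.ncard_univ, Nat.card_eq_fintype_card, Fintype.card_fin]
      rw [cycleCount] at h
      omega
  have hle : ∀ x : Fin n, x ≤ σ x := by
    intro x
    have hx : x ∈ {x : Fin n | ∀ y, σ.SameCycle x y → x ≤ y} := huniv ▸ Set.mem_univ x
    exact hx (σ x) (Equiv.Perm.sameCycle_apply_right.mpr (Equiv.Perm.SameCycle.refl _ x))
  have hsum : ∑ x : Fin n, ((σ x : ℕ)) = ∑ x : Fin n, (x : ℕ) :=
    Equiv.sum_comp σ (fun x => (x : ℕ))
  have heq : ∀ x : Fin n, (x : ℕ) = (σ x : ℕ) := by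
    by_contra hne
    push_neg at hne
    obtain ⟨x0, hx0⟩ := hne
    have hlt : (x0 : ℕ) < (σ x0 : ℕ) := lt_of_le_of_ne (hle x0) hx0
    have : ∑ x : Fin n, (x : ℕ) < ∑ x : Fin n, ((σ x : ℕ)) :=
      Finset.sum_lt_sum (fun i _ => hle i) ⟨x0, Finset.mem_univ x0, hlt⟩
    omega
  ext x
  exact (heq x).symm

lemma sameCycle_finRotate (hn : 2 ≤ n) (x y : Fin n) : (finRotate n).SameCycle x y := by
  have hc := isCycle_finRotate_of_le hn
  obtain ⟨x0, hx0, hall⟩ := hc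
  have hmove : ∀ z : Fin n, finRotate n z ≠ z := by
    intro z
    obtain ⟨m, rfl⟩ : ∃ m, n = m + 2 := ⟨n - 2, by omega⟩
    rw [finRotate_succ_apply]
    intro e
    have hv := congrArg Fin.val e
    rw [Fin.val_add_one] at hv
    by_cases hz : z = Fin.last (m+1)
    · rw [if_pos hz, hz] at hv
      simp [Fin.last] at hv
    · rw [if_neg hz] at hv
      omega
  exact (hall (hmove x)).symm.trans (hall (hmove y))

lemma cycleCount_finRotate (hn : 2 ≤ n) : cycleCount (finRotate n) = 1 := by
  have h0 : (0 : ℕ) < n := by omega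
  have hs : {x : Fin n | ∀ y, (finRotate n).SameCycle x y → x ≤ y} = {⟨0, h0⟩} := by
    ext x
    simp only [Set.mem_setOf_eq, Set.mem_singleton_iff]
    constructor
    · intro hx
      have := hx ⟨0, h0⟩ (sameCycle_finRotate hn _ _)
      exact le_antisymm this (Fin.mk_le_of_le_val (Nat.zero_le _))
    · rintro rfl y hy
      exact Fin.mk_le_of_le_val (Nat.zero_le _)
  rw [cycleCount, hs, Set.ncard_singleton]


lemma inc_finRotate (hn : 2 ≤ n) : Inc (finRotate n) := by
  obtain ⟨m, rfl⟩ : ∃ m, n = m + 2 := ⟨n - 2, by omega⟩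
  intro x y hxy
  rw [finRotate_succ_apply]
  have hvx := Fin.val_add_one x
  constructor
  · intro hlt
    have hxlast : x ≠ Fin.last (m+1) := by
      intro e
      have := Fin.le_last y
      rw [Fin.lt_def, e] at hlt
      rw [Fin.le_def] at this
      simp [Fin.last] at hlt this
      omega
    rw [if_neg hxlast] at hvx
    constructor
    · rw [Fin.lt_def, hvx]; omega
    · rw [Fin.le_def, hvx]; rw [Fin.lt_def] at hlt; omega
  · intro hle
    by_cases hxlast : x = Fin.last (m+1)
    · rw [if_pos hxlast] at hvx
      rw [Fin.le_def, hvx]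
      omega
    · rw [if_neg hxlast] at hvx
      rw [Fin.le_def, hvx] at hle
      omega

lemma nc_finRotate (hn : 2 ≤ n) : NC (finRotate n) := by
  intro a x b y _ _ _ _ _
  exact sameCycle_finRotate hn a x

/-- splitting description: if Inc holds after the merge, the two original cycles
are the parts of the merged cycle inside / outside the interval (a, b]. -/
lemma split_char (hab : a < b) (h : ¬ σ.SameCycle a b)
    (hinc : Inc (σ * Equiv.swap a b)) :
    (∀ z, σ.SameCycle a z ↔
      ((σ * Equiv.swap a b).SameCycle a z ∧ ¬ (a < z ∧ z ≤ b))) ∧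
    (∀ z, σ.SameCycle b z ↔
      ((σ * Equiv.swap a b).SameCycle a z ∧ (a < z ∧ z ≤ b))) := by
  have habne : a ≠ b := ne_of_lt hab
  set σ' := σ * Equiv.swap a b with hσ'
  have e_ab : σ'.SameCycle a b := sameCycle_mul_swap_self habne h
  have hσ'a : σ' a = σ b := by rw [hσ', Equiv.Perm.mul_apply, Equiv.swap_apply_left]
  have hσ'b : σ' b = σ a := by rw [hσ', Equiv.Perm.mul_apply, Equiv.swap_apply_right]
  -- bounds of σ' a
  obtain ⟨haa, hab2⟩ : a < σ' a ∧ σ' a ≤ b := (hinc a b e_ab).1 hab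
  -- B' is σ-invariant
  have hmapsB : ∀ z ∈ {z | σ'.SameCycle a z ∧ a < z ∧ z ≤ b},
      σ z ∈ {z | σ'.SameCycle a z ∧ a < z ∧ z ≤ b} := by
    rintro z ⟨hz, hza, hzb⟩
    by_cases hzb' : z = b
    · subst hzb'
      refine ⟨?_, ?_, ?_⟩
      · rw [← hσ'a]
        exact Equiv.Perm.sameCycle_apply_right.mpr (Equiv.Perm.SameCycle.refl _ a)
      · rw [← hσ'a]; exact haa
      · rw [← hσ'a]; exact hab2
    · have hzab : z ≠ a := ne_of_gt hza
      have hσz : σ z = σ' z := by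
        rw [hσ', Equiv.Perm.mul_apply, Equiv.swap_apply_of_ne_of_ne hzab hzb']
      have hzcb : σ'.SameCycle z b := hz.symm.trans e_ab
      obtain ⟨h1, h2⟩ := (hinc z b hzcb).1 (lt_of_le_of_ne hzb hzb')
      refine ⟨?_, ?_, ?_⟩
      · rw [hσz]
        exact hz.trans (Equiv.Perm.sameCycle_apply_right.mpr (Equiv.Perm.SameCycle.refl _ z))
      · rw [hσz]; exact lt_trans hza h1
      · rw [hσz]; exact h2
  -- A' is σ-invariant
  have hmapsA : ∀ z ∈ {z | σ'.SameCycle a z ∧ ¬ (a < z ∧ z ≤ b)},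
      σ z ∈ {z | σ'.SameCycle a z ∧ ¬ (a < z ∧ z ≤ b)} := by
    rintro z ⟨hz, hzi⟩
    by_cases hza : z = a
    · rw [hza, ← hσ'b]
      have hmem : σ'.SameCycle a (σ' b) :=
        e_ab.trans (Equiv.Perm.sameCycle_apply_right.mpr (Equiv.Perm.SameCycle.refl _ b))
      refine ⟨hmem, ?_⟩
      by_cases hle : σ' b ≤ b
      · have := (hinc b a e_ab.symm).2 hle
        intro hcon
        exact absurd hcon.1 (not_lt.mpr this)
      · intro hcon
        exact hle hcon.2
    · have hzb : z ≠ b := by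
        intro e
        subst e
        exact hzi ⟨hab, le_refl z⟩
      have hσz : σ z = σ' z := by
        rw [hσ', Equiv.Perm.mul_apply, Equiv.swap_apply_of_ne_of_ne hza hzb]
      have hmem : σ'.SameCycle a (σ' z) :=
        hz.trans (Equiv.Perm.sameCycle_apply_right.mpr (Equiv.Perm.SameCycle.refl _ z))
      refine ⟨by rw [hσz]; exact hmem, ?_⟩
      rw [hσz]
      rcases not_and_or.mp hzi with hz1 | hz2
      · -- z ≤ a, and z ≠ a so z < a
        have hzlta : z < a := lt_of_le_of_ne (not_lt.mp hz1) hza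
        obtain ⟨h1, h2⟩ := (hinc z a hz.symm).1 hzlta
        intro hcon
        exact absurd hcon.1 (not_lt.mpr h2)
      · -- b < z
        have hbz : b < z := lt_of_not_ge hz2
        by_cases hle : σ' z ≤ z
        · have := (hinc z a hz.symm).2 hle
          intro hcon
          exact absurd hcon.1 (not_lt.mpr this)
        · intro hcon
          exact hle (le_trans hcon.2 (le_of_lt hbz))
  -- membership transfer
  have hAsub : ∀ z, σ.SameCycle a z → (σ'.SameCycle a z ∧ ¬ (a < z ∧ z ≤ b)) := by
    intro z hz
    exact mem_of_mapsTo (S := {z | σ'.SameCycle a z ∧ ¬ (a < z ∧ z ≤ b)}) hmapsA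
      ⟨Equiv.Perm.SameCycle.refl _ a, fun hcon => lt_irrefl a hcon.1⟩ hz
  have hBsub : ∀ z, σ.SameCycle b z → (σ'.SameCycle a z ∧ (a < z ∧ z ≤ b)) := by
    intro z hz
    have := mem_of_mapsTo (S := {z | σ'.SameCycle a z ∧ a < z ∧ z ≤ b}) hmapsB
      ⟨e_ab, hab, le_refl b⟩ hz
    exact ⟨this.1, this.2⟩
  constructor
  · intro z
    constructor
    · exact hAsub z
    · rintro ⟨hz, hzi⟩
      rcases (sameCycle_mul_swap_iff habne h).mp hz with h1 | ⟨h1, h2⟩ | ⟨h1, h2⟩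
      · exact h1
      · exact absurd (hBsub z h2).2 hzi
      · exact absurd h1 h
  · intro z
    constructor
    · exact hBsub z
    · rintro ⟨hz, hzi⟩
      rcases (sameCycle_mul_swap_iff habne h).mp hz with h1 | ⟨h1, h2⟩ | ⟨h1, h2⟩
      · exact absurd hzi (hAsub z h1).2
      · exact h2
      · exact absurd h1 h


lemma inc_step (hab : a < b) (h : ¬ σ.SameCycle a b)
    (hinc : Inc (σ * Equiv.swap a b)) : Inc σ := by
  have habne : a ≠ b := ne_of_lt hab
  set σ' := σ * Equiv.swap a b with hσ'
  have e_ab : σ'.SameCycle a b := sameCycle_mul_swap_self habne h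
  have hσ'a : σ' a = σ b := by rw [hσ', Equiv.Perm.mul_apply, Equiv.swap_apply_left]
  have hσ'b : σ' b = σ a := by rw [hσ', Equiv.Perm.mul_apply, Equiv.swap_apply_right]
  obtain ⟨hSA, hSB⟩ := split_char hab h hinc
  intro x y hxy
  by_cases hxa : x = a
  · -- x = a ; y is in the cycle A of a
    have hy := (hSA y).mp (hxa ▸ hxy)
    obtain ⟨hEy, hyA⟩ := hy
    have hby' : σ'.SameCycle b y := e_ab.symm.trans hEy
    constructor
    · intro hlt
      -- a < y hence b < y
      have hxlt : a < y := hxa ▸ hlt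
      have hblt : b < y := by
        rcases not_and_or.mp hyA with h1 | h2
        · exact absurd hxlt h1
        · exact lt_of_not_ge h2
      by_cases hb : σ' b ≤ b
      · exact absurd ((hinc b y hby').1 hblt).1 (not_lt.mpr hb)
      · obtain ⟨h1, h2⟩ := (hinc b y hby').1 hblt
        rw [hxa, ← hσ'b]
        exact ⟨lt_trans hab h1, h2⟩
    · intro hle
      rw [hxa] at hle ⊢
      rw [← hσ'b] at hle ⊢
      have hb : σ' b ≤ b := le_trans hle (le_of_lt hab)
      exact (hinc b y hby').2 hb
  · by_cases hxb : x = b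
    · -- x = b ; y in cycle B ⊆ (a, b]
      have hy := (hSB y).mp (hxb ▸ hxy)
      obtain ⟨hEy, hya, hyb⟩ := hy
      obtain ⟨ha1, ha2⟩ := (hinc a b e_ab).1 hab
      constructor
      · intro hlt
        rw [hxb] at hlt
        exact absurd hyb (not_le.mpr hlt)
      · intro hle
        rw [hxb, ← hσ'a]
        by_cases hcmp : σ' a ≤ y
        · exact hcmp
        · exfalso
          have hylt : y < σ' a := lt_of_not_ge hcmp
          obtain ⟨hb1, hb2⟩ := (hinc a y hEy).1 hya
          exact absurd hb2 (not_le.mpr hylt)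
    · -- x ∉ {a, b}
      have hσx : σ x = σ' x := by
        rw [hσ', Equiv.Perm.mul_apply, Equiv.swap_apply_of_ne_of_ne hxa hxb]
      have hxy' : σ'.SameCycle x y := sc_mono habne h hxy
      rw [hσx]
      exact hinc x y hxy'

lemma nc_step (hab : a < b) (h : ¬ σ.SameCycle a b)
    (hinc : Inc (σ * Equiv.swap a b)) (hnc : NC (σ * Equiv.swap a b)) : NC σ := by
  have habne : a ≠ b := ne_of_lt hab
  obtain ⟨hSA, hSB⟩ := split_char hab h hinc
  intro p q r s hpr hqs hpq hqr hrs
  have hpr' := sc_mono habne h hpr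
  have hqs' := sc_mono habne h hqs
  have hpq' := hnc p q r s hpr' hqs' hpq hqr hrs
  rcases (sameCycle_mul_swap_iff habne h).mp hpq' with h1 | ⟨h1, h2⟩ | ⟨h1, h2⟩
  · exact h1
  · -- p ~ a , q ~ b : crossing pattern is impossible
    exfalso
    have hra : σ.SameCycle a r := h1.symm.trans hpr
    have hrA := (hSA r).mp hra
    have hqB := (hSB q).mp h2
    have hsB := (hSB s).mp (h2.trans hqs)
    -- a < q < r < s ≤ b contradicts r ∉ (a, b]
    exact hrA.2 ⟨lt_trans hqB.2.1 hqr, le_trans (le_of_lt hrs) hsB.2.2⟩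
  · exfalso
    have hpB := (hSB p).mp h1.symm
    have hqA := (hSA q).mp h2
    have hrB := (hSB r).mp (h1.symm.trans hpr)
    -- a < p < q and q < r ≤ b contradicts q ∉ (a, b]
    exact hqA.2 ⟨lt_trans hpB.2.1 hpq, le_trans (le_of_lt hqr) hrB.2.2⟩

end FinN
end Stmt7Aux

open Stmt7Aux

/-- In a minimal factorisation γ = ((i₁ j₁),…,(i_{n−1} j_{n−1})) ∈ Σ_n(n−1) of the n-cycle,
at the last occurrence l of the largest i one has j_l = i_l + 1. -/
theorem stmt7 (n : ℕ) (hn : 2 ≤ n) (i j : Fin (n - 1) → Fin n) (hij : ∀ l, i l < j l)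
    (hγ : (fun l => Equiv.swap (i l) (j l)) ∈ SigmaSet n (n - 1))
    (l : Fin (n - 1)) (hmax : ∀ s, i s ≤ i l) (hlast : ∀ s, i s = i l → s ≤ l) :
    (j l : ℕ) = (i l : ℕ) + 1 := by
  classical
  obtain ⟨hsw, hnorm, hprec⟩ := hγ
  set τ : Fin (n-1) → Equiv.Perm (Fin n) := fun s => Equiv.swap (i s) (j s) with hτ
  -- the product is the full rotation
  have hccP : cycleCount (List.ofFn τ).prod = 1 := by
    have h2 : cycleCount (List.ofFn τ).prod ≤ n := cycleCount_le_card
    unfold normPerm at hnorm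
    omega
  have hPc : (List.ofFn τ).prod = finRotate n := by
    unfold precLe normPerm at hprec
    rw [hccP, cycleCount_finRotate hn] at hprec
    have h3 : cycleCount ((List.ofFn τ).prod⁻¹ * finRotate n) ≤ n := cycleCount_le_card
    have h4 : (List.ofFn τ).prod⁻¹ * finRotate n = 1 :=
      eq_one_of_cycleCount (by omega)
    calc (List.ofFn τ).prod = (List.ofFn τ).prod * ((List.ofFn τ).prod⁻¹ * finRotate n) := by
          rw [h4, mul_one]
      _ = finRotate n := by rw [← mul_assoc, mul_inv_cancel, one_mul]
  set g : ℕ → Equiv.Perm (Fin n) := fun s => ((List.ofFn τ).take s).prod with hg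
  have hlen : (List.ofFn τ).length = n - 1 := List.length_ofFn
  have hstep : ∀ s (hs : s < n - 1), g (s+1) = g s * Equiv.swap (i ⟨s, hs⟩) (j ⟨s, hs⟩) := by
    intro s hs
    have hs' : s < (List.ofFn τ).length := by rw [hlen]; exact hs
    show ((List.ofFn τ).take (s+1)).prod = _
    rw [List.prod_take_succ _ s hs']
    congr 1
    simp [hτ]
  have hg0 : g 0 = 1 := by simp [hg]
  have hgend : g (n-1) = finRotate n := by
    rw [hg]
    simp only
    rw [List.take_of_length_le (le_of_eq hlen), hPc]
  have swap_ne : ∀ s : Fin (n-1), i s ≠ j s := fun s => ne_of_lt (hij s)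
  -- cycle counts of the partial products
  have ccUB : ∀ s, s ≤ n-1 → n ≤ cycleCount (g s) + s := by
    intro s
    induction s with
    | zero => intro _; rw [hg0, cycleCount_one]; omega
    | succ s ih =>
        intro hs
        have hs' : s < n - 1 := by omega
        have h1 := ih (by omega)
        rw [hstep s hs']
        by_cases hsc : (g s).SameCycle (i ⟨s,hs'⟩) (j ⟨s,hs'⟩)
        · rw [cycleCount_mul_swap_of_sameCycle (swap_ne _) hsc]; omega
        · have := cycleCount_mul_swap (swap_ne _) hsc; omega
  have ccLB : ∀ k s, s + k = n - 1 → cycleCount (g s) ≤ 1 + k := by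
    intro k
    induction k with
    | zero =>
        intro s hs
        have : s = n-1 := by omega
        rw [this, hgend, cycleCount_finRotate hn]
    | succ k ih =>
        intro s hs
        have hs' : s < n-1 := by omega
        have h2 := ih (s+1) (by omega)
        rw [hstep s hs'] at h2
        by_cases hsc : (g s).SameCycle (i ⟨s,hs'⟩) (j ⟨s,hs'⟩)
        · rw [cycleCount_mul_swap_of_sameCycle (swap_ne _) hsc] at h2; omega
        · have := cycleCount_mul_swap (swap_ne _) hsc; omega
  have ccEq : ∀ s, s ≤ n-1 → cycleCount (g s) = n - s := by
    intro s hs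
    have h1 := ccUB s hs
    have h2 := ccLB (n-1-s) s (by omega)
    omega
  have hmerge : ∀ s (hs : s < n-1), ¬ (g s).SameCycle (i ⟨s,hs⟩) (j ⟨s,hs⟩) := by
    intro s hs hsc
    have h1 := ccEq s (by omega)
    have h2 := ccEq (s+1) (by omega)
    rw [hstep s hs, cycleCount_mul_swap_of_sameCycle (swap_ne _) hsc, h1] at h2
    omega
  -- monotonicity of SameCycle along the chain
  have hmono1 : ∀ t (ht : t < n-1) (x y : Fin n),
      (g t).SameCycle x y → (g (t+1)).SameCycle x y := by
    intro t ht x y hsc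
    rw [hstep t ht]
    exact sc_mono (swap_ne _) (hmerge t ht) hsc
  have hmonoAux : ∀ d s (x y : Fin n), s + d ≤ n-1 → (g s).SameCycle x y →
      (g (s+d)).SameCycle x y := by
    intro d
    induction d with
    | zero => intro s x y _ h; exact h
    | succ d ih =>
        intro s x y hsd h
        have h1 := ih s x y (by omega) h
        have h2 := hmono1 (s+d) (by omega) x y h1
        have he : s + (d+1) = (s+d)+1 := by omega
        rw [he]
        exact h2
  have hmono : ∀ s t (x y : Fin n), s ≤ t → t ≤ n-1 → (g s).SameCycle x y →
      (g t).SameCycle x y := by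
    intro s t x y hst htn h
    have := hmonoAux (t - s) s x y (by omega) h
    rwa [show s + (t - s) = t by omega] at this
  -- Inc and NC for all partial products
  have hincnc : ∀ k s, s + k = n-1 → Inc (g s) ∧ NC (g s) := by
    intro k
    induction k with
    | zero =>
        intro s hs
        have hseq : s = n-1 := by omega
        rw [hseq, hgend]
        exact ⟨inc_finRotate hn, nc_finRotate hn⟩
    | succ k ih =>
        intro s hs
        have hs' : s < n-1 := by omega
        have h1 := ih (s+1) (by omega)
        rw [hstep s hs'] at h1
        exact ⟨inc_step (hij _) (hmerge s hs') h1.1,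
          nc_step (hij _) (hmerge s hs') h1.1 h1.2⟩
  -- every non-singleton cycle of a partial product contains an element ≤ i l
  have hsmall : ∀ s, s ≤ n-1 → ∀ x y : Fin n, (g s).SameCycle x y → x ≠ y →
      ∃ z, (g s).SameCycle x z ∧ z ≤ i l := by
    intro s
    induction s with
    | zero =>
        intro _ x y hsc hne
        rw [hg0] at hsc
        exact absurd (Equiv.Perm.sameCycle_one.mp hsc) hne
    | succ s ih =>
        intro hs x y hsc hne
        have hs' : s < n-1 := by omega
        rw [hstep s hs'] at hsc ⊢
        rcases (sameCycle_mul_swap_iff (swap_ne _) (hmerge s hs')).mp hsc with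
          h1 | ⟨h1, h2⟩ | ⟨h1, h2⟩
        · obtain ⟨z, hz1, hz2⟩ := ih (by omega) x y h1 hne
          exact ⟨z, sc_mono (swap_ne _) (hmerge s hs') hz1, hz2⟩
        · exact ⟨i ⟨s,hs'⟩, sc_mono (swap_ne _) (hmerge s hs') h1, hmax _⟩
        · exact ⟨i ⟨s,hs'⟩,
            (sc_mono (swap_ne _) (hmerge s hs') h1).trans
              (sameCycle_mul_swap_self (swap_ne _) (hmerge s hs')).symm, hmax _⟩
  -- setting up the final argument
  set m : Fin n := i l with hm
  have hmval : (m:ℕ) < (j l : ℕ) := hij l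
  have hm1lt : (m:ℕ) + 1 < n := by have := (j l).isLt; omega
  set m1 : Fin n := ⟨(m:ℕ)+1, hm1lt⟩ with hm1
  have hmm1 : m < m1 := by rw [Fin.lt_def]; simp [hm1]
  have hmm1ne : m ≠ m1 := ne_of_lt hmm1
  by_contra hcon
  have hjl2 : (m:ℕ) + 2 ≤ (j l : ℕ) := by omega
  have hm1jl : m1 < j l := by rw [Fin.lt_def]; simp [hm1]; omega
  -- first time m and m1 are in the same cycle
  have hex : ∃ s, s ≤ n-1 ∧ (g s).SameCycle m m1 :=
    ⟨n-1, le_refl _, by rw [hgend]; exact sameCycle_finRotate hn m m1⟩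
  set t1 := Nat.find hex with ht1def
  obtain ⟨ht1n, ht1sc⟩ : t1 ≤ n-1 ∧ (g t1).SameCycle m m1 := Nat.find_spec hex
  have ht1pos : 1 ≤ t1 := by
    rcases Nat.eq_zero_or_pos t1 with he | h
    · rw [he, hg0] at ht1sc
      exact absurd (Equiv.Perm.sameCycle_one.mp ht1sc) hmm1ne
    · exact h
  have htmin : ∀ u, u < t1 → ¬ ((g u).SameCycle m m1) := by
    intro u hu hsc
    exact Nat.find_min hex hu ⟨by omega, hsc⟩
  obtain ⟨t, ht⟩ : ∃ t, t1 = t + 1 := ⟨t1 - 1, by omega⟩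
  have htn : t + 1 ≤ n - 1 := by omega
  have htlt : t < n - 1 := by omega
  have hsc_t1 : (g (t+1)).SameCycle m m1 := ht ▸ ht1sc
  have hnsc_t : ¬ (g t).SameCycle m m1 := htmin t (by omega)
  -- the merging step maps m to m1
  have hA : (g (t+1)) m = m1 := by
    have hi := (hincnc (n-1-(t+1)) (t+1) (by omega)).1
    obtain ⟨ha1, ha2⟩ := (hi m m1 hsc_t1).1 hmm1
    rw [Fin.lt_def] at ha1
    rw [Fin.le_def] at ha2
    apply Fin.ext
    simp only [hm1] at ha2 ⊢
    omega
  set lv := (l : ℕ) with hlv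
  have hlvlt : lv < n - 1 := l.isLt
  have hlid : (⟨lv, hlvlt⟩ : Fin (n-1)) = l := by
    apply Fin.ext
    rfl
  have hsteplv : g (lv+1) = g lv * Equiv.swap m (j l) := by
    have := hstep lv hlvlt
    rw [hlid] at this
    exact this
  have hmergelv : ¬ (g lv).SameCycle m (j l) := by
    have := hmerge lv hlvlt
    rw [hlid] at this
    exact this
  -- case analysis on the relative position of t+1 and lv+1
  rcases Nat.lt_trichotomy t lv with hcase | hcase | hcase
  · -- Case 1 : t + 1 ≤ lv, so m ~ m1 already before step l
    have hsc_lv : (g lv).SameCycle m m1 := hmono (t+1) lv m m1 (by omega) (by omega) hsc_t1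
    have hsc_lv1 : (g (lv+1)).SameCycle m m1 :=
      hmono (t+1) (lv+1) m m1 (by omega) (by omega) hsc_t1
    have hinclv := (hincnc (n-1-lv) lv (by omega)).1
    have hinclv1 := (hincnc (n-1-(lv+1)) (lv+1) (by omega)).1
    have e1 : (g lv) m = m1 := by
      obtain ⟨ha1, ha2⟩ := (hinclv m m1 hsc_lv).1 hmm1
      rw [Fin.lt_def] at ha1
      rw [Fin.le_def] at ha2
      apply Fin.ext
      simp only [hm1] at ha2 ⊢
      omega
    have e2 : (g (lv+1)) m = m1 := by
      obtain ⟨ha1, ha2⟩ := (hinclv1 m m1 hsc_lv1).1 hmm1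
      rw [Fin.lt_def] at ha1
      rw [Fin.le_def] at ha2
      apply Fin.ext
      simp only [hm1] at ha2 ⊢
      omega
    have e3 : (g (lv+1)) m = (g lv) (j l) := by
      rw [hsteplv, Equiv.Perm.mul_apply, Equiv.swap_apply_left]
    have : (g lv) (j l) = (g lv) m := by rw [← e3, e2, ← e1]
    have hje : j l = m := (g lv).injective this
    exact absurd (hje ▸ hmval) (lt_irrefl _)
  · -- Case 2 : t = lv, the merging step is step l itself
    have hw : (g t) (j l) = m1 := by
      rw [hcase] at hA
      rw [hsteplv, Equiv.Perm.mul_apply, Equiv.swap_apply_left] at hA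
      rw [hcase]
      exact hA
    have hscjl : (g t).SameCycle (j l) m1 := by
      rw [← hw]
      exact Equiv.Perm.sameCycle_apply_right.mpr (Equiv.Perm.SameCycle.refl _ _)
    have hjlne : j l ≠ m1 := by
      intro e
      apply hcon
      rw [e]
    obtain ⟨z, hz1, hz2⟩ := hsmall t (by omega) (j l) m1 hscjl hjlne
    have hinct := (hincnc (n-1-t) t (by omega)).1
    have hle : (g t) (j l) ≤ j l := by
      rw [hw]
      exact le_of_lt hm1jl
    have hm1z := (hinct (j l) z hz1).2 hle
    rw [hw, Fin.le_def] at hm1z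
    rw [Fin.le_def] at hz2
    simp only [hm1] at hm1z
    omega
  · -- Case 3 : t > lv
    set ti : Fin (n-1) := ⟨t, htlt⟩ with hti
    have hstept : g (t+1) = g t * Equiv.swap (i ti) (j ti) := hstep t htlt
    have hmerget : ¬ (g t).SameCycle (i ti) (j ti) := hmerge t htlt
    have hmi : m ≠ i ti := by
      intro e
      have h1 : i ti = i l := by rw [← e, hm]
      have := hlast ti h1
      rw [Fin.le_def] at this
      simp only [hti] at this
      omega
    -- m must be an endpoint of the step-t transposition, hence m = j ti
    have hAm : m = j ti := by
      by_cases hmj : m = j ti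
      · exact hmj
      · exfalso
        have hfix : Equiv.swap (i ti) (j ti) m = m :=
          Equiv.swap_apply_of_ne_of_ne hmi hmj
        rw [hstept, Equiv.Perm.mul_apply, hfix] at hA
        apply hnsc_t
        rw [← hA]
        exact Equiv.Perm.sameCycle_apply_right.mpr (Equiv.Perm.SameCycle.refl _ _)
    have hw : (g t) (i ti) = m1 := by
      rw [hstept, Equiv.Perm.mul_apply] at hA
      rw [show Equiv.swap (i ti) (j ti) m = i ti by rw [hAm, Equiv.swap_apply_right]] at hA
      exact hA
    have hsca : (g t).SameCycle (i ti) m1 := by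
      rw [← hw]
      exact Equiv.Perm.sameCycle_apply_right.mpr (Equiv.Perm.SameCycle.refl _ _)
    have haim : i ti < m := lt_of_le_of_ne (hmax ti) (fun e => hmi e.symm)
    -- m ~ j l at time t
    have h0 : (g (lv+1)).SameCycle m (j l) := by
      rw [hsteplv]
      exact sameCycle_mul_swap_self (by rw [hm]; exact swap_ne l) hmergelv
    have h1 : (g t).SameCycle m (j l) := hmono (lv+1) t m (j l) (by omega) (by omega) h0
    have hnct := (hincnc (n-1-t) t (by omega)).2
    have hpat := hnct (i ti) m m1 (j l) hsca h1 haim hmm1 hm1jl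
    exact hnsc_t (hpat.symm.trans hsca)
end

section
/- Let γ = ((i₁ j₁),…,(i_k j_k)) ∈ Σ_n(k) and let l, m ∈ {1,…,k} with l < m. If i_l = i_m, then j_l > j_m. -/
open Equiv Equiv.Perm

namespace NCP

variable {n : ℕ}

lemma sc_fixed {σ : Perm (Fin n)} {x y : Fin n} (hfix : σ x = x)
    (h : σ.SameCycle x y) : y = x := by
  obtain ⟨i, hi⟩ := h
  rw [zpow_apply_eq_self_of_apply_eq_self hfix i] at hi
  exact hi.symm

lemma sc_apply_self (σ : Perm (Fin n)) (x : Fin n) : σ.SameCycle x (σ x) :=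
  ⟨1, by simp⟩

lemma sc_pow_self (σ : Perm (Fin n)) (x : Fin n) (i : ℕ) :
    σ.SameCycle x ((σ ^ i) x) := ⟨(i : ℤ), by simp⟩

/-- O1: trichotomy for same-cycle relation after multiplying by a swap. -/
lemma sc_trichotomy {σ : Perm (Fin n)} {a b x y : Fin n}
    (h : (σ * Equiv.swap a b).SameCycle x y) :
    σ.SameCycle x y ∨ (σ.SameCycle x a ∧ σ.SameCycle b y) ∨
      (σ.SameCycle x b ∧ σ.SameCycle a y) := by
  set τ := σ * Equiv.swap a b with hτ
  have ha : σ.SameCycle a (σ a) := sc_apply_self σ a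
  have hb : σ.SameCycle b (σ b) := sc_apply_self σ b
  have key : ∀ i : ℕ,
      σ.SameCycle x ((τ ^ i) x) ∨ (σ.SameCycle x a ∧ σ.SameCycle b ((τ ^ i) x)) ∨
      (σ.SameCycle x b ∧ σ.SameCycle a ((τ ^ i) x)) := by
    intro i
    induction i with
    | zero => exact Or.inl (Equiv.Perm.SameCycle.refl σ x)
    | succ i ih =>
      have hz : (τ ^ (i+1)) x = τ ((τ ^ i) x) := by
        rw [pow_succ', Perm.mul_apply]
      set z := (τ ^ i) x with hzdef
      rw [hz]
      have happ : τ z = σ (Equiv.swap a b z) := rfl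
      rcases eq_or_ne z a with hza | hza
      · rw [happ, hza, Equiv.swap_apply_left]
        rw [hza] at ih
        rcases ih with h1 | ⟨h1, h2⟩ | ⟨h1, h2⟩
        · exact Or.inr (Or.inl ⟨h1, hb⟩)
        · exact Or.inl (h1.trans (h2.symm.trans hb))
        · exact Or.inl (h1.trans hb)
      · rcases eq_or_ne z b with hzb | hzb
        · rw [happ, hzb, Equiv.swap_apply_right]
          rw [hzb] at ih
          rcases ih with h1 | ⟨h1, h2⟩ | ⟨h1, h2⟩
          · exact Or.inr (Or.inr ⟨h1, ha⟩)
          · exact Or.inl (h1.trans ha)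
          · exact Or.inl (h1.trans (h2.symm.trans ha))
        · rw [happ, Equiv.swap_apply_of_ne_of_ne hza hzb]
          rcases ih with h1 | ⟨h1, h2⟩ | ⟨h1, h2⟩
          · exact Or.inl h1.apply_right
          · exact Or.inr (Or.inl ⟨h1, h2.apply_right⟩)
          · exact Or.inr (Or.inr ⟨h1, h2.apply_right⟩)
  obtain ⟨i, -, hi⟩ := h.exists_pow_eq'
  rw [← hi]
  exact key i


/-- merging: if a,b are in different cycles of σ then they are in the same cycle of σ(ab). -/
lemma merge_sc {σ : Perm (Fin n)} {a b : Fin n} (hns : ¬ σ.SameCycle a b) :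
    (σ * Equiv.swap a b).SameCycle a b := by
  set τ := σ * Equiv.swap a b with hτ
  have hP : ∃ i : ℕ, 0 < i ∧ (σ ^ i) b = b := by
    refine ⟨orderOf σ, orderOf_pos σ, ?_⟩
    rw [pow_orderOf_eq_one]; rfl
  classical
  let i₀ := Nat.find hP
  obtain ⟨hi₀pos, hi₀⟩ : 0 < i₀ ∧ (σ ^ i₀) b = b := Nat.find_spec hP
  have hmin : ∀ j, j < i₀ → ¬ (0 < j ∧ (σ ^ j) b = b) := fun j hj => Nat.find_min hP hj
  have key : ∀ j, 1 ≤ j → j ≤ i₀ → (τ ^ j) a = (σ ^ j) b := by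
    intro j h1 h2
    induction j with
    | zero => omega
    | succ j ih =>
      rcases Nat.eq_or_lt_of_le h1 with h1' | h1'
      · -- j + 1 = 1
        have : j = 0 := by omega
        subst this
        rw [pow_one, pow_one]
        show σ (Equiv.swap a b a) = σ b
        rw [Equiv.swap_apply_left]
      · have hj1 : 1 ≤ j := by omega
        have hj2 : j ≤ i₀ := by omega
        have hjlt : j < i₀ := by omega
        have ihv := ih hj1 hj2
        have hzb : (σ ^ j) b ≠ b := fun hc => hmin j hjlt ⟨by omega, hc⟩
        have hza : (σ ^ j) b ≠ a := by
          intro hc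
          exact hns ((sc_pow_self σ b j).symm.symm.trans (hc ▸ Equiv.Perm.SameCycle.refl σ a)).symm
        calc (τ ^ (j+1)) a = τ ((τ ^ j) a) := by rw [pow_succ', Perm.mul_apply]
        _ = σ (Equiv.swap a b ((σ ^ j) b)) := by rw [ihv]; rfl
        _ = σ ((σ ^ j) b) := by rw [Equiv.swap_apply_of_ne_of_ne hza hzb]
        _ = (σ ^ (j+1)) b := by rw [pow_succ', Perm.mul_apply]
  have : (τ ^ i₀) a = b := by rw [key i₀ hi₀pos le_rfl, hi₀]
  exact ⟨(i₀ : ℤ), by simpa using this⟩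

/-- splitting: if a,b are in same cycle of σ then they are in different cycles of σ(ab). -/
lemma split_not_sc {σ : Perm (Fin n)} {a b : Fin n} (hab : a ≠ b) (hs : σ.SameCycle a b) :
    ¬ (σ * Equiv.swap a b).SameCycle a b := by
  classical
  set τ := σ * Equiv.swap a b with hτ
  -- d : least positive with σ^d a = b
  have hD : ∃ i : ℕ, 0 < i ∧ (σ ^ i) a = b := by
    obtain ⟨i, hpos, -, hi⟩ := hs.exists_pow_eq''
    exact ⟨i, hpos, hi⟩
  have hP : ∃ i : ℕ, 0 < i ∧ (σ ^ i) a = a := by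
    refine ⟨orderOf σ, orderOf_pos σ, ?_⟩
    rw [pow_orderOf_eq_one]; rfl
  let d := Nat.find hD
  let p := Nat.find hP
  obtain ⟨hdpos, hd⟩ : 0 < d ∧ (σ ^ d) a = b := Nat.find_spec hD
  obtain ⟨hppos, hp⟩ : 0 < p ∧ (σ ^ p) a = a := Nat.find_spec hP
  have hdmin : ∀ j, j < d → ¬ (0 < j ∧ (σ ^ j) a = b) := fun j hj => Nat.find_min hD hj
  have hpmin : ∀ j, j < p → ¬ (0 < j ∧ (σ ^ j) a = a) := fun j hj => Nat.find_min hP hj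
  have hdp : d < p := by
    rcases lt_or_ge d p with h | h
    · exact h
    · exfalso
      have h1 : (σ ^ (d - p)) a = b := by
        have : (σ ^ (d - p)) ((σ ^ p) a) = (σ ^ d) a := by
          rw [← Perm.mul_apply, ← pow_add]
          congr 2
          omega
        rw [hp, hd] at this; exact this
      have hdppos : 0 < d - p := by
        rcases Nat.eq_or_lt_of_le (Nat.le_of_lt_succ (Nat.lt_succ_of_le h)) with h' | h'
        · exfalso; apply hab; rw [← hd, ← h']; exact hp.symm
        · omega
      exact hdmin (d - p) (by omega) ⟨hdppos, h1⟩
  -- b ∉ S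
  have hbS : ∀ j, d < j → j ≤ p → (σ ^ j) a ≠ b := by
    intro j hj1 hj2 hc
    -- σ^{j-d} b = b, a = σ^{p-d} b, then σ^{j-d} a = a with 0 < j-d < p
    have hb1 : (σ ^ (j - d)) b = b := by
      have : (σ ^ (j - d)) ((σ ^ d) a) = (σ ^ j) a := by
        rw [← Perm.mul_apply, ← pow_add]; congr 2; omega
      rw [hd] at this; rw [this, hc]
    have ha1 : (σ ^ (p - d)) b = a := by
      have : (σ ^ (p - d)) ((σ ^ d) a) = (σ ^ p) a := by
        rw [← Perm.mul_apply, ← pow_add]; congr 2; omega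
      rw [hd, hp] at this; exact this
    have : (σ ^ (j - d)) a = a := by
      rw [← ha1, ← Perm.mul_apply, ← pow_add, Nat.add_comm (j-d) (p-d), pow_add,
        Perm.mul_apply, hb1]
    exact hpmin (j - d) (by omega) ⟨by omega, this⟩
  -- the invariant set S
  intro hcon
  set S : Set (Fin n) := {z | ∃ j, d < j ∧ j ≤ p ∧ (σ ^ j) a = z} with hS
  have haS : a ∈ S := ⟨p, hdp, le_rfl, hp⟩
  have hclosed : ∀ z ∈ S, τ z ∈ S := by
    intro z hz
    obtain ⟨j, hj1, hj2, hjz⟩ := hz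
    have hzb : z ≠ b := by
      intro hc; exact hbS j hj1 hj2 (by rw [hjz, hc])
    rcases eq_or_ne z a with hza | hza
    · -- τ a = σ b = σ^{d+1} a
      have : τ z = (σ ^ (d+1)) a := by
        rw [hza]
        show σ (Equiv.swap a b a) = _
        rw [Equiv.swap_apply_left, ← hd, ← Perm.mul_apply, ← pow_succ']
      exact this ▸ ⟨d+1, by omega, by omega, rfl⟩
    · have hτz : τ z = σ z := by
        show σ (Equiv.swap a b z) = σ z
        rw [Equiv.swap_apply_of_ne_of_ne hza hzb]
      have hjp : j < p := by
        rcases Nat.eq_or_lt_of_le hj2 with h' | h'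
        · exfalso; apply hza; rw [← hjz, h', hp]
        · exact h'
      refine ⟨j+1, by omega, by omega, ?_⟩
      rw [pow_succ', Perm.mul_apply, hjz, hτz]
  have hall : ∀ i : ℕ, (τ ^ i) a ∈ S := by
    intro i
    induction i with
    | zero => exact haS
    | succ i ih =>
      have : (τ ^ (i+1)) a = τ ((τ ^ i) a) := by rw [pow_succ', Perm.mul_apply]
      rw [this]
      exact hclosed _ ih
  obtain ⟨i, -, hi⟩ := hcon.exists_pow_eq'
  obtain ⟨j, hj1, hj2, hjb⟩ := hi ▸ hall i
  exact hbS j hj1 hj2 hjb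


lemma swap_mul_swap_cancel (σ : Perm (Fin n)) (a b : Fin n) :
    (σ * Equiv.swap a b) * Equiv.swap a b = σ := by
  rw [mul_assoc, Equiv.swap_mul_self, mul_one]

/-- in the merge case, same-cycle relation only grows -/
lemma sc_mono_merge {σ : Perm (Fin n)} {a b x y : Fin n} (hns : ¬ σ.SameCycle a b)
    (h : σ.SameCycle x y) : (σ * Equiv.swap a b).SameCycle x y := by
  set τ := σ * Equiv.swap a b with hτ
  have hab : (τ).SameCycle a b := merge_sc hns
  have h' : (τ * Equiv.swap a b).SameCycle x y := by
    rw [swap_mul_swap_cancel]; exact h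
  rcases sc_trichotomy h' with h1 | ⟨h1, h2⟩ | ⟨h1, h2⟩
  · exact h1
  · exact (h1.trans hab).trans h2
  · exact (h1.trans hab.symm).trans h2

/-- in the split case, same-cycle relation only shrinks -/
lemma sc_anti_split {σ : Perm (Fin n)} {a b x y : Fin n} (hs : σ.SameCycle a b)
    (h : (σ * Equiv.swap a b).SameCycle x y) : σ.SameCycle x y := by
  rcases sc_trichotomy h with h1 | ⟨h1, h2⟩ | ⟨h1, h2⟩
  · exact h1
  · exact (h1.trans hs).trans h2
  · exact (h1.trans hs.symm).trans h2

/-- characterization of same-cycle after a merge -/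
lemma sc_merge_iff {σ : Perm (Fin n)} {a b x y : Fin n} (hns : ¬ σ.SameCycle a b) :
    (σ * Equiv.swap a b).SameCycle x y ↔
      σ.SameCycle x y ∨ (σ.SameCycle x a ∧ σ.SameCycle b y) ∨
        (σ.SameCycle x b ∧ σ.SameCycle a y) := by
  constructor
  · exact sc_trichotomy
  · rintro (h1 | ⟨h1, h2⟩ | ⟨h1, h2⟩)
    · exact sc_mono_merge hns h1
    · exact ((sc_mono_merge hns h1).trans (merge_sc hns)).trans (sc_mono_merge hns h2)
    · exact ((sc_mono_merge hns h1).trans (merge_sc hns).symm).trans (sc_mono_merge hns h2)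

def MinSet (σ : Perm (Fin n)) : Set (Fin n) := {x : Fin n | ∀ y, σ.SameCycle x y → x ≤ y}

lemma cycleCount_eq (σ : Perm (Fin n)) : cycleCount σ = (MinSet σ).ncard := rfl

lemma exists_min_rep (σ : Perm (Fin n)) (x : Fin n) :
    ∃ m, σ.SameCycle x m ∧ m ∈ MinSet σ := by
  classical
  have hne : {y | σ.SameCycle x y}.Nonempty := ⟨x, Equiv.Perm.SameCycle.refl σ x⟩
  obtain ⟨m, hm, hmin⟩ := Set.exists_min_image {y | σ.SameCycle x y} id (Set.toFinite _) hne
  refine ⟨m, hm, fun y hy => ?_⟩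
  exact hmin y (hm.trans hy)

lemma min_rep_unique {σ : Perm (Fin n)} {m m' : Fin n} (hm : m ∈ MinSet σ)
    (hm' : m' ∈ MinSet σ) (h : σ.SameCycle m m') : m = m' :=
  le_antisymm (hm m' h) (hm' m h.symm)

lemma minset_merge_aux {σ : Perm (Fin n)} {a b ma mb : Fin n} (hns : ¬ σ.SameCycle a b)
    (hma : σ.SameCycle a ma) (hmaM : ma ∈ MinSet σ)
    (hmb : σ.SameCycle b mb) (hmbM : mb ∈ MinSet σ) (hlt : ma < mb) :
    MinSet (σ * Equiv.swap a b) = MinSet σ \ {mb} := by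
  set τ := σ * Equiv.swap a b with hτ
  ext x
  constructor
  · intro hx
    refine ⟨fun y hy => hx y (sc_mono_merge hns hy), ?_⟩
    intro hc
    rw [Set.mem_singleton_iff] at hc
    subst hc
    have hxma : τ.SameCycle x ma :=
      ((sc_mono_merge hns hmb.symm).trans (merge_sc hns).symm).trans (sc_mono_merge hns hma)
    exact absurd (hx ma hxma) (not_le.mpr hlt)
  · rintro ⟨hxM, hxb⟩
    rw [Set.mem_singleton_iff] at hxb
    intro y hy
    rcases sc_trichotomy hy with h1 | ⟨h1, h2⟩ | ⟨h1, h2⟩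
    · exact hxM y h1
    · -- x ~ a so x = ma ; y ~ b so mb ≤ y
      have hx_eq : x = ma := min_rep_unique hxM hmaM (h1.trans hma)
      have : mb ≤ y := hmbM y (hmb.symm.trans h2)
      exact le_of_lt (lt_of_lt_of_le (hx_eq ▸ hlt) this)
    · exact absurd (min_rep_unique hxM hmbM (h1.trans hmb)) hxb

lemma cycleCount_merge {σ : Perm (Fin n)} {a b : Fin n} (hns : ¬ σ.SameCycle a b) :
    cycleCount (σ * Equiv.swap a b) + 1 = cycleCount σ := by
  obtain ⟨ma, hma, hmaM⟩ := exists_min_rep σ a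
  obtain ⟨mb, hmb, hmbM⟩ := exists_min_rep σ b
  have hne : ma ≠ mb := fun hc =>
    hns (hma.trans (hc ▸ hmb.symm))
  rcases lt_or_gt_of_ne hne with hlt | hlt
  · rw [cycleCount_eq, cycleCount_eq, minset_merge_aux hns hma hmaM hmb hmbM hlt]
    exact Set.ncard_diff_singleton_add_one hmbM (Set.toFinite _)
  · have hns' : ¬ σ.SameCycle b a := fun hc => hns hc.symm
    rw [cycleCount_eq, cycleCount_eq, Equiv.swap_comm,
      minset_merge_aux hns' hmb hmbM hma hmaM hlt]
    exact Set.ncard_diff_singleton_add_one hmaM (Set.toFinite _)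

lemma cycleCount_split {σ : Perm (Fin n)} {a b : Fin n} (hab : a ≠ b)
    (hs : σ.SameCycle a b) :
    cycleCount σ + 1 = cycleCount (σ * Equiv.swap a b) := by
  have h1 : ¬ (σ * Equiv.swap a b).SameCycle a b := split_not_sc hab hs
  have := cycleCount_merge h1
  rwa [swap_mul_swap_cancel] at this


lemma cycleCount_le (σ : Perm (Fin n)) : cycleCount σ ≤ n := by
  rw [cycleCount_eq]
  calc (MinSet σ).ncard ≤ (Set.univ : Set (Fin n)).ncard :=
        Set.ncard_le_ncard (Set.subset_univ _) (Set.toFinite _)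
  _ = n := by rw [Set.ncard_univ]; simp

lemma cycleCount_pos [NeZero n] (σ : Perm (Fin n)) : 0 < cycleCount σ := by
  obtain ⟨m, -, hm⟩ := exists_min_rep σ ⟨0, Nat.pos_of_ne_zero (NeZero.ne n)⟩
  rw [cycleCount_eq]
  exact (Set.ncard_pos (Set.toFinite _)).mpr ⟨m, hm⟩

lemma cycleCount_one : cycleCount (1 : Perm (Fin n)) = n := by
  have : MinSet (1 : Perm (Fin n)) = Set.univ := by
    ext x; simp only [Set.mem_univ, iff_true]
    intro y hy
    rw [Equiv.Perm.sameCycle_one] at hy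
    exact hy ▸ le_rfl
  rw [cycleCount_eq, this, Set.ncard_univ]; simp

lemma normPerm_one : normPerm (1 : Perm (Fin n)) = 0 := by
  rw [normPerm, cycleCount_one, Nat.sub_self]

lemma normPerm_eq_zero {σ : Perm (Fin n)} (h : normPerm σ = 0) : σ = 1 := by
  have hle := cycleCount_le σ
  have hcc : cycleCount σ = n := by rw [normPerm] at h; omega
  have huniv : MinSet σ = Set.univ := by
    apply Set.eq_of_subset_of_ncard_le (Set.subset_univ _)
    rw [Set.ncard_univ]
    simp only [Nat.card_eq_fintype_card, Fintype.card_fin]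
    have h2 := cycleCount_eq σ
    omega
  ext x
  have hx : x ∈ MinSet σ := huniv ▸ Set.mem_univ x
  have hsx : σ x ∈ MinSet σ := huniv ▸ Set.mem_univ (σ x)
  have h1 : x ≤ σ x := hx (σ x) (sc_apply_self σ x)
  have h2 : σ x ≤ x := hsx x (sc_apply_self σ x).symm
  rw [Equiv.Perm.one_apply]
  exact le_antisymm h2 h1

lemma normPerm_mul_swap_not_sc {σ : Perm (Fin n)} {a b : Fin n}
    (hns : ¬ σ.SameCycle a b) : normPerm (σ * Equiv.swap a b) = normPerm σ + 1 := by
  have h := cycleCount_merge hns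
  have h1 := cycleCount_le σ
  have h2 := cycleCount_le (σ * Equiv.swap a b)
  have h3 : 0 < cycleCount (σ * Equiv.swap a b) := by
    have : NeZero n := ⟨fun hc => (hc ▸ a).elim0⟩
    exact cycleCount_pos _
  rw [normPerm, normPerm]; omega

lemma normPerm_mul_swap_sc {σ : Perm (Fin n)} {a b : Fin n} (hab : a ≠ b)
    (hs : σ.SameCycle a b) : normPerm σ = normPerm (σ * Equiv.swap a b) + 1 := by
  have h := cycleCount_split hab hs
  have h2 := cycleCount_le (σ * Equiv.swap a b)
  have h3 : 0 < cycleCount σ := by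
    have : NeZero n := ⟨fun hc => (hc ▸ a).elim0⟩
    exact cycleCount_pos _
  rw [normPerm, normPerm]; omega

lemma normPerm_mul_swap_le (σ : Perm (Fin n)) {a b : Fin n} (hab : a ≠ b) :
    normPerm (σ * Equiv.swap a b) ≤ normPerm σ + 1 := by
  by_cases hs : σ.SameCycle a b
  · rw [normPerm_mul_swap_sc hab hs]; omega
  · rw [normPerm_mul_swap_not_sc hs]

/-- a merge happened iff the norm went up -/
lemma not_sc_of_norm_succ {σ : Perm (Fin n)} {a b : Fin n} (hab : a ≠ b)
    (h : normPerm (σ * Equiv.swap a b) = normPerm σ + 1) : ¬ σ.SameCycle a b := by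
  intro hs
  have := normPerm_mul_swap_sc hab hs
  omega

lemma normPerm_swap {a b : Fin n} (hab : a ≠ b) :
    normPerm (Equiv.swap a b) = 1 := by
  have : ¬ (1 : Perm (Fin n)).SameCycle a b := by
    rw [Equiv.Perm.sameCycle_one]; exact hab
  have h := normPerm_mul_swap_not_sc this
  rwa [one_mul, normPerm_one, zero_add] at h

/-- triangle inequality -/
lemma normPerm_mul_le (σ π : Perm (Fin n)) :
    normPerm (σ * π) ≤ normPerm σ + normPerm π := by
  classical
  obtain ⟨N, hN⟩ : ∃ N, normPerm π ≤ N := ⟨normPerm π, le_rfl⟩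
  induction N generalizing π σ with
  | zero =>
    have : π = 1 := normPerm_eq_zero (by omega)
    subst this
    simp [normPerm_one]
  | succ N ih =>
    by_cases hπ : π = 1
    · subst hπ; simp [normPerm_one]
    · obtain ⟨x, hx⟩ : ∃ x, π x ≠ x := by
        by_contra hc
        push_neg at hc
        exact hπ (Equiv.ext fun x => (hc x).trans rfl)
      have hsc : π.SameCycle x (π x) := sc_apply_self π x
      have hxne : x ≠ π x := fun hc => hx hc.symm
      obtain ⟨c, hc⟩ : ∃ c, π x = c := ⟨π x, rfl⟩
      rw [hc] at hsc hxne
      have hπ' : ∃ π' : Perm (Fin n), π' = π * Equiv.swap x c := ⟨_, rfl⟩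
      obtain ⟨π', hπ'⟩ := hπ'
      have hnorm : normPerm π = normPerm π' + 1 := hπ' ▸ normPerm_mul_swap_sc hxne hsc
      have hππ' : π = π' * Equiv.swap x c := by
        rw [hπ', mul_assoc, Equiv.swap_mul_self, mul_one]
      have h1 : normPerm (σ * π') ≤ normPerm σ + normPerm π' := ih σ π' (by omega)
      calc normPerm (σ * π) = normPerm ((σ * π') * Equiv.swap x c) := by
            rw [mul_assoc, ← hππ']
      _ ≤ normPerm (σ * π') + 1 := normPerm_mul_swap_le _ hxne
      _ ≤ normPerm σ + normPerm π' + 1 := by omega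
      _ = normPerm σ + normPerm π := by omega

lemma normPerm_inv (σ : Perm (Fin n)) : normPerm σ⁻¹ = normPerm σ := by
  have : MinSet σ⁻¹ = MinSet σ := by
    ext x
    simp only [MinSet, Set.mem_setOf_eq]
    exact forall_congr' fun y => by rw [Equiv.Perm.sameCycle_inv]
  rw [normPerm, normPerm]
  show n - (MinSet σ⁻¹).ncard = n - (MinSet σ).ncard
  rw [this]


/-- y lies strictly inside the cyclic arc from x to z (going increasingly, wrapping) -/
def Arc (x z y : Fin n) : Prop := (x < y ∧ y < z) ∨ (z < x ∧ (x < y ∨ y < z))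

/-- all cycles are increasing -/
def INC (σ : Perm (Fin n)) : Prop := ∀ x y, σ.SameCycle x y → ¬ Arc x (σ x) y

lemma arc_not_left {x z : Fin n} : ¬ Arc x z x := by
  simp only [Arc, Fin.lt_def]; omega

lemma arc_not_right {x z : Fin n} : ¬ Arc x z z := by
  simp only [Arc, Fin.lt_def]; omega

lemma arc_cross {u w z z' : Fin n} (h1 : Arc u w z') (h2 : ¬ Arc u w z) (h3 : z ≠ u) :
    Arc z z' u := by
  simp only [Arc, Fin.lt_def] at *
  have := Fin.val_ne_of_ne h3
  omega

/-- walk along a cycle -/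
lemma walk {σ : Perm (Fin n)} {u : Fin n} {S : Set (Fin n)} (hu : u ∈ S)
    (hcl : ∀ z, σ.SameCycle u z → z ∈ S → σ z ∈ S) :
    ∀ y, σ.SameCycle u y → y ∈ S := by
  have key : ∀ i : ℕ, (σ ^ i) u ∈ S := by
    intro i
    induction i with
    | zero => exact hu
    | succ i ih =>
      have h : (σ ^ (i+1)) u = σ ((σ ^ i) u) := by rw [pow_succ', Perm.mul_apply]
      rw [h]
      exact hcl _ ⟨(i : ℤ), by simp⟩ ih
  intro y hy
  obtain ⟨i, -, hi⟩ := hy.exists_pow_eq'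
  exact hi ▸ key i

lemma claimA {σ' : Perm (Fin n)} {u v : Fin n} (huv : u ≠ v) (hsc' : σ'.SameCycle u v)
    (hinc : INC σ') :
    ∀ y, (σ' * Equiv.swap u v).SameCycle u y → ¬ Arc u (σ' v) y := by
  set σ := σ' * Equiv.swap u v with hσ
  have hns : ¬ σ.SameCycle u v := split_not_sc huv hsc'
  have hu : σ u = σ' v := by
    show σ' (Equiv.swap u v u) = σ' v
    rw [Equiv.swap_apply_left]
  exact walk (S := {z | ¬ Arc u (σ' v) z}) arc_not_left (by
    intro z hz hzS
    rcases eq_or_ne z v with hzv | hzv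
    · exact absurd (hzv ▸ hz) hns
    · rcases eq_or_ne z u with hzu | hzu
      · rw [hzu, hu]
        exact arc_not_right
      · have hσz : σ z = σ' z := by
          show σ' (Equiv.swap u v z) = σ' z
          rw [Equiv.swap_apply_of_ne_of_ne hzu hzv]
        rw [Set.mem_setOf_eq, hσz]
        intro harc
        have hzu' : σ'.SameCycle z u := (sc_anti_split hsc' hz).symm
        exact hinc z u hzu' (arc_cross harc hzS hzu))

/-- splitting preserves the increasing-cycles property -/
lemma inc_split {σ' : Perm (Fin n)} {u v : Fin n} (huv : u ≠ v)
    (hsc' : σ'.SameCycle u v) (hinc : INC σ') :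
    INC (σ' * Equiv.swap u v) := by
  set σ := σ' * Equiv.swap u v with hσ
  intro x y hxy harc
  rcases eq_or_ne x u with hxu | hxu
  · subst hxu
    have hu : σ x = σ' v := by
      show σ' (Equiv.swap x v x) = σ' v
      rw [Equiv.swap_apply_left]
    exact claimA huv hsc' hinc y hxy (hu ▸ harc)
  · rcases eq_or_ne x v with hxv | hxv
    · subst hxv
      have hv : σ x = σ' u := by
        show σ' (Equiv.swap u x x) = σ' u
        rw [Equiv.swap_apply_right]
      have hσ2 : σ = σ' * Equiv.swap x u := by rw [hσ, Equiv.swap_comm]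
      exact claimA (Ne.symm huv) hsc'.symm hinc y (hσ2 ▸ hxy) (hv ▸ harc)
    · have hσx : σ x = σ' x := by
        show σ' (Equiv.swap u v x) = σ' x
        rw [Equiv.swap_apply_of_ne_of_ne hxu hxv]
      exact hinc x y (sc_anti_split hsc' hxy) (hσx ▸ harc)

lemma inc_finRotate : INC (finRotate n) := by
  cases n with
  | zero => exact fun x => x.elim0
  | succ m =>
    intro x y hxy harc
    have hxy' : (finRotate (m+1)) x = x + 1 := finRotate_succ_apply x
    rw [hxy'] at harc
    have hy : y.val < m + 1 := y.isLt
    have hx : x.val < m + 1 := x.isLt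
    rcases eq_or_ne x (Fin.last m) with hlast | hlast
    · have h1 : (x + 1).val = 0 := by rw [hlast, Fin.val_add_one, if_pos rfl]
      have h2 : x.val = m := by rw [hlast]; rfl
      simp only [Arc, Fin.lt_def, h1, h2] at harc
      omega
    · have h1 : (x + 1).val = x.val + 1 := by rw [Fin.val_add_one, if_neg hlast]
      simp only [Arc, Fin.lt_def, h1] at harc
      omega

/-- Main theorem: anything below the long cycle has increasing cycles. -/
theorem inc_of_precLe {σ : Perm (Fin n)} (h : precLe σ (finRotate n)) : INC σ := by
  classical
  set c := finRotate n with hc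
  rw [precLe] at h
  obtain ⟨d, hd⟩ : ∃ d, normPerm (σ⁻¹ * c) ≤ d := ⟨_, le_rfl⟩
  induction d generalizing σ with
  | zero =>
    have h0 : σ⁻¹ * c = 1 := normPerm_eq_zero (by omega)
    have hσc : σ = c := by
      have := congrArg (σ * ·) h0
      simpa [← mul_assoc] using this.symm
    rw [hσc]
    exact inc_finRotate
  | succ d ih =>
    obtain ⟨δ, hδ⟩ : ∃ δ, σ⁻¹ * c = δ := ⟨_, rfl⟩
    rw [hδ] at h hd
    by_cases hδ0 : normPerm δ = 0
    · have h0 : δ = 1 := normPerm_eq_zero hδ0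
      rw [h0] at hδ
      have hσc : σ = c := by
        have := congrArg (σ * ·) hδ
        simpa [← mul_assoc] using this.symm
      rw [hσc]
      exact inc_finRotate
    · have hδ1 : δ ≠ 1 := fun hc1 => hδ0 (by rw [hc1]; exact normPerm_one)
      obtain ⟨z, hz⟩ : ∃ z, δ z ≠ z := by
        by_contra hcon
        push_neg at hcon
        exact hδ1 (Equiv.ext fun x => (hcon x).trans rfl)
      have hzne : z ≠ δ z := fun hcon => hz hcon.symm
      obtain ⟨t, ht⟩ : ∃ t, Equiv.swap z (δ z) = t := ⟨_, rfl⟩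
      obtain ⟨δ', hδ'⟩ : ∃ δ', t * δ = δ' := ⟨_, rfl⟩
      obtain ⟨σ', hσ'⟩ : ∃ σ', σ * t = σ' := ⟨_, rfl⟩
      have htt : t * t = 1 := by rw [← ht, Equiv.swap_mul_self]
      have htinv : t⁻¹ = t := by rw [← ht, Equiv.swap_inv]
      have hδ'inv : δ'⁻¹ = δ⁻¹ * t := by
        rw [← hδ', mul_inv_rev, htinv]
      have hscinv : δ⁻¹.SameCycle z (δ z) := by
        rw [Equiv.Perm.sameCycle_inv]
        exact sc_apply_self δ z
      have hnδ' : normPerm δ⁻¹ = normPerm δ'⁻¹ + 1 := by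
        rw [hδ'inv, ← ht]
        exact normPerm_mul_swap_sc hzne hscinv
      have hnδ'2 : normPerm δ = normPerm δ' + 1 := by
        rw [← normPerm_inv δ, ← normPerm_inv δ', hnδ']
      have hσ'δ' : σ'⁻¹ * c = δ' := by
        rw [← hσ', mul_inv_rev, htinv, mul_assoc, hδ, hδ']
      have htri : normPerm c ≤ normPerm σ' + normPerm δ' := by
        have h1 : c = σ' * δ' := by
          rw [← hσ'δ', mul_inv_cancel_left]
        rw [h1]
        exact normPerm_mul_le σ' δ'
      have hle : normPerm σ' ≤ normPerm σ + 1 := by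
        rw [← hσ', ← ht]
        exact normPerm_mul_swap_le σ hzne
      have hσ'eq : normPerm σ' = normPerm σ + 1 := by omega
      have hprec' : precLe σ' c := by
        rw [precLe, hσ'δ']
        omega
      have hinc' : INC σ' := by
        have harg : normPerm c = normPerm σ' + normPerm (σ'⁻¹ * c) := by
          rw [hσ'δ']; omega
        exact ih harg (by rw [hσ'δ']; omega)
      have hσback : σ = σ' * t := by
        rw [← hσ', mul_assoc, htt, mul_one]
      have hsc : σ'.SameCycle z (δ z) := by
        by_contra hns
        have h2 := normPerm_mul_swap_not_sc hns
        rw [ht, ← hσback] at h2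
        omega
      rw [hσback, ← ht]
      exact inc_split hzne hsc hinc'


lemma swaps_prod_norm : ∀ (L : List (Perm (Fin n))), (∀ s ∈ L, s.IsSwap) →
    normPerm L.prod ≤ L.length := by
  intro L
  induction L with
  | nil => intro _; simp only [List.prod_nil, List.length_nil, normPerm_one, le_refl]
  | cons s L ih =>
    intro hsw
    obtain ⟨a, b, hab, hs⟩ := hsw s (List.mem_cons_self)
    have h1 : normPerm s = 1 := hs ▸ normPerm_swap hab
    calc normPerm (List.prod (s :: L)) = normPerm (s * L.prod) := by rw [List.prod_cons]
    _ ≤ normPerm s + normPerm L.prod := normPerm_mul_le s L.prod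
    _ ≤ 1 + L.length := by
        have := ih (fun x hx => hsw x (List.mem_cons_of_mem s hx))
        omega
    _ = (s :: L).length := by rw [List.length_cons]; omega


end NCP

open NCP in
/-- If γ = ((i₁ j₁),…,(i_k j_k)) ∈ Σ_n(k), l < m and i_l = i_m, then j_l > j_m. -/
theorem stmt8 (n k : ℕ) (i j : Fin k → Fin n) (hij : ∀ l, i l < j l)
    (hγ : (fun l => Equiv.swap (i l) (j l)) ∈ SigmaSet n k)
    (l m : Fin k) (hlm : l < m) (h : i l = i m) :
    j m < j l := by
  classical
  obtain ⟨hsw, hnorm, hprec⟩ := hγ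
  set τ : Fin k → Equiv.Perm (Fin n) := fun l => Equiv.swap (i l) (j l) with hτ
  set L : List (Equiv.Perm (Fin n)) := List.ofFn τ with hL
  have hlen : L.length = k := by rw [hL, List.length_ofFn]
  have hLsw : ∀ s ∈ L, s.IsSwap := by
    intro s hs
    rw [hL, List.mem_ofFn] at hs
    obtain ⟨q, rfl⟩ := hs
    exact ⟨i q, j q, (hij q).ne, rfl⟩
  set G : ℕ → Equiv.Perm (Fin n) := fun p => gammaP τ p with hG
  have hGdef : ∀ p, G p = (L.take p).prod := fun p => rfl
  set c := finRotate n with hc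
  -- exact prefix norms
  have hexact : ∀ p ≤ k, normPerm (G p) = p ∧ normPerm ((L.drop p).prod) = k - p := by
    intro p hp
    have h1 : normPerm (G p) ≤ p := by
      rw [hGdef]
      calc normPerm ((L.take p).prod) ≤ (L.take p).length :=
            swaps_prod_norm _ (fun s hs => hLsw s (List.take_subset p L hs))
      _ ≤ p := by rw [List.length_take]; omega
    have h2 : normPerm ((L.drop p).prod) ≤ k - p := by
      calc normPerm ((L.drop p).prod) ≤ (L.drop p).length :=
            swaps_prod_norm _ (fun s hs => hLsw s (List.drop_subset p L hs))
      _ = k - p := by rw [List.length_drop, hlen]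
    have h3 : G p * (L.drop p).prod = L.prod := by
      rw [hGdef]; exact List.prod_take_mul_prod_drop L p
    have h5 : k ≤ normPerm (G p) + normPerm ((L.drop p).prod) := by
      calc k = normPerm L.prod := hnorm.symm
      _ = normPerm (G p * (L.drop p).prod) := by rw [h3]
      _ ≤ _ := normPerm_mul_le _ _
    omega
  -- step decomposition
  have hstep : ∀ (q : Fin k), G (q.val + 1) = G q.val * Equiv.swap (i q) (j q) := by
    intro q
    have hq : q.val < L.length := by rw [hlen]; exact q.isLt
    rw [hGdef, hGdef, List.prod_take_succ L q.val hq]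
    congr 1
    simp [hL, hτ]
  -- each step is a merge
  have hmerge : ∀ (q : Fin k), ¬ (G q.val).SameCycle (i q) (j q) := by
    intro q
    apply not_sc_of_norm_succ (hij q).ne
    rw [← hstep q]
    have e1 := (hexact q.val (le_of_lt q.isLt)).1
    have e2 := (hexact (q.val + 1) q.isLt).1
    omega
  have hmerged : ∀ (q : Fin k), (G (q.val + 1)).SameCycle (i q) (j q) := by
    intro q
    rw [hstep q]
    exact merge_sc (hmerge q)
  -- monotonicity of same-cycle along the chain
  have hmono : ∀ (e p : ℕ), p + e ≤ k → ∀ x y, (G p).SameCycle x y →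
      (G (p + e)).SameCycle x y := by
    intro e
    induction e with
    | zero => intro p _ x y hxy; exact hxy
    | succ e ih =>
      intro p hpe x y hxy
      have h1 : (G (p + e)).SameCycle x y := ih p (by omega) x y hxy
      have hq : p + e < k := by omega
      have h3 : G (p + e + 1) = G (p + e) * Equiv.swap (i ⟨p+e,hq⟩) (j ⟨p+e,hq⟩) :=
        hstep ⟨p+e,hq⟩
      have h2 : ¬ (G (p + e)).SameCycle (i ⟨p+e,hq⟩) (j ⟨p+e,hq⟩) := hmerge ⟨p+e,hq⟩
      rw [show p + (e + 1) = p + e + 1 from rfl, h3]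
      exact sc_mono_merge h2 h1
  -- precLe for prefixes
  have hprecG : ∀ p ≤ k, precLe (G p) c := by
    intro p hp
    rw [precLe] at hprec ⊢
    have h3 : G p * (L.drop p).prod = L.prod := by
      rw [hGdef]; exact List.prod_take_mul_prod_drop L p
    have hinvg : (G p)⁻¹ * L.prod = (L.drop p).prod := by
      rw [← h3, inv_mul_cancel_left]
    have hsplit : (G p)⁻¹ * c = (L.drop p).prod * ((L.prod)⁻¹ * c) := by
      rw [← hinvg, mul_assoc, mul_inv_cancel_left]
    have htri1 : normPerm c ≤ normPerm (G p) + normPerm ((G p)⁻¹ * c) := by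
      calc normPerm c = normPerm (G p * ((G p)⁻¹ * c)) := by rw [mul_inv_cancel_left]
      _ ≤ _ := normPerm_mul_le _ _
    have htri2 : normPerm ((G p)⁻¹ * c) ≤ (k - p) + normPerm ((L.prod)⁻¹ * c) := by
      rw [hsplit]
      have := normPerm_mul_le ((L.drop p).prod) ((L.prod)⁻¹ * c)
      have e2 := (hexact p hp).2
      omega
    have e1 := (hexact p hp).1
    omega
  -- the main argument
  set a := i m with ha
  have hal : a = i l := h.symm
  have h_a_jl : a < j l := hal ▸ hij l
  have h_a_jm : a < j m := hij m
  -- β = G m.val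
  have hβinc : INC (G m.val) := inc_of_precLe (hprecG m.val (le_of_lt m.isLt))
  have hγ'inc : INC (G (m.val + 1)) := inc_of_precLe (hprecG (m.val + 1) m.isLt)
  -- SameCycle β a (j l)
  have hscl : (G (l.val + 1)).SameCycle a (j l) := hal ▸ hmerged l
  have hle_lm : l.val + 1 ≤ m.val := hlm
  have hscβ : (G m.val).SameCycle a (j l) := by
    have := hmono (m.val - (l.val + 1)) (l.val + 1) (by omega) a (j l) hscl
    rwa [show l.val + 1 + (m.val - (l.val + 1)) = m.val by omega] at this
  -- ¬ SameCycle β a (j m)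
  have hnsβ : ¬ (G m.val).SameCycle a (j m) := hmerge m
  -- step 1 : a < β a ≤ j l
  have hβa : a < (G m.val) a ∧ (G m.val) a ≤ j l := by
    have harc := hβinc a (j l) hscβ
    rcases lt_trichotomy ((G m.val) a) a with hlt | heq | hgt
    · exfalso
      apply harc
      exact Or.inr ⟨hlt, Or.inl h_a_jl⟩
    · exfalso
      exact absurd (sc_fixed heq hscβ) (by intro hcon; rw [hcon] at h_a_jl; exact lt_irrefl _ h_a_jl)
    · refine ⟨hgt, ?_⟩
      by_contra hcon
      push_neg at hcon
      exact harc (Or.inl ⟨h_a_jl, hcon⟩)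
  -- j m ≠ j l
  have hjne : j m ≠ j l := by
    intro hcon
    exact hnsβ (hcon ▸ hscβ)
  -- suppose j l < j m, derive contradiction
  by_contra hcon
  push_neg at hcon
  have hjlm : j l < j m := lt_of_le_of_ne hcon (Ne.symm hjne)
  -- γ' (j m) = β a
  have hγ'jm : (G (m.val + 1)) (j m) = (G m.val) a := by
    rw [hstep m]
    show (G m.val) (Equiv.swap (i m) (j m) (j m)) = (G m.val) a
    rw [Equiv.swap_apply_right]
  have hscγ' : (G (m.val + 1)).SameCycle (j m) a := (hmerged m).symm
  have harc2 := hγ'inc (j m) a hscγ' 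
  apply harc2
  rw [hγ'jm]
  -- a ∈ Arc (j m) (β a) : β a < j m and a < β a
  have hβa_lt : (G m.val) a < j m := lt_of_le_of_lt hβa.2 hjlm
  exact Or.inr ⟨hβa_lt, Or.inr hβa.1⟩
end

section
/- Let γ = ((i₁ j₁),…,(i_k j_k)) ∈ Σ_n(k) and let l, m ∈ {1,…,k} with l < m. If j_l = j_m, then i_l > i_m. -/
namespace Stmt9Aux

open Equiv Equiv.Perm

variable {n : ℕ}

lemma normPerm_def (σ : Equiv.Perm (Fin n)) : normPerm σ = n - cycleCount σ := rfl

/-! ### cyclic distance -/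

def dC {n : ℕ} (p u : Fin n) : ℕ := if p ≤ u then u.val - p.val else u.val + n - p.val

lemma dC_eq_zero_iff {p u : Fin n} : dC p u = 0 ↔ u = p := by
  have hp := p.isLt; have hu := u.isLt
  simp only [dC]
  rw [Fin.ext_iff]
  split_ifs with h <;> rw [Fin.le_def] at h <;> omega

lemma dC_pos {p u : Fin n} (h : u ≠ p) : 0 < dC p u := by
  rcases Nat.eq_zero_or_pos (dC p u) with h0 | h0
  · exact absurd (dC_eq_zero_iff.mp h0) h
  · exact h0

lemma dC_add {p u v : Fin n} (hu : u ≠ p) (hv : v ≠ u) (hle : dC u v ≤ dC u p) :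
    v = p ∨ dC p v = dC p u + dC u v := by
  have hp := p.isLt; have hu' := u.isLt; have hv' := v.isLt
  simp only [Fin.ext_iff] at hu hv ⊢
  simp only [dC] at hle ⊢
  split_ifs at hle ⊢ <;> simp only [Fin.le_def, not_le] at * <;> omega

/-! ### powers and periods -/

lemma exists_period (σ : Perm (Fin n)) (b : Fin n) :
    ∃ r, 0 < r ∧ (σ ^ r) b = b ∧ ∀ t, 0 < t → t < r → (σ ^ t) b ≠ b := by
  classical
  have hex : ∃ t, 0 < t ∧ (σ ^ t) b = b :=
    ⟨orderOf σ, orderOf_pos σ, by rw [pow_orderOf_eq_one]; rfl⟩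
  refine ⟨Nat.find hex, (Nat.find_spec hex).1, (Nat.find_spec hex).2, ?_⟩
  intro t ht0 htr hEq
  exact Nat.find_min hex htr ⟨ht0, hEq⟩

lemma pow_mod_apply {σ : Perm (Fin n)} {b : Fin n} {r : ℕ} (hrb : (σ ^ r) b = b) (t : ℕ) :
    (σ ^ t) b = (σ ^ (t % r)) b := by
  have key : ∀ q, (σ ^ (r * q)) b = b := by
    intro q
    induction q with
    | zero => simp
    | succ q ih => rw [Nat.mul_succ, pow_add, Equiv.Perm.mul_apply, hrb, ih]
  conv_lhs => rw [← Nat.mod_add_div t r, pow_add, Equiv.Perm.mul_apply, key]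

lemma walk_pow {σ : Perm (Fin n)} {a b z : Fin n} {t : ℕ}
    (h : ∀ s, s < t → (σ ^ s) z ≠ a ∧ (σ ^ s) z ≠ b) :
    ((σ * Equiv.swap a b) ^ t) z = (σ ^ t) z := by
  induction t with
  | zero => rfl
  | succ t ih =>
    have ht := h t (Nat.lt_succ_self t)
    rw [pow_succ', Equiv.Perm.mul_apply, ih (fun s hs => h s (by omega)),
      Equiv.Perm.mul_apply, Equiv.swap_apply_of_ne_of_ne ht.1 ht.2,
      ← Equiv.Perm.mul_apply, ← pow_succ']

lemma pow_start {σ : Perm (Fin n)} {a b : Fin n} {t : ℕ} (ht : 0 < t)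
    (h : ∀ s, 0 < s → s < t → (σ ^ s) b ≠ a ∧ (σ ^ s) b ≠ b) :
    ((σ * Equiv.swap a b) ^ t) a = (σ ^ t) b := by
  cases t with
  | zero => omega
  | succ t =>
    rw [pow_succ, Equiv.Perm.mul_apply, Equiv.Perm.mul_apply, Equiv.swap_apply_left]
    have h' : ∀ s, s < t → (σ ^ s) (σ b) ≠ a ∧ (σ ^ s) (σ b) ≠ b := by
      intro s hs
      have : (σ ^ s) (σ b) = (σ ^ (s + 1)) b := by
        rw [pow_succ, Equiv.Perm.mul_apply]
      rw [this]
      exact h (s + 1) (by omega) (by omega)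
    rw [walk_pow h', ← Equiv.Perm.mul_apply, ← pow_succ]

/-! ### merge / split same-cycle lemmas -/

lemma merge_sameCycle {σ : Perm (Fin n)} {a b : Fin n} (hab : ¬ σ.SameCycle a b) :
    (σ * Equiv.swap a b).SameCycle a b := by
  obtain ⟨r, hr0, hrb, hmin⟩ := exists_period σ b
  have key : ((σ * Equiv.swap a b) ^ r) a = b := by
    have hcond : ∀ s, 0 < s → s < r → (σ ^ s) b ≠ a ∧ (σ ^ s) b ≠ b := by
      intro s hs0 hsr
      refine ⟨fun hEq => hab ?_, hmin s hs0 hsr⟩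
      exact Equiv.Perm.SameCycle.symm ⟨(s : ℤ), by rw [zpow_natCast, hEq]⟩
    rw [pow_start hr0 hcond, hrb]
  exact ⟨(r : ℤ), by rw [zpow_natCast, key]⟩

lemma merge_mono_a {σ : Perm (Fin n)} {a b y : Fin n} (hab : ¬ σ.SameCycle a b)
    (hy : σ.SameCycle a y) : (σ * Equiv.swap a b).SameCycle a y := by
  obtain ⟨r, hr0, hra, hmin⟩ := exists_period σ a
  obtain ⟨t, _, htEq⟩ := hy.exists_pow_eq'
  have h2 : (σ ^ (t % r)) a = y := by rw [← pow_mod_apply hra]; exact htEq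
  by_cases h0 : t % r = 0
  · rw [h0] at h2
    simp only [pow_zero, Equiv.Perm.one_apply] at h2
    exact h2 ▸ Equiv.Perm.SameCycle.refl _ _
  have hlt : t % r < r := Nat.mod_lt _ hr0
  have key : ((σ * Equiv.swap b a) ^ (t % r)) b = (σ ^ (t % r)) a := by
    apply pow_start (Nat.pos_of_ne_zero h0)
    intro s hs0 hst
    constructor
    · intro hEq
      exact hab (⟨(s : ℤ), by rw [zpow_natCast, hEq]⟩ : σ.SameCycle a b)
    · exact hmin s hs0 (by omega)
  rw [Equiv.swap_comm b a] at key
  have h3 : (σ * Equiv.swap a b).SameCycle b y := ⟨((t % r : ℕ) : ℤ), by rw [zpow_natCast, key, h2]⟩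
  exact (merge_sameCycle hab).trans h3

lemma merge_mono {σ : Perm (Fin n)} {a b x y : Fin n} (hab : ¬ σ.SameCycle a b)
    (hxy : σ.SameCycle x y) : (σ * Equiv.swap a b).SameCycle x y := by
  by_cases hax : σ.SameCycle a x
  · exact (merge_mono_a hab hax).symm.trans (merge_mono_a hab (hax.trans hxy))
  by_cases hbx : σ.SameCycle b x
  · have hab' : ¬ σ.SameCycle b a := fun hh => hab hh.symm
    have h1 := merge_mono_a hab' hbx
    have h2 := merge_mono_a hab' (hbx.trans hxy)
    rw [Equiv.swap_comm b a] at h1 h2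
    exact h1.symm.trans h2
  · obtain ⟨t, _, htEq⟩ := hxy.exists_pow_eq'
    have hw : ((σ * Equiv.swap a b) ^ t) x = (σ ^ t) x := by
      apply walk_pow
      intro s _
      constructor
      · intro hEq
        exact hax (Equiv.Perm.SameCycle.symm ⟨(s : ℤ), by rw [zpow_natCast, hEq]⟩)
      · intro hEq
        exact hbx (Equiv.Perm.SameCycle.symm ⟨(s : ℤ), by rw [zpow_natCast, hEq]⟩)
    exact ⟨(t : ℤ), by rw [zpow_natCast, hw, htEq]⟩

lemma untouched {σ : Perm (Fin n)} {a b z y : Fin n} (ha : ¬ σ.SameCycle z a)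
    (hb : ¬ σ.SameCycle z b) (hy : σ.SameCycle z y) :
    (σ * Equiv.swap a b).SameCycle z y := by
  obtain ⟨t, _, htEq⟩ := hy.exists_pow_eq'
  have hw : ((σ * Equiv.swap a b) ^ t) z = (σ ^ t) z := by
    apply walk_pow
    intro s _
    exact ⟨fun hEq => ha ⟨(s : ℤ), by rw [zpow_natCast, hEq]⟩,
      fun hEq => hb ⟨(s : ℤ), by rw [zpow_natCast, hEq]⟩⟩
  exact ⟨(t : ℤ), by rw [zpow_natCast, hw, htEq]⟩

lemma step_orbit_ab {σ : Perm (Fin n)} {a b z : Fin n}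
    (h : σ.SameCycle z a ∨ σ.SameCycle z b) :
    (σ * Equiv.swap a b).SameCycle z a ∨ (σ * Equiv.swap a b).SameCycle z b := by
  classical
  have hex : ∃ t : ℕ, (σ ^ t) z = a ∨ (σ ^ t) z = b := by
    rcases h with h | h
    · obtain ⟨t, _, ht⟩ := h.exists_pow_eq'; exact ⟨t, Or.inl ht⟩
    · obtain ⟨t, _, ht⟩ := h.exists_pow_eq'; exact ⟨t, Or.inr ht⟩
  set t := Nat.find hex with ht_def
  have hspec := Nat.find_spec hex
  have hw : ((σ * Equiv.swap a b) ^ t) z = (σ ^ t) z := by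
    apply walk_pow
    intro s hs
    have := Nat.find_min hex hs
    push_neg at this
    exact this
  rcases hspec with hEq | hEq
  · exact Or.inl ⟨(t : ℤ), by rw [zpow_natCast, hw, hEq]⟩
  · exact Or.inr ⟨(t : ℤ), by rw [zpow_natCast, hw, hEq]⟩

lemma split_not_sameCycle {σ : Perm (Fin n)} {a b : Fin n} (hab : a ≠ b)
    (h : σ.SameCycle a b) : ¬ (σ * Equiv.swap a b).SameCycle a b := by
  classical
  obtain ⟨r, hr0, hrb, hminr⟩ := exists_period σ b
  have hex : ∃ s, 0 < s ∧ (σ ^ s) b = a := by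
    obtain ⟨t, _, ht⟩ := h.symm.exists_pow_eq'
    refine ⟨t, ?_, ht⟩
    rcases Nat.eq_zero_or_pos t with h0 | h0
    · exfalso; apply hab; rw [h0] at ht; simpa using ht.symm
    · exact h0
  obtain ⟨hs0, hsa⟩ := Nat.find_spec hex
  set s := Nat.find hex with hs_def
  have hsr : s < r := by
    by_contra hge
    push_neg at hge
    have h1 : (σ ^ (s % r)) b = a := by rw [← pow_mod_apply hrb]; exact hsa
    have h2 : 0 < s % r := by
      rcases Nat.eq_zero_or_pos (s % r) with h0 | h0
      · exfalso; apply hab; rw [h0] at h1; simpa using h1.symm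
      · exact h0
    have h3 : s % r < s := lt_of_lt_of_le (Nat.mod_lt _ hr0) hge
    exact Nat.find_min hex h3 ⟨h2, h1⟩
  have havoid : ∀ u, 0 < u → u < s → (σ ^ u) b ≠ a ∧ (σ ^ u) b ≠ b := by
    intro u hu0 hus
    constructor
    · exact fun hEq => Nat.find_min hex hus ⟨hu0, hEq⟩
    · intro hEq
      have hsub : (σ ^ (s - u)) b = a := by
        have h5 : (σ ^ (s - u)) ((σ ^ u) b) = a := by
          rw [← Equiv.Perm.mul_apply, ← pow_add, Nat.sub_add_cancel (le_of_lt hus)]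
          exact hsa
        rwa [hEq] at h5
      exact Nat.find_min hex (by omega) ⟨by omega, hsub⟩
  have key : ((σ * Equiv.swap a b) ^ s) a = a := by
    rw [pow_start hs0 havoid, hsa]
  rintro hsc
  obtain ⟨mm, _, hm⟩ := hsc.exists_pow_eq'
  have h1 : ((σ * Equiv.swap a b) ^ (mm % s)) a = b := by rw [← pow_mod_apply key]; exact hm
  have h2 : 0 < mm % s := by
    rcases Nat.eq_zero_or_pos (mm % s) with h0 | h0
    · exfalso; apply hab; rw [h0] at h1; simpa using h1
    · exact h0
  have h3 : mm % s < s := Nat.mod_lt _ hs0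
  have h4 : ((σ * Equiv.swap a b) ^ (mm % s)) a = (σ ^ (mm % s)) b :=
    pow_start h2 (fun u hu0 hus => havoid u hu0 (by omega))
  rw [h4] at h1
  exact hminr (mm % s) h2 (by omega) h1


/-! ### counting -/

def Mset (σ : Perm (Fin n)) : Set (Fin n) := {x | ∀ y, σ.SameCycle x y → x ≤ y}

lemma cycleCount_def (σ : Perm (Fin n)) : cycleCount σ = (Mset σ).ncard := rfl

lemma min_mem_Mset (σ : Perm (Fin n)) (x : Fin n) :
    ∃ z, σ.SameCycle x z ∧ z ∈ Mset σ := by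
  obtain ⟨z, hz, hmin⟩ := Set.exists_min_image {y | σ.SameCycle x y} id (Set.toFinite _)
    ⟨x, Equiv.Perm.SameCycle.refl σ x⟩
  exact ⟨z, hz, fun y hy => hmin y (hz.trans hy)⟩

lemma one_le_cycleCount (σ : Perm (Fin n)) (hn : 0 < n) : 1 ≤ cycleCount σ := by
  obtain ⟨z, _, hz⟩ := min_mem_Mset σ ⟨0, hn⟩
  rw [cycleCount_def]
  exact (Set.ncard_pos (Set.toFinite _)).mpr ⟨z, hz⟩

lemma cycleCount_le (σ : Perm (Fin n)) : cycleCount σ ≤ n := by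
  rw [cycleCount_def]
  calc (Mset σ).ncard ≤ (Set.univ : Set (Fin n)).ncard :=
        Set.ncard_le_ncard (Set.subset_univ _) (Set.toFinite _)
    _ = n := by rw [Set.ncard_univ]; simp

lemma Mset_merge_subset {σ : Perm (Fin n)} {a b : Fin n} (hab : ¬ σ.SameCycle a b) :
    Mset (σ * Equiv.swap a b) ⊆ Mset σ := fun z hz y hy => hz y (merge_mono hab hy)

lemma cycleCount_split_adj {σ : Perm (Fin n)} {x : Fin n} (hx : σ x ≠ x) :
    cycleCount σ + 1 ≤ cycleCount (σ * Equiv.swap x (σ x)) := by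
  classical
  have hfix : (σ * Equiv.swap x (σ x)) (σ x) = σ x := by
    rw [Equiv.Perm.mul_apply, Equiv.swap_apply_right]
  have hxb : x ≠ σ x := fun h => hx h.symm
  have hnot : ¬ (σ * Equiv.swap x (σ x)).SameCycle x (σ x) := by
    intro h
    exact hxb (Equiv.Perm.SameCycle.eq_of_left h.symm hfix).symm
  have hσeq : σ = (σ * Equiv.swap x (σ x)) * Equiv.swap x (σ x) := by
    rw [mul_assoc, Equiv.swap_mul_self, mul_one]
  have hconv : ∀ z y, (σ * Equiv.swap x (σ x)).SameCycle z y → σ.SameCycle z y := by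
    intro z y h
    have := merge_mono hnot h
    rwa [← hσeq] at this
  have hsub : Mset σ ⊆ Mset (σ * Equiv.swap x (σ x)) := fun z hz y hy => hz y (hconv z y hy)
  have hxc : σ.SameCycle x (σ x) := Equiv.Perm.SameCycle.apply_right (Equiv.Perm.SameCycle.refl σ x)
  by_cases hbM : (σ x) ∈ Mset σ
  · obtain ⟨m, hm, hmM⟩ := min_mem_Mset (σ * Equiv.swap x (σ x)) x
    have hmb : σ.SameCycle m (σ x) := (hconv _ _ hm).symm.trans hxc
    have hmb_ne : m ≠ σ x := by
      intro h
      rw [h] at hm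
      exact hnot hm
    have hbm_lt : ¬ m ≤ σ x := by
      intro hle
      exact hmb_ne (le_antisymm hle (hbM m hmb.symm))
    have hmnotM : m ∉ Mset σ := fun hM => hbm_lt (hM (σ x) hmb)
    have hins : insert m (Mset σ) ⊆ Mset (σ * Equiv.swap x (σ x)) := by
      intro z hz
      rcases Set.mem_insert_iff.mp hz with h | h
      · exact h ▸ hmM
      · exact hsub h
    calc cycleCount σ + 1 = (insert m (Mset σ)).ncard := by
          rw [Set.ncard_insert_of_notMem hmnotM (Set.toFinite _), cycleCount_def]
      _ ≤ (Mset (σ * Equiv.swap x (σ x))).ncard := Set.ncard_le_ncard hins (Set.toFinite _)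
      _ = cycleCount (σ * Equiv.swap x (σ x)) := (cycleCount_def _).symm
  · have hbM' : (σ x) ∈ Mset (σ * Equiv.swap x (σ x)) := by
      intro y hy
      rw [← Equiv.Perm.SameCycle.eq_of_left hy hfix]
    have hins : insert (σ x) (Mset σ) ⊆ Mset (σ * Equiv.swap x (σ x)) := by
      intro z hz
      rcases Set.mem_insert_iff.mp hz with h | h
      · exact h ▸ hbM'
      · exact hsub h
    calc cycleCount σ + 1 = (insert (σ x) (Mset σ)).ncard := by
          rw [Set.ncard_insert_of_notMem hbM (Set.toFinite _), cycleCount_def]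
      _ ≤ (Mset (σ * Equiv.swap x (σ x))).ncard := Set.ncard_le_ncard hins (Set.toFinite _)
      _ = cycleCount (σ * Equiv.swap x (σ x)) := (cycleCount_def _).symm

lemma cycleCount_mul_swap_le {σ : Perm (Fin n)} {a b : Fin n} (hab : a ≠ b) :
    cycleCount (σ * Equiv.swap a b) ≤ cycleCount σ + 1 := by
  classical
  by_cases hsc : σ.SameCycle a b
  case neg =>
    have h1 := Set.ncard_le_ncard (Mset_merge_subset hsc) (Set.toFinite _)
    rw [cycleCount_def, cycleCount_def]
    omega
  case pos =>
  have hn : ¬ (σ * Equiv.swap a b).SameCycle a b := split_not_sameCycle hab hsc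
  have hσeq : σ = (σ * Equiv.swap a b) * Equiv.swap a b := by
    rw [mul_assoc, Equiv.swap_mul_self, mul_one]
  have hconv : ∀ z y, (σ * Equiv.swap a b).SameCycle z y → σ.SameCycle z y := by
    intro z y h
    have := merge_mono hn h
    rwa [← hσeq] at this
  obtain ⟨mA, hmA, hmAmin⟩ := Set.exists_min_image {y | (σ * Equiv.swap a b).SameCycle a y} id
    (Set.toFinite _) ⟨a, Equiv.Perm.SameCycle.refl _ _⟩
  obtain ⟨mB, hmB, hmBmin⟩ := Set.exists_min_image {y | (σ * Equiv.swap a b).SameCycle b y} id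
    (Set.toFinite _) ⟨b, Equiv.Perm.SameCycle.refl _ _⟩
  simp only [Set.mem_setOf_eq] at hmA hmB hmAmin hmBmin
  have hzAB : ∀ z, z ∈ Mset (σ * Equiv.swap a b) → z ∉ Mset σ → z = mA ∨ z = mB := by
    intro z hz hznot
    have hor : (σ * Equiv.swap a b).SameCycle z a ∨ (σ * Equiv.swap a b).SameCycle z b := by
      by_contra hcon
      push_neg at hcon
      apply hznot
      intro y hy
      have hna : ¬ σ.SameCycle z a := by
        intro hza
        rcases step_orbit_ab (Or.inl hza) with h | h
        exacts [hcon.1 h, hcon.2 h]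
      have hnb : ¬ σ.SameCycle z b := by
        intro hzb
        rcases step_orbit_ab (Or.inr hzb) with h | h
        exacts [hcon.1 h, hcon.2 h]
      exact hz y (untouched hna hnb hy)
    rcases hor with h | h
    · exact Or.inl (le_antisymm (hz mA (h.trans hmA)) (hmAmin z h.symm))
    · exact Or.inr (le_antisymm (hz mB (h.trans hmB)) (hmBmin z h.symm))
  have hCsub : ∀ y, σ.SameCycle a y →
      ((σ * Equiv.swap a b).SameCycle a y ∨ (σ * Equiv.swap a b).SameCycle b y) := by
    intro y hy
    rcases step_orbit_ab (σ := σ) (a := a) (b := b) (Or.inl hy.symm) with h | h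
    · exact Or.inl h.symm
    · exact Or.inr h.symm
  have hminM : ∀ w, (w = mA ∨ w = mB) → w ≤ mA → w ≤ mB → w ∈ Mset σ := by
    intro w hw hwa hwb y hy
    have hwC : σ.SameCycle a w := by
      rcases hw with rfl | rfl
      · exact hconv _ _ hmA
      · exact hsc.trans (hconv _ _ hmB)
    rcases hCsub y (hwC.trans hy) with h | h
    · exact hwa.trans (hmAmin y h)
    · exact hwb.trans (hmBmin y h)
  have hfin : Mset (σ * Equiv.swap a b) ⊆ insert (max mA mB) (Mset σ) := by
    intro z hz
    by_cases hzM : z ∈ Mset σ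
    · exact Set.mem_insert_of_mem _ hzM
    rcases hzAB z hz hzM with rfl | rfl
    · rcases le_total z mB with hle | hle
      · exact absurd (hminM z (Or.inl rfl) le_rfl hle) hzM
      · rw [max_eq_left hle]
        exact Set.mem_insert _ _
    · rcases le_total z mA with hle | hle
      · exact absurd (hminM z (Or.inr rfl) hle le_rfl) hzM
      · rw [max_eq_right hle]
        exact Set.mem_insert _ _
  calc cycleCount (σ * Equiv.swap a b) = (Mset (σ * Equiv.swap a b)).ncard := cycleCount_def _
    _ ≤ (insert (max mA mB) (Mset σ)).ncard := Set.ncard_le_ncard hfin (Set.toFinite _)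
    _ ≤ (Mset σ).ncard + 1 := Set.ncard_insert_le _ _
    _ = cycleCount σ + 1 := by rw [cycleCount_def]

lemma not_sameCycle_of_count {σ : Perm (Fin n)} {a b : Fin n} (hab : a ≠ b)
    (h : cycleCount (σ * Equiv.swap a b) < cycleCount σ) : ¬ σ.SameCycle a b := by
  intro hsc
  have h1 := split_not_sameCycle hab hsc
  have hσeq : σ = (σ * Equiv.swap a b) * Equiv.swap a b := by
    rw [mul_assoc, Equiv.swap_mul_self, mul_one]
  have hsub : Mset σ ⊆ Mset (σ * Equiv.swap a b) := by
    intro z hz y hy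
    refine hz y ?_
    have := merge_mono h1 hy
    rwa [← hσeq] at this
  have h2 := Set.ncard_le_ncard hsub (Set.toFinite _)
  rw [← cycleCount_def, ← cycleCount_def] at h2
  omega

lemma eq_one_of_cycleCount_eq {σ : Perm (Fin n)} (h : cycleCount σ = n) : σ = 1 := by
  have huniv : Mset σ = Set.univ := by
    apply Set.eq_of_subset_of_ncard_le (Set.subset_univ _) _ (Set.toFinite _)
    rw [← cycleCount_def, h, Set.ncard_univ]
    simp
  apply Equiv.ext
  intro x
  have h1 : x ∈ Mset σ := by rw [huniv]; trivial
  have h2 : σ x ∈ Mset σ := by rw [huniv]; trivial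
  have h3 : x ≤ σ x := h1 (σ x) (Equiv.Perm.SameCycle.apply_right (Equiv.Perm.SameCycle.refl σ x))
  have h4 : σ x ≤ x := h2 x (Equiv.Perm.SameCycle.apply_left (Equiv.Perm.SameCycle.refl σ x))
  have := le_antisymm h4 h3
  simpa using this



lemma normPerm_one : normPerm (1 : Perm (Fin n)) = 0 := by
  have h : Mset (1 : Perm (Fin n)) = Set.univ := by
    ext z
    simp only [Mset, Set.mem_setOf_eq, Set.mem_univ, iff_true]
    intro y hy
    obtain ⟨i, hi⟩ := hy
    simp only [one_zpow, Equiv.Perm.one_apply] at hi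
    exact le_of_eq hi
  rw [normPerm_def, cycleCount_def, h, Set.ncard_univ]
  simp

lemma normPerm_mul_swap_le {σ : Perm (Fin n)} {a b : Fin n} (hab : a ≠ b) :
    normPerm (σ * Equiv.swap a b) ≤ normPerm σ + 1 := by
  have h0 : 0 < n := a.pos
  have h1 := cycleCount_mul_swap_le (σ := σ * Equiv.swap a b) hab
  rw [mul_assoc, Equiv.swap_mul_self, mul_one] at h1
  have h2 := one_le_cycleCount σ h0
  have h3 := cycleCount_le (σ * Equiv.swap a b)
  rw [normPerm_def, normPerm_def]
  omega

lemma normPerm_mul_list_le (σ : Perm (Fin n)) (L : List (Perm (Fin n)))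
    (hL : ∀ τ ∈ L, ∃ a b : Fin n, a ≠ b ∧ τ = Equiv.swap a b) :
    normPerm (σ * L.prod) ≤ normPerm σ + L.length := by
  induction L generalizing σ with
  | nil => simp
  | cons τ L ih =>
    obtain ⟨a, b, hab, rfl⟩ := hL τ List.mem_cons_self
    rw [List.prod_cons, ← mul_assoc]
    calc normPerm (σ * Equiv.swap a b * L.prod)
        ≤ normPerm (σ * Equiv.swap a b) + L.length :=
          ih _ (fun τ' hτ' => hL τ' (List.mem_cons_of_mem _ hτ'))
      _ ≤ normPerm σ + 1 + L.length := by
          have := normPerm_mul_swap_le (σ := σ) hab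
          omega
      _ = normPerm σ + (Equiv.swap a b :: L).length := by
          simp [List.length_cons]
          omega


/-! ### generation by swaps and the triangle inequality -/

lemma exists_swap_list : ∀ N : ℕ, ∀ σ : Equiv.Perm (Fin n), normPerm σ ≤ N →
    ∃ L : List (Equiv.Perm (Fin n)), (∀ τ ∈ L, ∃ a b : Fin n, a ≠ b ∧ τ = Equiv.swap a b) ∧
      L.length ≤ normPerm σ ∧ L.prod = σ := by
  intro N
  induction N with
  | zero =>
    intro σ h
    have h1 : cycleCount σ = n := by
      have h2 := cycleCount_le σ
      rw [normPerm_def] at h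
      omega
    exact ⟨[], by simp, by simp, by simp [eq_one_of_cycleCount_eq h1]⟩
  | succ N ih =>
    intro σ h
    by_cases h1 : σ = 1
    · exact ⟨[], by simp, by simp, by simp [h1]⟩
    · have hx : ∃ x, σ x ≠ x := by
        by_contra hc
        push_neg at hc
        exact h1 (Equiv.ext fun z => hc z)
      obtain ⟨x, hx⟩ := hx
      have h0 : 0 < n := x.pos
      have hsplit := cycleCount_split_adj hx
      have hle := cycleCount_le (σ * Equiv.swap x (σ x))
      have hge := one_le_cycleCount σ h0
      have hℓ : cycleCount σ < n := by
        by_contra hcon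
        push_neg at hcon
        have := cycleCount_le σ
        exact h1 (eq_one_of_cycleCount_eq (by omega))
      have hnorm : normPerm (σ * Equiv.swap x (σ x)) < normPerm σ := by
        rw [normPerm_def, normPerm_def]
        omega
      obtain ⟨L, hLswap, hLlen, hLprod⟩ := ih (σ * Equiv.swap x (σ x)) (by omega)
      refine ⟨L ++ [Equiv.swap x (σ x)], ?_, ?_, ?_⟩
      · intro τ hτ
        rcases List.mem_append.mp hτ with hmem | hmem
        · exact hLswap τ hmem
        · exact ⟨x, σ x, fun hh => hx hh.symm, by simpa using hmem⟩
      · rw [List.length_append, List.length_singleton]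
        omega
      · rw [List.prod_append, List.prod_singleton, hLprod, mul_assoc, Equiv.swap_mul_self,
          mul_one]

lemma normPerm_mul_le (σ ρ : Equiv.Perm (Fin n)) :
    normPerm (σ * ρ) ≤ normPerm σ + normPerm ρ := by
  obtain ⟨L, hs, hlen, hprod⟩ := exists_swap_list (normPerm ρ) ρ le_rfl
  calc normPerm (σ * ρ) = normPerm (σ * L.prod) := by rw [hprod]
    _ ≤ normPerm σ + L.length := normPerm_mul_list_le σ L hs
    _ ≤ _ := by omega

/-! ### finRotate -/

lemma finRotate_no_fix {N : ℕ} (z : Fin (N + 2)) : finRotate (N + 2) z ≠ z := by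
  rw [finRotate_succ_apply]
  intro h
  have h2 : z + 1 = z + 0 := by rw [add_zero]; exact h
  have h3 : (1 : Fin (N + 2)) = 0 := add_left_cancel h2
  exact one_ne_zero h3

lemma sameCycle_finRotate {N : ℕ} (x y : Fin (N + 2)) : (finRotate (N + 2)).SameCycle x y := by
  obtain ⟨x0, hx0, hall⟩ := isCycle_finRotate (n := N)
  exact ((hall (finRotate_no_fix x)).symm.trans (hall (finRotate_no_fix y)))

lemma cycleCount_finRotate {N : ℕ} : cycleCount (finRotate (N + 2)) = 1 := by
  have h : {x : Fin (N+2) | ∀ y, (finRotate (N+2)).SameCycle x y → x ≤ y} = {0} := by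
    ext z
    simp only [Set.mem_setOf_eq, Set.mem_singleton_iff]
    constructor
    · intro h
      exact le_antisymm (h 0 (sameCycle_finRotate _ _)) (Fin.zero_le _)
    · intro h y _
      rw [h]
      exact Fin.zero_le _
  rw [cycleCount, h, Set.ncard_singleton]

lemma normPerm_finRotate {N : ℕ} : normPerm (finRotate (N + 2)) = N + 1 := by
  rw [normPerm_def, cycleCount_finRotate]
  omega

/-! ### increasing cycles -/

def Inc {n : ℕ} (σ : Equiv.Perm (Fin n)) : Prop :=
  ∀ x y, σ.SameCycle x y → y ≠ x → dC x (σ x) ≤ dC x y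

lemma inc_finRotate {N : ℕ} : Inc (finRotate (N + 2)) := by
  intro x y _ hyx
  have hval : ((x + 1 : Fin (N + 2))).val = if x.val = N + 1 then 0 else x.val + 1 := by
    rw [Fin.val_add_one]
    by_cases hc : x = Fin.last (N + 1)
    · rw [if_pos hc, if_pos (by rw [hc]; rfl)]
    · rw [if_neg hc, if_neg (fun h => hc (Fin.ext (by rw [h]; rfl)))]
  have h1 : dC x (finRotate (N + 2) x) = 1 := by
    rw [finRotate_succ_apply]
    have hx := x.isLt
    unfold dC
    split_ifs with h <;> rw [Fin.le_def] at h <;> rw [hval] at h ⊢ <;>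
      split_ifs at h ⊢ <;> omega
  rw [h1]
  exact dC_pos hyx

lemma delta_key {σ : Equiv.Perm (Fin n)} {a b : Fin n} (hab : a ≠ b)
    (hnot : ¬ σ.SameCycle a b) (hInc : Inc (σ * Equiv.swap a b)) :
    ∀ y, σ.SameCycle a y → y ≠ a → dC a (σ a) ≤ dC a y := by
  intro y hay hya
  by_cases hfix : σ a = a
  · exact absurd (Equiv.Perm.SameCycle.eq_of_left hay hfix).symm hya
  have hw : σ.SameCycle a (σ a) :=
    Equiv.Perm.SameCycle.apply_right (Equiv.Perm.SameCycle.refl σ a)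
  have key : ∀ t : ℕ, (σ ^ t) (σ a) = a ∨ dC a (σ a) ≤ dC a ((σ ^ t) (σ a)) := by
    intro t
    induction t with
    | zero => right; simp
    | succ t ih =>
      rcases ih with hprev | hprev
      · right
        rw [pow_succ', Equiv.Perm.mul_apply, hprev]
      · have hy'a : (σ ^ t) (σ a) ≠ a := by
          intro hEq
          rw [hEq] at hprev
          have h0 : dC a a = 0 := dC_eq_zero_iff.mpr rfl
          have h1 : dC a (σ a) = 0 := by omega
          exact hfix (dC_eq_zero_iff.mp h1)
        have hy'orb : σ.SameCycle a ((σ ^ t) (σ a)) := Equiv.Perm.SameCycle.pow_right hw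
        have hy'b : (σ ^ t) (σ a) ≠ b := fun hEq => hnot (hEq ▸ hy'orb)
        have hstep : σ ((σ ^ t) (σ a)) ≠ (σ ^ t) (σ a) := by
          intro hEq
          exact hy'a (Equiv.Perm.SameCycle.eq_of_left hy'orb.symm hEq)
        have hσ'y' : (σ * Equiv.swap a b) ((σ ^ t) (σ a)) = σ ((σ ^ t) (σ a)) := by
          rw [Equiv.Perm.mul_apply, Equiv.swap_apply_of_ne_of_ne hy'a hy'b]
        have hIncApp : dC ((σ ^ t) (σ a)) (σ ((σ ^ t) (σ a))) ≤ dC ((σ ^ t) (σ a)) a := by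
          have h1 : (σ * Equiv.swap a b).SameCycle ((σ ^ t) (σ a)) a :=
            merge_mono hnot hy'orb.symm
          have h2 := hInc _ a h1 (Ne.symm hy'a)
          rwa [hσ'y'] at h2
        rcases dC_add hy'a hstep hIncApp with hcase | hcase
        · left
          rw [pow_succ', Equiv.Perm.mul_apply, hcase]
        · right
          rw [pow_succ', Equiv.Perm.mul_apply]
          omega
  obtain ⟨t, _, ht⟩ := hay.exists_pow_eq'
  cases t with
  | zero =>
    simp only [pow_zero, Equiv.Perm.one_apply] at ht
    exact absurd ht.symm hya
  | succ t =>
    rw [pow_succ, Equiv.Perm.mul_apply] at ht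
    rcases key t with hcase | hcase
    · rw [ht] at hcase
      exact absurd hcase hya
    · rwa [ht] at hcase

lemma inc_of_precLe_aux {N : ℕ} : ∀ t : ℕ, ∀ σ : Equiv.Perm (Fin (N + 2)),
    precLe σ (finRotate (N + 2)) → normPerm (σ⁻¹ * finRotate (N + 2)) = t → Inc σ := by
  intro t
  induction t using Nat.strong_induction_on with
  | _ t IH =>
    intro σ hσ ht
    rcases Nat.eq_zero_or_pos t with rfl | ht0
    · have h1 : cycleCount (σ⁻¹ * finRotate (N + 2)) = N + 2 := by
        have h2 := cycleCount_le (σ⁻¹ * finRotate (N + 2))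
        rw [normPerm_def] at ht
        omega
      have h3 : σ⁻¹ * finRotate (N + 2) = 1 := eq_one_of_cycleCount_eq h1
      have h4 : σ = finRotate (N + 2) := inv_mul_eq_one.mp h3
      rw [h4]
      exact inc_finRotate
    · have hρ1 : σ⁻¹ * finRotate (N + 2) ≠ 1 := by
        intro h
        rw [h, normPerm_one] at ht
        omega
      have hex : ∃ a, (σ⁻¹ * finRotate (N + 2)) a ≠ a := by
        by_contra hcon
        push_neg at hcon
        exact hρ1 (Equiv.ext fun z => hcon z)
      obtain ⟨a, hρa⟩ := hex
      set ρ := σ⁻¹ * finRotate (N + 2) with hρdef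
      have hab : a ≠ ρ a := fun h => hρa h.symm
      -- σ'⁻¹ * c = ρ * swap (ρ⁻¹ a) a, with ρ (ρ⁻¹ a) = a
      have hswapmul : ρ * Equiv.swap (ρ⁻¹ a) (ρ⁻¹ (ρ a)) = Equiv.swap a (ρ a) * ρ := by
        rw [← Equiv.swap_mul_eq_mul_swap]
      have hkey : (σ * Equiv.swap a (ρ a))⁻¹ * finRotate (N + 2)
          = ρ * Equiv.swap (ρ⁻¹ a) (ρ⁻¹ (ρ a)) := by
        rw [hswapmul, mul_inv_rev, Equiv.swap_inv, mul_assoc, ← hρdef]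
      have hinv : ρ⁻¹ (ρ a) = a := by simp
      have happ : ρ (ρ⁻¹ a) = a := by simp
      have hune : ρ (ρ⁻¹ a) ≠ ρ⁻¹ a := by
        rw [happ]
        intro h
        have h2 := congrArg ρ h
        rw [happ] at h2
        exact hρa h2
      -- cycle counts of ρ * swap (ρ⁻¹ a) a
      have hge : cycleCount ρ + 1 ≤ cycleCount (ρ * Equiv.swap (ρ⁻¹ a) (ρ (ρ⁻¹ a))) :=
        cycleCount_split_adj hune
      have hle2 : cycleCount (ρ * Equiv.swap (ρ⁻¹ a) (ρ (ρ⁻¹ a))) ≤ cycleCount ρ + 1 :=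
        cycleCount_mul_swap_le (fun h => hune (by rw [happ] at *; exact h.symm))
      have hρswap : ρ * Equiv.swap (ρ⁻¹ a) (ρ⁻¹ (ρ a)) = ρ * Equiv.swap (ρ⁻¹ a) (ρ (ρ⁻¹ a)) := by
        rw [hinv, happ]
      have hcount : cycleCount ((σ * Equiv.swap a (ρ a))⁻¹ * finRotate (N + 2))
          = cycleCount ρ + 1 := by
        rw [hkey, hρswap]
        omega
      have hbound1 := cycleCount_le ρ
      have hbound2 := one_le_cycleCount ρ (by omega)
      have htρ : normPerm ρ = t := ht
      have hnormρ' : normPerm ((σ * Equiv.swap a (ρ a))⁻¹ * finRotate (N + 2)) = t - 1 := by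
        rw [normPerm_def, hcount]
        rw [normPerm_def] at htρ
        omega
      -- norms of σ'
      have htri : normPerm (finRotate (N + 2))
          ≤ normPerm (σ * Equiv.swap a (ρ a))
            + normPerm ((σ * Equiv.swap a (ρ a))⁻¹ * finRotate (N + 2)) := by
        have := normPerm_mul_le (σ * Equiv.swap a (ρ a))
          ((σ * Equiv.swap a (ρ a))⁻¹ * finRotate (N + 2))
        rwa [mul_inv_cancel_left] at this
      have hswaple := normPerm_mul_swap_le (σ := σ) hab
      have hσnum : normPerm (finRotate (N + 2)) = normPerm σ + t := by
        rw [hσ, ht]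
      have hnormσ' : normPerm (σ * Equiv.swap a (ρ a)) = normPerm σ + 1 := by
        rw [hnormρ'] at htri
        omega
      have hprec' : precLe (σ * Equiv.swap a (ρ a)) (finRotate (N + 2)) := by
        unfold precLe
        rw [hnormρ', hnormσ', hσnum]
        omega
      have hIncσ' : Inc (σ * Equiv.swap a (ρ a)) :=
        IH (t - 1) (by omega) _ hprec' hnormρ'
      -- merge data
      have hcount2 : cycleCount (σ * Equiv.swap a (ρ a)) < cycleCount σ := by
        have hb1 := one_le_cycleCount (σ * Equiv.swap a (ρ a)) (by omega)
        have hb2 := cycleCount_le σ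
        have hb3 := cycleCount_le (σ * Equiv.swap a (ρ a))
        have hb4 := one_le_cycleCount σ (by omega : (0:ℕ) < N + 2)
        rw [normPerm_def, normPerm_def] at hnormσ'
        omega
      have hnot : ¬ σ.SameCycle a (ρ a) := not_sameCycle_of_count hab hcount2
      -- conclude Inc σ
      intro x y hxy hyx
      by_cases hxa : x = a
      · subst hxa
        exact delta_key hab hnot hIncσ' y hxy hyx
      by_cases hxb : x = ρ a
      · subst hxb
        have hnot' : ¬ σ.SameCycle (ρ a) a := fun h => hnot h.symm
        have hInc'' : Inc (σ * Equiv.swap (ρ a) a) := by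
          rw [Equiv.swap_comm (ρ a) a]
          exact hIncσ'
        exact delta_key (Ne.symm hab) hnot' hInc'' y hxy hyx
      · have h6 := hIncσ' x y (merge_mono hnot hxy) hyx
        rwa [Equiv.Perm.mul_apply, Equiv.swap_apply_of_ne_of_ne hxa hxb] at h6


lemma dC_val (p u : Fin n) : dC p u = if p.val ≤ u.val then u.val - p.val
    else u.val + n - p.val := by
  unfold dC
  rcases le_or_gt p u with hle | hlt
  · rw [if_pos hle, if_pos (Fin.le_def.mp hle)]
  · rw [if_neg (not_le.mpr hlt), if_neg (not_le.mpr (Fin.lt_def.mp hlt))]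


end Stmt9Aux

open Stmt9Aux

/-- If γ = ((i₁ j₁),…,(i_k j_k)) ∈ Σ_n(k), l < m and j_l = j_m, then i_l > i_m. -/
theorem stmt9 (n k : ℕ) (i j : Fin k → Fin n) (hij : ∀ l, i l < j l)
    (hγ : (fun l => Equiv.swap (i l) (j l)) ∈ SigmaSet n k)
    (l m : Fin k) (hlm : l < m) (h : j l = j m) :
    i m < i l := by
  classical
  obtain ⟨hswap, hnorm, hprec⟩ := hγ
  have hn2 : 2 ≤ n := by
    have h1 := (j l).isLt
    have h2 := Fin.lt_def.mp (hij l)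
    omega
  obtain ⟨N, rfl⟩ : ∃ N, n = N + 2 := ⟨n - 2, by omega⟩
  set L : List (Equiv.Perm (Fin (N + 2))) :=
    List.ofFn (fun l => Equiv.swap (i l) (j l)) with hL
  have hlen : L.length = k := List.length_ofFn
  -- step decomposition
  have hstep : ∀ t : Fin k, (L.take (t.val + 1)).prod
      = (L.take t.val).prod * Equiv.swap (i t) (j t) := by
    intro t
    have ht : t.val < L.length := by rw [hlen]; exact t.isLt
    have ht' : t.val < (List.ofFn (fun l => Equiv.swap (i l) (j l))).length := by
      simpa using t.isLt
    rw [List.prod_take_succ L t.val ht]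
    congr 1
    show (List.ofFn (fun l => Equiv.swap (i l) (j l))).get ⟨t.val, ht'⟩ = _
    rw [List.get_ofFn]
    have hc : Fin.cast (by simp) (⟨t.val, ht'⟩ : Fin (List.ofFn (fun l =>
        Equiv.swap (i l) (j l))).length) = t := Fin.ext rfl
    rw [hc]
  -- all entries are swaps of distinct points
  have hswaps : ∀ τ ∈ L, ∃ a b : Fin (N + 2), a ≠ b ∧ τ = Equiv.swap a b := by
    intro τ hτ
    rw [hL, List.mem_ofFn] at hτ
    obtain ⟨t, rfl⟩ := hτ
    exact ⟨i t, j t, ne_of_lt (hij t), rfl⟩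
  have hswapsd : ∀ t : ℕ, ∀ τ ∈ L.drop t, ∃ a b : Fin (N + 2), a ≠ b ∧ τ = Equiv.swap a b :=
    fun t τ hτ => hswaps τ (List.drop_subset t L hτ)
  -- norms of partial products
  have hup : ∀ t, t ≤ k → normPerm ((L.take t).prod) ≤ t := by
    intro t
    induction t with
    | zero => intro _; simp [normPerm_one]
    | succ t ih =>
      intro ht
      have htk : t < k := by omega
      have h1 := normPerm_mul_swap_le (σ := (L.take t).prod) (ne_of_lt (hij ⟨t, htk⟩))
      have h2 := ih (by omega)
      calc normPerm ((L.take (t + 1)).prod)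
          = normPerm ((L.take t).prod * Equiv.swap (i ⟨t, htk⟩) (j ⟨t, htk⟩)) := by
            rw [hstep ⟨t, htk⟩]
        _ ≤ t + 1 := by omega
  have hlow : ∀ t, t ≤ k → k ≤ normPerm ((L.take t).prod) + (k - t) := by
    intro t ht
    have h1 : L.prod = (L.take t).prod * (L.drop t).prod :=
      (List.prod_take_mul_prod_drop L t).symm
    have h2 := normPerm_mul_list_le ((L.take t).prod) (L.drop t) (hswapsd t)
    rw [← h1] at h2
    have h3 : (L.drop t).length = k - t := by rw [List.length_drop, hlen]
    rw [hnorm, h3] at h2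
    omega
  have hγnorm : ∀ t, t ≤ k → normPerm ((L.take t).prod) = t := by
    intro t ht
    have h1 := hup t ht
    have h2 := hlow t ht
    omega
  -- k ≤ N + 1 and suffix norm
  have hprec' : normPerm (finRotate (N + 2)) =
      normPerm L.prod + normPerm (L.prod⁻¹ * finRotate (N + 2)) := hprec
  rw [normPerm_finRotate, hnorm] at hprec'
  have hkN : k ≤ N + 1 := by omega
  -- precLe for partial products
  have hprecγ : ∀ t, t ≤ k → precLe ((L.take t).prod) (finRotate (N + 2)) := by
    intro t ht
    have hdropEq : (L.take t).prod⁻¹ * L.prod = (L.drop t).prod := by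
      rw [← List.prod_take_mul_prod_drop L t, inv_mul_cancel_left]
    have hdnorm : normPerm ((L.drop t).prod) ≤ k - t := by
      have h2 := normPerm_mul_list_le 1 (L.drop t) (hswapsd t)
      rw [one_mul, normPerm_one, List.length_drop, hlen] at h2
      omega
    have hsplit : (L.take t).prod⁻¹ * finRotate (N + 2)
        = ((L.take t).prod⁻¹ * L.prod) * (L.prod⁻¹ * finRotate (N + 2)) := by
      rw [mul_assoc, mul_inv_cancel_left]
    have hle : normPerm ((L.take t).prod⁻¹ * finRotate (N + 2)) ≤ N + 1 - t := by
      have h4 := normPerm_mul_le ((L.drop t).prod) (L.prod⁻¹ * finRotate (N + 2))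
      rw [hsplit, hdropEq]
      omega
    have hge : N + 1 ≤ t + normPerm ((L.take t).prod⁻¹ * finRotate (N + 2)) := by
      have h5 := normPerm_mul_le ((L.take t).prod) ((L.take t).prod⁻¹ * finRotate (N + 2))
      rw [mul_inv_cancel_left, normPerm_finRotate, hγnorm t ht] at h5
      omega
    show normPerm (finRotate (N + 2)) = _
    rw [normPerm_finRotate, hγnorm t ht]
    omega
  -- merge data at each step
  have hmerge : ∀ t : Fin k,
      (¬ ((L.take t.val).prod).SameCycle (i t) (j t)) ∧
      ((L.take (t.val + 1)).prod).SameCycle (i t) (j t) ∧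
      (∀ x y, ((L.take t.val).prod).SameCycle x y →
        ((L.take (t.val + 1)).prod).SameCycle x y) := by
    intro t
    have h1 := hγnorm t.val (le_of_lt t.isLt)
    have h2 := hγnorm (t.val + 1) t.isLt
    have hcc : cycleCount ((L.take (t.val + 1)).prod) < cycleCount ((L.take t.val).prod) := by
      have b1 := cycleCount_le ((L.take t.val).prod)
      have b2 := cycleCount_le ((L.take (t.val + 1)).prod)
      have b3 := one_le_cycleCount ((L.take (t.val + 1)).prod) (by omega)
      rw [normPerm_def] at h1 h2
      omega
    have hne : i t ≠ j t := ne_of_lt (hij t)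
    rw [hstep t] at hcc
    have hnot := not_sameCycle_of_count hne hcc
    refine ⟨hnot, ?_, ?_⟩
    · rw [hstep t]; exact merge_sameCycle hnot
    · intro x y hxy; rw [hstep t]; exact merge_mono hnot hxy
  -- same cycle propagates up
  have hup2 : ∀ t, l.val + 1 ≤ t → t ≤ m.val → ((L.take t).prod).SameCycle (i l) (j l) := by
    intro t ht
    induction t, ht using Nat.le_induction with
    | base => intro _; exact (hmerge l).2.1
    | succ t ht ih =>
      intro htm
      have htk : t < k := by have := m.isLt; omega
      exact (hmerge ⟨t, htk⟩).2.2 _ _ (ih (by omega))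
  have hlm' : l.val + 1 ≤ m.val := Fin.lt_def.mp hlm
  have hscm : ((L.take m.val).prod).SameCycle (i l) (j m) := by
    rw [← h]; exact hup2 m.val hlm' le_rfl
  have hnotm : ¬ ((L.take m.val).prod).SameCycle (i m) (j m) := (hmerge m).1
  have hil_ne : i l ≠ i m := by
    intro hEq
    rw [hEq] at hscm
    exact hnotm hscm
  by_contra hcon
  push_neg at hcon
  have hlt : i l < i m := lt_of_le_of_ne hcon hil_ne
  have hiljm : i l < j m := by rw [← h]; exact hij l
  set z : Fin (N + 2) := ((L.take m.val).prod) (j m) with hz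
  have hz1 : ((L.take m.val).prod).SameCycle (j m) z :=
    Equiv.Perm.SameCycle.apply_right (Equiv.Perm.SameCycle.refl _ _)
  have hz_ne_j : z ≠ j m := by
    intro hEq
    have hfix : ((L.take m.val).prod) (j m) = j m := hEq
    have h2 := Equiv.Perm.SameCycle.eq_of_left hscm.symm hfix
    exact absurd h2.symm (ne_of_lt hiljm)
  have hz_ne_im : z ≠ i m := by
    intro hEq
    rw [hEq] at hz1
    exact hnotm hz1.symm
  have hIncm : Inc ((L.take m.val).prod) :=
    inc_of_precLe_aux _ _ (hprecγ m.val (le_of_lt m.isLt)) rfl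
  have hIncm1 : Inc ((L.take (m.val + 1)).prod) :=
    inc_of_precLe_aux _ _ (hprecγ (m.val + 1) m.isLt) rfl
  have h1 : dC (j m) z ≤ dC (j m) (i l) :=
    hIncm (j m) (i l) hscm.symm (ne_of_lt hiljm)
  have happly : ((L.take (m.val + 1)).prod) (i m) = z := by
    rw [hstep m, Equiv.Perm.mul_apply, Equiv.swap_apply_left]
  have h2 : dC (i m) z ≤ dC (i m) (j m) := by
    have h3 := hIncm1 (i m) (j m) (hmerge m).2.1 (Ne.symm (ne_of_lt (hij m)))
    rwa [happly] at h3
  -- numeric finish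
  have e1 := Fin.lt_def.mp (hij m)
  have e0 := Fin.lt_def.mp hlt
  have e2 : z.val ≠ (i m).val := fun hh => hz_ne_im (Fin.ext hh)
  have e3 : z.val ≠ (j m).val := fun hh => hz_ne_j (Fin.ext hh)
  have e4 := z.isLt
  have e5 := (j m).isLt
  have e6 := (i l).isLt
  rw [dC_val, dC_val] at h1 h2
  split_ifs at h1 h2 <;> omega
end

section
/- Let ((i₁ j₁),…,(i_k j_k)) be an element of Σ_n(k). Then the reversed and reflected chain ((n+1−j_k, n+1−i_k),…,(n+1−j₁, n+1−i₁)) is also an element of Σ_n(k). (Note n+1−j_l < n+1−i_l, so these pairs again denote transpositions written with smaller entry first.) -/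
/-! ### Auxiliary lemmas -/

def scSetoid {n : ℕ} (σ : Equiv.Perm (Fin n)) : Setoid (Fin n) :=
  ⟨σ.SameCycle, ⟨fun _ => Equiv.Perm.SameCycle.refl σ _, fun h => h.symm, fun h h' => h.trans h'⟩⟩

lemma cycleCount_eq_card_quot {n : ℕ} (σ : Equiv.Perm (Fin n)) :
    cycleCount σ = Nat.card (Quotient (scSetoid σ)) := by
  rw [cycleCount, ← Nat.card_coe_set_eq]
  refine Nat.card_eq_of_bijective
    (fun x => Quotient.mk (scSetoid σ) x.1) ⟨?_, ?_⟩
  · rintro ⟨x, hx⟩ ⟨y, hy⟩ h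
    have hxy : σ.SameCycle x y := Quotient.exact h
    exact Subtype.ext (le_antisymm (hx y hxy) (hy x hxy.symm))
  · refine Quotient.ind fun z => ?_
    classical
    set S : Finset (Fin n) := Finset.univ.filter (σ.SameCycle z) with hS
    have hzS : z ∈ S := Finset.mem_filter.2 ⟨Finset.mem_univ z, Equiv.Perm.SameCycle.refl σ z⟩
    set m := S.min' ⟨z, hzS⟩
    have hmS : m ∈ S := S.min'_mem _
    have hzm : σ.SameCycle z m := by simpa [hS] using hmS
    refine ⟨⟨m, fun y hy => ?_⟩, ?_⟩
    · exact S.min'_le y (by simp [hS, hzm.trans hy])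
    · exact Quotient.sound (hzm.symm : (scSetoid σ).r m z)

lemma cycleCount_conj {n : ℕ} (σ π : Equiv.Perm (Fin n)) :
    cycleCount (π * σ * π⁻¹) = cycleCount σ := by
  rw [cycleCount_eq_card_quot, cycleCount_eq_card_quot]
  refine Nat.card_congr (Quotient.congr π.symm fun a b => ?_)
  show (π * σ * π⁻¹).SameCycle a b ↔ σ.SameCycle (π.symm a) (π.symm b)
  rw [Equiv.Perm.sameCycle_conj]; rfl

lemma cycleCount_inv {n : ℕ} (σ : Equiv.Perm (Fin n)) :
    cycleCount σ⁻¹ = cycleCount σ := by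
  unfold cycleCount
  congr 1
  ext x
  simp [Equiv.Perm.sameCycle_inv]

lemma normPerm_conj {n : ℕ} (σ π : Equiv.Perm (Fin n)) :
    normPerm (π * σ * π⁻¹) = normPerm σ := by
  unfold normPerm; rw [cycleCount_conj]

lemma normPerm_inv {n : ℕ} (σ : Equiv.Perm (Fin n)) :
    normPerm σ⁻¹ = normPerm σ := by
  unfold normPerm; rw [cycleCount_inv]

lemma ofFn_rev' {α : Type*} {k : ℕ} (f : Fin k → α) :
    List.ofFn (fun m : Fin k => f m.rev) = (List.ofFn f).reverse := by
  apply List.ext_getElem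
  · simp
  · intro l h1 h2
    simp only [List.getElem_ofFn, List.getElem_reverse, List.getElem_ofFn]
    congr 1
    ext
    simp only [List.length_ofFn] at h2 ⊢
    simp [Fin.val_rev]
    omega

lemma ofFn_conj_prod {α : Type*} [DecidableEq α] {k : ℕ} (g : Fin k → Equiv.Perm α)
    (φ : Equiv.Perm α) :
    (List.ofFn fun m => φ * g m * φ⁻¹).prod = φ * (List.ofFn g).prod * φ⁻¹ := by
  induction k with
  | zero => simp
  | succ k ih =>
    rw [List.ofFn_succ, List.ofFn_succ, List.prod_cons, List.prod_cons,
      ih (fun m => g m.succ)]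
    group

lemma reverse_prod_swaps {α : Type*} [DecidableEq α] {k : ℕ} (i j : Fin k → α) :
    ((List.ofFn fun l => Equiv.swap (i l) (j l)).reverse).prod =
    ((List.ofFn fun l => Equiv.swap (i l) (j l)).prod)⁻¹ := by
  rw [List.prod_reverse_noncomm, List.map_ofFn]
  simp [Function.comp_def]

lemma rev_conj_finRotate (n : ℕ) :
    (Fin.revPerm : Equiv.Perm (Fin n)) * finRotate n * (Fin.revPerm : Equiv.Perm (Fin n))⁻¹
      = (finRotate n)⁻¹ := by
  match n with
  | 0 => exact Subsingleton.elim _ _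
  | (m+1) =>
    have hkey : ∀ x : Fin (m+1), finRotate (m+1) ((finRotate (m+1) x).rev) = x.rev := by
      intro x
      have hx := x.isLt
      apply Fin.ext
      simp only [finRotate_succ_apply, Fin.val_add_one, Fin.val_rev, Fin.ext_iff,
        Fin.val_last]
      split_ifs <;> omega
    have h2 : finRotate (m+1) * (Fin.revPerm : Equiv.Perm (Fin (m+1))) * finRotate (m+1)
        = Fin.revPerm := Equiv.ext hkey
    have h3 : finRotate (m+1) *
        ((Fin.revPerm : Equiv.Perm (Fin (m+1))) * finRotate (m+1) * Fin.revPerm⁻¹) = 1 := by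
      calc finRotate (m+1) * (Fin.revPerm * finRotate (m+1) * Fin.revPerm⁻¹)
          = (finRotate (m+1) * Fin.revPerm * finRotate (m+1)) * Fin.revPerm⁻¹ := by group
        _ = Fin.revPerm * Fin.revPerm⁻¹ := by rw [h2]
        _ = 1 := mul_inv_cancel _
    exact (inv_eq_of_mul_eq_one_right h3).symm

lemma rev_conj_finRotate' (n : ℕ) :
    finRotate n = (Fin.revPerm : Equiv.Perm (Fin n)) * (finRotate n)⁻¹
      * (Fin.revPerm : Equiv.Perm (Fin n))⁻¹ := by
  have hφ2 : (Fin.revPerm : Equiv.Perm (Fin n)) * Fin.revPerm = 1 :=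
    Equiv.ext fun x => Fin.rev_rev x
  symm
  calc (Fin.revPerm : Equiv.Perm (Fin n)) * (finRotate n)⁻¹ * Fin.revPerm⁻¹
      = Fin.revPerm * (Fin.revPerm * finRotate n * Fin.revPerm⁻¹) * Fin.revPerm⁻¹ := by
        rw [rev_conj_finRotate]
    _ = (Fin.revPerm * Fin.revPerm) * finRotate n * ((Fin.revPerm * Fin.revPerm))⁻¹ := by
        group
    _ = finRotate n := by rw [hφ2]; group

/-- If ((i₁ j₁),…,(i_k j_k)) ∈ Σ_n(k), then the reversed and reflected chain
((n+1−j_k, n+1−i_k),…,(n+1−j₁, n+1−i₁)) also belongs to Σ_n(k).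
(Here x ↦ n+1−x on {1,…,n} corresponds to `Fin.rev` on `Fin n`.) -/
theorem stmt10 (n k : ℕ) (i j : Fin k → Fin n) (hij : ∀ l, i l < j l)
    (hγ : (fun l => Equiv.swap (i l) (j l)) ∈ SigmaSet n k) :
    (fun m : Fin k => Equiv.swap ((j m.rev).rev) ((i m.rev).rev)) ∈ SigmaSet n k := by
  obtain ⟨hsw, hnorm, hprec⟩ := hγ
  set φ : Equiv.Perm (Fin n) := Fin.revPerm with hφ
  have hφinv : φ⁻¹ = φ := rfl
  set σ : Equiv.Perm (Fin n) :=
    (List.ofFn fun l => Equiv.swap (i l) (j l)).prod with hσ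
  have hP : (List.ofFn fun m : Fin k =>
      Equiv.swap ((j m.rev).rev) ((i m.rev).rev)).prod = φ * σ⁻¹ * φ⁻¹ := by
    have h1 : (List.ofFn fun m : Fin k => Equiv.swap ((j m.rev).rev) ((i m.rev).rev))
        = List.ofFn fun m : Fin k => φ * Equiv.swap (i m.rev) (j m.rev) * φ⁻¹ := by
      refine congrArg List.ofFn (funext fun m => ?_)
      rw [Equiv.swap_comm]
      exact Equiv.swap_apply_apply φ (i m.rev) (j m.rev)
    rw [h1, ofFn_conj_prod]
    have h2 : (List.ofFn fun m : Fin k => Equiv.swap (i m.rev) (j m.rev))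
        = (List.ofFn fun l => Equiv.swap (i l) (j l)).reverse :=
      ofFn_rev' (fun l => Equiv.swap (i l) (j l))
    rw [h2, reverse_prod_swaps]
  have hc := rev_conj_finRotate n
  refine ⟨?_, ?_, ?_⟩
  · intro l
    refine ⟨(j l.rev).rev, (i l.rev).rev, fun h => ?_, rfl⟩
    exact absurd (Fin.rev_inj.mp h) (ne_of_gt (hij l.rev))
  · show normPerm (List.ofFn fun m : Fin k =>
      Equiv.swap ((j m.rev).rev) ((i m.rev).rev)).prod = k
    rw [hP, normPerm_conj, normPerm_inv]
    exact hnorm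
  · show normPerm (finRotate n) =
      normPerm (List.ofFn fun m : Fin k =>
        Equiv.swap ((j m.rev).rev) ((i m.rev).rev)).prod +
      normPerm ((List.ofFn fun m : Fin k =>
        Equiv.swap ((j m.rev).rev) ((i m.rev).rev)).prod⁻¹ * finRotate n)
    rw [hP]
    have hc' : finRotate n = φ * (finRotate n)⁻¹ * φ⁻¹ := by
      rw [hφ]; exact rev_conj_finRotate' n
    have e2 : (φ * σ⁻¹ * φ⁻¹)⁻¹ * finRotate n = φ * (σ * (finRotate n)⁻¹) * φ⁻¹ := by
      calc (φ * σ⁻¹ * φ⁻¹)⁻¹ * finRotate n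
          = φ * σ * φ⁻¹ * finRotate n := by group
        _ = φ * σ * φ⁻¹ * (φ * (finRotate n)⁻¹ * φ⁻¹) := by rw [← hc']
        _ = φ * (σ * (finRotate n)⁻¹) * φ⁻¹ := by group
    rw [e2, normPerm_conj, normPerm_conj, normPerm_inv]
    have e3 : normPerm (σ * (finRotate n)⁻¹) = normPerm (σ⁻¹ * finRotate n) := by
      have h4 : σ⁻¹ * finRotate n = σ⁻¹ * (σ * (finRotate n)⁻¹)⁻¹ * σ⁻¹⁻¹ := by group
      rw [h4, normPerm_conj, normPerm_inv]
    rw [e3]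
    exact hprec
end
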